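/- arXiv:2106.07603 — 17 statements merged into one kernel-verified Lean document; each statement's English description precedes it below -/
import Mathlib

section
/- Let E and V be real Banach spaces, let F : E → V be twice Fréchet differentiable with ‖F''(x)‖ ≤ K₂ for all x ∈ E, and let x₀ ∈ E be such that F'(x₀) is invertible (with bounded inverse), ‖F'(x₀)⁻¹‖ ≤ B and ‖F'(x₀)⁻¹ F(x₀)‖ ≤ η for positive constants K₂, B, η. If K₂Bη ≤ 1/2, then the Newton iteration x_{n+1} = x_n − F'(x_n)⁻¹F(x_n) starting from x₀ is well defined (F'(x_n) is invertible for every n) and the sequence (x_n) converges to a point x* ∈ E with F(x*) = 0. -/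
open Set

/-- Quadratic Taylor estimate for a function with Lipschitz derivative. -/
theorem newton_taylor
    {E V : Type*} [NormedAddCommGroup E] [NormedSpace ℝ E]
    [NormedAddCommGroup V] [NormedSpace ℝ V]
    (F : E → V) (F' : E → (E →L[ℝ] V))
    (hF' : ∀ x, HasFDerivAt F (F' x) x)
    (K : ℝ) (hlip : ∀ a b : E, ‖F' a - F' b‖ ≤ K * ‖a - b‖)
    (x y : E) :
    ‖F y - F x - F' x (y - x)‖ ≤ K / 2 * ‖y - x‖ ^ 2 := by
  set v := y - x with hv
  set g : ℝ → V := fun t => F (x + t • v) - F x - t • (F' x v) with hg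
  have hgd : ∀ t : ℝ, HasDerivAt g (F' (x + t • v) v - F' x v) t := by
    intro t
    have h1 : HasDerivAt (fun t : ℝ => x + t • v) v t := by
      simpa using ((hasDerivAt_id t).smul_const v).const_add x
    have h2 : HasDerivAt (fun t : ℝ => F (x + t • v)) (F' (x + t • v) v) t := by
      exact (hF' (x + t • v)).comp_hasDerivAt t h1
    have h3 : HasDerivAt (fun t : ℝ => t • (F' x v)) (F' x v) t := by
      simpa using (hasDerivAt_id t).smul_const (F' x v)
    exact (h2.sub_const (F x)).sub h3
  have key : ∀ u ∈ Icc (0:ℝ) 1, ‖g u‖ ≤ K * ‖v‖ ^ 2 / 2 * u ^ 2 := by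
    have hf : ContinuousOn g (Icc (0:ℝ) 1) :=
      fun t _ => (hgd t).continuousAt.continuousWithinAt
    have hf' : ∀ t ∈ Ico (0:ℝ) 1,
        HasDerivWithinAt g (F' (x + t • v) v - F' x v) (Ici t) t :=
      fun t _ => (hgd t).hasDerivWithinAt
    have ha : ‖g 0‖ ≤ K * ‖v‖ ^ 2 / 2 * (0:ℝ) ^ 2 := by simp [hg]
    have hBd : ∀ t : ℝ, HasDerivAt (fun t => K * ‖v‖ ^ 2 / 2 * t ^ 2) (K * ‖v‖ ^ 2 * t) t := by
      intro t
      have := (hasDerivAt_pow 2 t).const_mul (K * ‖v‖ ^ 2 / 2)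
      refine this.congr_deriv ?_
      simp
      ring
    have bound : ∀ t ∈ Ico (0:ℝ) 1, ‖F' (x + t • v) v - F' x v‖ ≤ K * ‖v‖ ^ 2 * t := by
      intro t ht
      have h1 : ‖F' (x + t • v) v - F' x v‖ ≤ ‖F' (x + t • v) - F' x‖ * ‖v‖ := by
        have := (F' (x + t • v) - F' x).le_opNorm v
        simpa using this
      have h2 : ‖F' (x + t • v) - F' x‖ ≤ K * (t * ‖v‖) := by
        have := hlip (x + t • v) x
        simpa [norm_smul, abs_of_nonneg ht.1] using this
      have hv0 : (0:ℝ) ≤ ‖v‖ := norm_nonneg v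
      calc ‖F' (x + t • v) v - F' x v‖ ≤ (K * (t * ‖v‖)) * ‖v‖ :=
            h1.trans (mul_le_mul_of_nonneg_right h2 hv0)
        _ = K * ‖v‖ ^ 2 * t := by ring
    exact fun u hu =>
      image_norm_le_of_norm_deriv_right_le_deriv_boundary hf hf' ha hBd bound hu
  have := key 1 (by norm_num)
  have hg1 : g 1 = F y - F x - F' x (y - x) := by
    simp [hg, hv]
  rw [hg1] at this
  calc ‖F y - F x - F' x (y - x)‖ ≤ K * ‖v‖ ^ 2 / 2 * 1 ^ 2 := this
    _ = K / 2 * ‖y - x‖ ^ 2 := by rw [hv]; ring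

theorem newton_step
    {E V : Type*} [NormedAddCommGroup E] [NormedSpace ℝ E] [CompleteSpace E]
    [NormedAddCommGroup V] [NormedSpace ℝ V]
    (F : E → V) (F' : E → (E →L[ℝ] V))
    (K₂ B η : ℝ) (hK₂ : 0 < K₂) (hB : 0 < B) (hη : 0 < η)
    (hlip : ∀ a b : E, ‖F' a - F' b‖ ≤ K₂ * ‖a - b‖)
    (htay : ∀ x y : E, ‖F y - F x - F' x (y - x)‖ ≤ K₂ / 2 * ‖y - x‖ ^ 2)
    (hKant : K₂ * B * η ≤ 1 / 2)
    (n : ℕ) (x : E) (e : E ≃L[ℝ] V) (he : (e : E →L[ℝ] V) = F' x)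
    (hBn : ‖(e.symm : V →L[ℝ] E)‖ ≤ 2 ^ n * B)
    (hηn : ‖e.symm (F x)‖ ≤ η / 2 ^ n) :
    ∃ e' : E ≃L[ℝ] V,
      (e' : E →L[ℝ] V) = F' (x - e.symm (F x)) ∧
      ‖(e'.symm : V →L[ℝ] E)‖ ≤ 2 ^ (n + 1) * B ∧
      ‖e'.symm (F (x - e.symm (F x)))‖ ≤ η / 2 ^ (n + 1) ∧
      ‖F (x - e.symm (F x))‖ ≤ K₂ / 2 * (η / 2 ^ n) ^ 2 := by
  set x' := x - e.symm (F x) with hx'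
  have hc : (0:ℝ) < 2 ^ n := by positivity
  have hxx' : ‖x - x'‖ ≤ η / 2 ^ n := by
    rw [hx']; simpa using hηn
  -- the perturbation
  set A : E →L[ℝ] E := (e.symm : V →L[ℝ] E).comp (F' x - F' x') with hA
  have hAnorm : ‖A‖ ≤ 1 / 2 := by
    have h1 : ‖A‖ ≤ ‖(e.symm : V →L[ℝ] E)‖ * ‖F' x - F' x'‖ :=
      ContinuousLinearMap.opNorm_comp_le _ _
    have h2 : ‖F' x - F' x'‖ ≤ K₂ * (η / 2 ^ n) :=
      (hlip x x').trans (by nlinarith [hxx'])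
    have h3 : ‖(e.symm : V →L[ℝ] E)‖ * ‖F' x - F' x'‖ ≤ (2 ^ n * B) * (K₂ * (η / 2 ^ n)) := by
      apply mul_le_mul hBn h2 (norm_nonneg _) (by positivity)
    have h4 : (2 ^ n * B : ℝ) * (K₂ * (η / 2 ^ n)) = K₂ * B * η := by
      field_simp
    linarith
  have hAlt : ‖A‖ < 1 := lt_of_le_of_lt hAnorm (by norm_num)
  -- the unit 1 - A and the new equivalence
  set u : (E →L[ℝ] E)ˣ := Units.oneSub A hAlt with hu
  set w : E ≃L[ℝ] E := ContinuousLinearEquiv.unitsEquiv ℝ E u with hw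
  have hwapp : ∀ z, w z = z - A z := by
    intro z
    have : w z = ((u : E →L[ℝ] E)) z := rfl
    rw [this]
    simp [hu, Units.val_oneSub]
  -- inverse of the unit is bounded by 2
  have hinv : ‖((u⁻¹ : (E →L[ℝ] E)ˣ) : E →L[ℝ] E)‖ ≤ 2 := by
    have h := tsum_geometric_le_of_norm_lt_one A hAlt
    have hone : ‖(1 : E →L[ℝ] E)‖ ≤ 1 := by
      rw [ContinuousLinearMap.one_def]; exact ContinuousLinearMap.norm_id_le
    have h2 : (1 - ‖A‖)⁻¹ ≤ 2 := by
      have h3 : (1:ℝ)/2 ≤ 1 - ‖A‖ := by linarith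
      calc (1 - ‖A‖)⁻¹ ≤ ((1:ℝ)/2)⁻¹ := by
            apply inv_anti₀ (by norm_num) h3
        _ = 2 := by norm_num
    have heq : ((u⁻¹ : (E →L[ℝ] E)ˣ) : E →L[ℝ] E) = ∑' k : ℕ, A ^ k := rfl
    rw [heq]
    linarith
  have hwsymm : ∀ z, w.symm z = ((u⁻¹ : (E →L[ℝ] E)ˣ) : E →L[ℝ] E) z := by
    intro z
    rw [ContinuousLinearEquiv.symm_apply_eq]
    have : w (((u⁻¹ : (E →L[ℝ] E)ˣ) : E →L[ℝ] E) z)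
        = ((u : E →L[ℝ] E) * ((u⁻¹ : (E →L[ℝ] E)ˣ) : E →L[ℝ] E)) z := rfl
    rw [this, Units.mul_inv, ContinuousLinearMap.one_apply]
  have hsymmb : ∀ v : V, ‖(w.trans e).symm v‖ ≤ 2 ^ (n + 1) * B * ‖v‖ := by
    intro v
    have h1 : (w.trans e).symm v = w.symm (e.symm v) := rfl
    rw [h1, hwsymm]
    calc ‖((u⁻¹ : (E →L[ℝ] E)ˣ) : E →L[ℝ] E) (e.symm v)‖
        ≤ ‖((u⁻¹ : (E →L[ℝ] E)ˣ) : E →L[ℝ] E)‖ * ‖e.symm v‖ :=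
          ContinuousLinearMap.le_opNorm _ _
      _ ≤ 2 * ((2 ^ n * B) * ‖v‖) := by
          apply mul_le_mul hinv _ (norm_nonneg _) (by norm_num)
          calc ‖e.symm v‖ ≤ ‖(e.symm : V →L[ℝ] E)‖ * ‖v‖ :=
                (e.symm : V →L[ℝ] E).le_opNorm v
            _ ≤ (2 ^ n * B) * ‖v‖ :=
                mul_le_mul_of_nonneg_right hBn (norm_nonneg _)
      _ = 2 ^ (n + 1) * B * ‖v‖ := by ring
  -- residual bound
  have hres : ‖F x'‖ ≤ K₂ / 2 * (η / 2 ^ n) ^ 2 := by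
    have h5 : F' x (x' - x) = -(F x) := by
      have h6 : x' - x = -(e.symm (F x)) := by rw [hx']; abel
      rw [h6, map_neg]
      congr 1
      rw [← he]
      exact e.apply_symm_apply (F x)
    have h7 : F x' - F x - F' x (x' - x) = F x' := by rw [h5]; abel
    have h8 := htay x x'
    rw [h7] at h8
    refine h8.trans ?_
    have h9 : ‖x' - x‖ ≤ η / 2 ^ n := by rw [norm_sub_rev]; exact hxx'
    have h10 : (0:ℝ) ≤ ‖x' - x‖ := norm_nonneg _
    have h11 := pow_le_pow_left₀ h10 h9 2
    have h12 : (0:ℝ) ≤ K₂ / 2 := by positivity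
    exact mul_le_mul_of_nonneg_left h11 h12
  refine ⟨w.trans e, ?_, ?_, ?_, hres⟩
  · apply ContinuousLinearMap.ext
    intro z
    have h1 : ((w.trans e : E →L[ℝ] V)) z = e (w z) := rfl
    rw [h1, hwapp, map_sub]
    have hez : ∀ y, e y = F' x y := fun y => by rw [← he]; rfl
    have hA2 : e (A z) = F' x z - F' x' z := by
      have h2 : A z = e.symm ((F' x - F' x') z) := rfl
      rw [h2]
      rw [e.apply_symm_apply]
      simp
    rw [hez, hA2]
    abel
  · apply ContinuousLinearMap.opNorm_le_bound _ (by positivity)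
    intro v
    exact hsymmb v
  · calc ‖(w.trans e).symm (F x')‖ ≤ 2 ^ (n + 1) * B * ‖F x'‖ := hsymmb _
      _ ≤ 2 ^ (n + 1) * B * (K₂ / 2 * (η / 2 ^ n) ^ 2) := by
          apply mul_le_mul_of_nonneg_left hres (by positivity)
      _ ≤ η / 2 ^ (n + 1) := by
          have hne : ((2:ℝ) ^ n) ≠ 0 := ne_of_gt hc
          have key : (2:ℝ) ^ (n + 1) * B * (K₂ / 2 * (η / 2 ^ n) ^ 2)
              = (K₂ * B * η) * (η / 2 ^ (n + 1)) * 2 := by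
            rw [pow_succ]
            field_simp
          rw [key]
          have hpos : (0:ℝ) ≤ η / 2 ^ (n + 1) := by positivity
          have h13 := mul_le_mul_of_nonneg_right hKant hpos
          linarith

open Filter

/-- **Kantorovich convergence of Newton's method.**
Let `E`, `V` be real Banach spaces, `F : E → V` twice Fréchet differentiable with
`‖F''(x)‖ ≤ K₂` everywhere, and `x₀ ∈ E` with `F'(x₀)` invertible (with bounded inverse
`e₀.symm`), `‖F'(x₀)⁻¹‖ ≤ B`, `‖F'(x₀)⁻¹ F(x₀)‖ ≤ η`.  If `K₂ B η ≤ 1/2` then the Newton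
iteration `x_{n+1} = x_n − F'(x_n)⁻¹ F(x_n)` starting from `x₀` is well defined
(`F'(x_n)` is invertible for every `n`) and converges to a root `x*` of `F`. -/
theorem stmt_0
    {E V : Type*} [NormedAddCommGroup E] [NormedSpace ℝ E] [CompleteSpace E]
    [NormedAddCommGroup V] [NormedSpace ℝ V] [CompleteSpace V]
    (F : E → V) (F' : E → (E →L[ℝ] V)) (F'' : E → (E →L[ℝ] E →L[ℝ] V))
    (hF' : ∀ x, HasFDerivAt F (F' x) x)
    (hF'' : ∀ x, HasFDerivAt F' (F'' x) x)
    (x₀ : E) (e₀ : E ≃L[ℝ] V) (he₀ : (e₀ : E →L[ℝ] V) = F' x₀)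
    (K₂ B η : ℝ) (hK₂ : 0 < K₂) (hB : 0 < B) (hη : 0 < η)
    (hbound : ∀ x, ‖F'' x‖ ≤ K₂)
    (hBinv : ‖(e₀.symm : V →L[ℝ] E)‖ ≤ B)
    (hη' : ‖e₀.symm (F x₀)‖ ≤ η)
    (hKant : K₂ * B * η ≤ 1 / 2) :
    ∃ x : ℕ → E, x 0 = x₀ ∧
      (∀ n, ∃ e : E ≃L[ℝ] V, (e : E →L[ℝ] V) = F' (x n) ∧
        x (n + 1) = x n - e.symm (F (x n))) ∧
      ∃ xs : E, Filter.Tendsto x Filter.atTop (nhds xs) ∧ F xs = 0 := by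
  have hlip : ∀ a b : E, ‖F' a - F' b‖ ≤ K₂ * ‖a - b‖ := by
    intro a b
    exact Convex.norm_image_sub_le_of_norm_fderiv_le
      (fun z _ => (hF'' z).differentiableAt)
      (fun z _ => by rw [(hF'' z).fderiv]; exact hbound z)
      convex_univ (Set.mem_univ b) (Set.mem_univ a)
  have htay := newton_taylor F F' hF' K₂ hlip
  set P : ℕ → E × (E ≃L[ℝ] V) → Prop := fun n p =>
    (p.2 : E →L[ℝ] V) = F' p.1 ∧ ‖(p.2.symm : V →L[ℝ] E)‖ ≤ 2 ^ n * B ∧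
      ‖p.2.symm (F p.1)‖ ≤ η / 2 ^ n with hP
  have key : ∀ (n : ℕ) (p : E × (E ≃L[ℝ] V)), P n p →
      ∃ e' : E ≃L[ℝ] V, P (n + 1) (p.1 - p.2.symm (F p.1), e') := by
    intro n p hp
    obtain ⟨e', h1, h2, h3, _⟩ := newton_step F F' K₂ B η hK₂ hB hη hlip htay hKant
      n p.1 p.2 hp.1 hp.2.1 hp.2.2
    exact ⟨e', h1, h2, h3⟩
  let s : ∀ n : ℕ, {p : E × (E ≃L[ℝ] V) // P n p} :=
    fun n => Nat.rec ⟨(x₀, e₀), he₀, by simpa using hBinv, by simpa using hη'⟩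
      (fun k ih => ⟨(ih.1.1 - ih.1.2.symm (F ih.1.1), (key k ih.1 ih.2).choose),
        (key k ih.1 ih.2).choose_spec⟩) n
  have hstep : ∀ n : ℕ, (s (n + 1)).1.1 = (s n).1.1 - (s n).1.2.symm (F (s n).1.1) :=
    fun n => rfl
  refine ⟨fun n => (s n).1.1, rfl, fun n => ⟨(s n).1.2, (s n).2.1, hstep n⟩, ?_⟩
  -- convergence
  have hdist : ∀ n : ℕ, ‖(s n).1.1 - (s (n + 1)).1.1‖ ≤ η * (1 / 2) ^ n := by
    intro n
    rw [hstep n, sub_sub_cancel]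
    refine ((s n).2.2.2).trans (le_of_eq ?_)
    rw [one_div, inv_pow, div_eq_mul_inv]
  have hcauchy : CauchySeq (fun n => (s n).1.1) :=
    SeminormedAddCommGroup.cauchySeq_of_le_geometric (by norm_num : (1:ℝ)/2 < 1) hdist
  obtain ⟨xs, hxs⟩ := cauchySeq_tendsto_of_complete hcauchy
  refine ⟨xs, hxs, ?_⟩
  have hres : ∀ n : ℕ, ‖F ((s (n + 1)).1.1)‖ ≤ K₂ / 2 * (η / 2 ^ n) ^ 2 := by
    intro n
    obtain ⟨e', _, _, _, h4⟩ := newton_step F F' K₂ B η hK₂ hB hη hlip htay hKant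
      n (s n).1.1 (s n).1.2 (s n).2.1 (s n).2.2.1 (s n).2.2.2
    rw [hstep n]
    exact h4
  have heq : ∀ n : ℕ, K₂ / 2 * (η / 2 ^ n) ^ 2 = K₂ / 2 * η ^ 2 * ((1:ℝ) / 4) ^ n := by
    intro n
    have h6 : ((2:ℝ) ^ n) ^ 2 = 4 ^ n := by
      rw [← pow_mul, mul_comm, pow_mul]; norm_num
    rw [div_pow, h6, one_div_pow]
    ring
  have hbnd : Tendsto (fun n : ℕ => K₂ / 2 * (η / 2 ^ n) ^ 2) atTop (nhds 0) := by
    have h4 := tendsto_pow_atTop_nhds_zero_of_lt_one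
      (by norm_num : (0:ℝ) ≤ 1 / 4) (by norm_num : (1/4:ℝ) < 1)
    have h5 := h4.const_mul (K₂ / 2 * η ^ 2)
    rw [mul_zero] at h5
    exact h5.congr fun n => (heq n).symm
  have h0 : Tendsto (fun n : ℕ => F ((s (n + 1)).1.1)) atTop (nhds 0) :=
    squeeze_zero_norm hres hbnd
  have hFc : Continuous F := continuous_iff_continuousAt.2 fun z => (hF' z).continuousAt
  have h1 : Tendsto (fun n : ℕ => F ((s (n + 1)).1.1)) atTop (nhds (F xs)) :=
    (hFc.tendsto xs).comp (hxs.comp (tendsto_add_atTop_nat 1))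
  exact tendsto_nhds_unique h1 h0
end

section
/- For every real parameter a with 0 < a ≤ 1/2, the system is positive: for all n ≥ 0 one has a_n > 0, d_n > 0 and 1 − a·a_n·d_n > 0 (so every term of both sequences is well defined and positive). -/
/-- **Positivity of the Newton system of sequences.**
For `0 < a ≤ 1/2`, the sequences defined by `a₀ = d₀ = 1`,
`a_{n+1} = a_n/(1 − a·a_n·d_n)`, `d_{n+1} = (a/2)·a_{n+1}·d_n²` satisfy, for all `n`,
`a_n > 0`, `d_n > 0` and `1 − a·a_n·d_n > 0`. -/
theorem stmt_1 (a : ℝ) (ha : 0 < a) (ha' : a ≤ 1 / 2)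
    (aa dd : ℕ → ℝ) (ha0 : aa 0 = 1) (hd0 : dd 0 = 1)
    (haa : ∀ n, aa (n + 1) = aa n / (1 - a * aa n * dd n))
    (hdd : ∀ n, dd (n + 1) = a / 2 * aa (n + 1) * (dd n) ^ 2) :
    ∀ n, 0 < aa n ∧ 0 < dd n ∧ 0 < 1 - a * aa n * dd n := by
  have key : ∀ n, 0 < aa n ∧ 0 < dd n ∧ a * aa n * dd n ≤ 1 / 2 := by
    intro n
    induction n with
    | zero =>
      exact ⟨by simp [ha0], by simp [hd0], by simp [ha0, hd0]; linarith⟩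
    | succ n ih =>
      obtain ⟨hA, hD, hx⟩ := ih
      have hden : 0 < 1 - a * aa n * dd n := by linarith
      have hA1 : 0 < aa (n + 1) := by
        rw [haa n]; exact div_pos hA hden
      have hD1 : 0 < dd (n + 1) := by
        rw [hdd n]; positivity
      refine ⟨hA1, hD1, ?_⟩
      have h1 : a * aa (n + 1) * dd n ≤ 1 := by
        rw [haa n]
        rw [show a * (aa n / (1 - a * aa n * dd n)) * dd n
            = a * aa n * dd n / (1 - a * aa n * dd n) by ring, div_le_one hden]
        nlinarith [mul_pos (mul_pos ha hA) hD]
      have hpos : 0 ≤ a * aa (n + 1) * dd n := by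
        exact (mul_pos (mul_pos ha hA1) hD).le
      have : a * aa (n + 1) * dd (n + 1) = (a * aa (n + 1) * dd n) ^ 2 / 2 := by
        rw [hdd n]; ring
      rw [this]
      nlinarith
  intro n
  obtain ⟨hA, hD, hx⟩ := key n
  exact ⟨hA, hD, by linarith⟩
end

section
/- For every real parameter a with 0 < a ≤ 1/2 and every n ≥ 0, the identity (1/a_n)² − 2a·(d_n/a_n) = 1 − 2a holds; in particular a_n is determined by d_n. -/
/-- **Invariant of the Newton system of sequences.**
For `0 < a ≤ 1/2` and the sequences `a₀ = d₀ = 1`,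
`a_{n+1} = a_n/(1 − a·a_n·d_n)`, `d_{n+1} = (a/2)·a_{n+1}·d_n²`, one has, for all `n`,
`(1/a_n)² − 2a·(d_n/a_n) = 1 − 2a`. -/
theorem stmt_2 (a : ℝ) (ha : 0 < a) (ha' : a ≤ 1 / 2)
    (aa dd : ℕ → ℝ) (ha0 : aa 0 = 1) (hd0 : dd 0 = 1)
    (haa : ∀ n, aa (n + 1) = aa n / (1 - a * aa n * dd n))
    (hdd : ∀ n, dd (n + 1) = a / 2 * aa (n + 1) * (dd n) ^ 2) :
    ∀ n, (1 / aa n) ^ 2 - 2 * a * (dd n / aa n) = 1 - 2 * a := by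
  have key : ∀ n, aa n ≠ 0 ∧ (1 / aa n) ^ 2 - 2 * a * (dd n / aa n) = 1 - 2 * a := by
    intro n
    induction n with
    | zero => refine ⟨by simp [ha0], by simp [ha0, hd0]⟩
    | succ n ih =>
      obtain ⟨hne, hinv⟩ := ih
      field_simp at hinv
      have hden : 1 - a * aa n * dd n ≠ 0 := by
        intro h
        have h1 : a * aa n * dd n = 1 := by linarith
        have h3 : -(aa n ^ 2) = (1 - 2 * a) * aa n ^ 4 := by
          linear_combination aa n ^ 2 * hinv + 2 * aa n ^ 2 * h1
        have h4 : (0:ℝ) ≤ (1 - 2 * a) * aa n ^ 4 :=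
          mul_nonneg (by linarith) (by positivity)
        have h5 : 0 < aa n ^ 2 := by positivity
        linarith
      have hane : aa (n + 1) ≠ 0 := by
        rw [haa n]; exact div_ne_zero hne hden
      refine ⟨hane, ?_⟩
      rw [hdd n, haa n]
      have hane' : aa n / (1 - a * aa n * dd n) ≠ 0 := div_ne_zero hne hden
      field_simp
      rw [mul_div_cancel_left₀ _ (by rw [show aa n * a * dd n = a * aa n * dd n by ring]; exact hden)]
      linear_combination hinv
  intro n; exact (key n).2
end

section
/- For every real parameter a with 0 < a ≤ 1/2 and every n ≥ 0, the successive terms of the sequence (d_n) satisfy the rate-of-convergence relation d_{n+1}·( a·d_{n+1} + √( (a·d_{n+1})² + (1 − 2a) ) ) = (a/2)·d_n². -/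
/-- **Rate of convergence of the Newton system of sequences.**
For `0 < a ≤ 1/2` and the sequences `a₀ = d₀ = 1`,
`a_{n+1} = a_n/(1 − a·a_n·d_n)`, `d_{n+1} = (a/2)·a_{n+1}·d_n²`, one has, for all `n`,
`d_{n+1}·( a·d_{n+1} + √((a·d_{n+1})² + (1 − 2a)) ) = (a/2)·d_n²`. -/
theorem stmt_3 (a : ℝ) (ha : 0 < a) (ha' : a ≤ 1 / 2)
    (aa dd : ℕ → ℝ) (ha0 : aa 0 = 1) (hd0 : dd 0 = 1)
    (haa : ∀ n, aa (n + 1) = aa n / (1 - a * aa n * dd n))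
    (hdd : ∀ n, dd (n + 1) = a / 2 * aa (n + 1) * (dd n) ^ 2) :
    ∀ n, dd (n + 1) *
        (a * dd (n + 1) + Real.sqrt ((a * dd (n + 1)) ^ 2 + (1 - 2 * a))) =
      a / 2 * (dd n) ^ 2 := by
  -- the key invariant together with positivity
  have key : ∀ n, 0 < aa n ∧ 0 < dd n ∧
      1 - 2 * a * aa n * dd n = (1 - 2 * a) * (aa n) ^ 2 := by
    intro n
    induction n with
    | zero => refine ⟨by rw [ha0]; norm_num, by rw [hd0]; norm_num, by rw [ha0, hd0]; ring⟩
    | succ n ih =>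
      obtain ⟨hA, hD, hE⟩ := ih
      have h2a : 0 ≤ 1 - 2 * a := by linarith
      have hprod : a * aa n * dd n ≤ 1 / 2 := by nlinarith [sq_nonneg (aa n)]
      have hc : (0:ℝ) < 1 - a * aa n * dd n := by linarith
      have hA' : 0 < aa (n + 1) := by
        rw [haa n]; exact div_pos hA hc
      have hD' : 0 < dd (n + 1) := by
        rw [hdd n]; positivity
      refine ⟨hA', hD', ?_⟩
      rw [hdd n, haa n]
      field_simp
      linear_combination hE
  intro n
  obtain ⟨hA, hD, hE⟩ := key (n + 1)
  have hprod : a * aa (n + 1) * dd (n + 1) ≤ 1 / 2 := by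
    nlinarith [sq_nonneg (aa (n + 1))]
  have hnum : (0:ℝ) ≤ (1 - a * aa (n + 1) * dd (n + 1)) / aa (n + 1) := by
    apply div_nonneg (by linarith) hA.le
  have hsqrt : Real.sqrt ((a * dd (n + 1)) ^ 2 + (1 - 2 * a)) =
      (1 - a * aa (n + 1) * dd (n + 1)) / aa (n + 1) := by
    rw [show (a * dd (n + 1)) ^ 2 + (1 - 2 * a) =
        ((1 - a * aa (n + 1) * dd (n + 1)) / aa (n + 1)) ^ 2 from ?_,
      Real.sqrt_sq hnum]
    field_simp
    nlinarith [hE]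
  rw [hsqrt, hdd n]
  field_simp
  ring
end

section
/- For every real parameter a with 0 < a ≤ 1/2, the series ∑_{n=0}^∞ d_n converges and its sum equals s* = (1 − √(1 − 2a))/a. -/
open Filter Finset

/-- **Sum of the Newton system sequence `(d_n)`.**
For `0 < a ≤ 1/2` and the sequences `a₀ = d₀ = 1`,
`a_{n+1} = a_n/(1 − a·a_n·d_n)`, `d_{n+1} = (a/2)·a_{n+1}·d_n²`, the series `∑ d_n`
converges with sum `s* = (1 − √(1 − 2a))/a`. -/
theorem stmt_4 (a : ℝ) (ha : 0 < a) (ha' : a ≤ 1 / 2)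
    (aa dd : ℕ → ℝ) (ha0 : aa 0 = 1) (hd0 : dd 0 = 1)
    (haa : ∀ n, aa (n + 1) = aa n / (1 - a * aa n * dd n))
    (hdd : ∀ n, dd (n + 1) = a / 2 * aa (n + 1) * (dd n) ^ 2) :
    HasSum dd ((1 - Real.sqrt (1 - 2 * a)) / a) := by
  have hane : a ≠ 0 := ne_of_gt ha
  set q : ℝ := Real.sqrt (1 - 2 * a) with hq
  have hq0 : 0 ≤ q := Real.sqrt_nonneg _
  have hq2 : q ^ 2 = 1 - 2 * a := Real.sq_sqrt (by linarith)
  have hq1 : q < 1 := by nlinarith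
  set r : ℝ := (1 - q) / a with hr
  have har : a * r = 1 - q := by rw [hr]; field_simp
  have hrpos : 0 < r := by rw [hr]; exact div_pos (by linarith) ha
  have hrq : r * (1 + q) = 2 := by rw [hr]; field_simp; linear_combination -hq2
  clear_value q r
  set s : ℕ → ℝ := fun n => ∑ k ∈ Finset.range n, dd k with hs
  have hs0 : s 0 = 0 := by simp [hs]
  have hss : ∀ n, s (n + 1) = s n + dd n := by
    intro n; simp [hs, Finset.sum_range_succ]
  clear_value s
  have key : ∀ n, s n < r ∧ 0 < 1 - a * s n ∧ 0 < dd n ∧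
      aa n = 1 / (1 - a * s n) ∧ dd n = (a / 2 * (s n) ^ 2 - s n + 1) / (1 - a * s n) := by
    intro n
    induction n with
    | zero =>
      refine ⟨by rw [hs0]; exact hrpos, by rw [hs0]; norm_num, by rw [hd0]; norm_num,
        by simp [hs0, ha0], by simp [hs0, hd0]⟩
    | succ n ih =>
      obtain ⟨h2, he, hdpos, haan, hddn⟩ := ih
      have h15 : 0 < 1 + q - a * s n := by nlinarith
      have hfs_eq : a / 2 * (s n) ^ 2 - s n + 1 = (r - s n) * (1 + q - a * s n) / 2 := by
        linear_combination (s n / 2) * har - (1/2) * hrq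
      have hfs : 0 < a / 2 * (s n) ^ 2 - s n + 1 := by
        rw [hfs_eq]
        have := mul_pos (sub_pos.2 h2) h15
        linarith
      have hfd : dd n * (1 - a * s n) = a / 2 * (s n) ^ 2 - s n + 1 := by
        rw [hddn]; field_simp
      have hT : dd n * (1 - a * s n) = (r - s n) * (1 + q - a * s n) / 2 := by
        rw [hfd, hfs_eq]
      have hkey : r - s (n + 1) = a * (r - s n) ^ 2 / (2 * (1 - a * s n)) := by
        rw [eq_div_iff (by linarith : (0:ℝ) < 2 * (1 - a * s n)).ne', hss]
        linear_combination (-2 : ℝ) * hT - (r - s n) * har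
      have h2' : s (n + 1) < r := by
        have : 0 < a * (r - s n) ^ 2 / (2 * (1 - a * s n)) :=
          div_pos (mul_pos ha (pow_pos (sub_pos.2 h2) 2)) (by linarith)
        linarith [hkey]
      have he' : 0 < 1 - a * s (n + 1) := by nlinarith [mul_pos ha (sub_pos.2 h2')]
      have haan' : aa (n + 1) = 1 / (1 - a * s (n + 1)) := by
        have h4 : 1 - a * aa n * dd n = (1 - a * s (n + 1)) / (1 - a * s n) := by
          rw [haan, hss]; field_simp; ring
        rw [haa n, h4, haan]
        field_simp
      have he'' : (1 : ℝ) - a * (s n + dd n) ≠ 0 := by rw [← hss]; exact he'.ne'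
      have hddn' : dd (n + 1) = (a / 2 * (s (n + 1)) ^ 2 - s (n + 1) + 1) / (1 - a * s (n + 1)) := by
        have hstep : dd (n + 1) * (1 - a * s (n + 1)) = a / 2 * dd n ^ 2 := by
          rw [hdd n, haan']; field_simp
        rw [eq_div_iff he'.ne', hstep, hss]
        linear_combination hfd
      have hdpos' : 0 < dd (n + 1) := by
        rw [hdd n, haan']
        have h5 : 0 < (dd n) ^ 2 := by positivity
        positivity
      exact ⟨h2', he', hdpos', haan', hddn'⟩
  have hcontr : ∀ n, r - s (n + 1) ≤ (r - s n) / 2 := by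
    intro n
    obtain ⟨h2, he, hdpos, haan, hddn⟩ := key n
    have h15 : 0 < 1 + q - a * s n := by nlinarith
    have hfs_eq : a / 2 * (s n) ^ 2 - s n + 1 = (r - s n) * (1 + q - a * s n) / 2 := by
      linear_combination (s n / 2) * har - (1/2) * hrq
    have hfd : dd n * (1 - a * s n) = a / 2 * (s n) ^ 2 - s n + 1 := by
      rw [hddn]; field_simp
    have hT : dd n * (1 - a * s n) = (r - s n) * (1 + q - a * s n) / 2 := by
      rw [hfd, hfs_eq]
    have hkey : r - s (n + 1) = a * (r - s n) ^ 2 / (2 * (1 - a * s n)) := by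
      rw [eq_div_iff (by linarith : (0:ℝ) < 2 * (1 - a * s n)).ne', hss]
      linear_combination (-2 : ℝ) * hT - (r - s n) * har
    rw [hkey, div_le_div_iff₀ (by linarith) (by norm_num)]
    have ht : 0 < r - s n := sub_pos.2 h2
    nlinarith [mul_pos ha ht]
  have hub : ∀ n, r - s n ≤ r * (1 / 2) ^ n := by
    intro n
    induction n with
    | zero => simp [hs0]
    | succ n ih =>
      calc r - s (n + 1) ≤ (r - s n) / 2 := hcontr n
        _ ≤ r * (1 / 2) ^ n / 2 := by linarith
        _ = r * (1 / 2) ^ (n + 1) := by ring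
  have h0le : ∀ n, 0 ≤ r - s n := fun n => le_of_lt (sub_pos.2 (key n).1)
  have htend0 : Tendsto (fun n => r - s n) atTop (nhds 0) := by
    apply squeeze_zero h0le hub
    have := (tendsto_pow_atTop_nhds_zero_of_lt_one (by norm_num : (0:ℝ) ≤ 1/2)
      (by norm_num : (1:ℝ)/2 < 1)).const_mul r
    simpa only [mul_zero] using this
  have htends : Tendsto s atTop (nhds r) := by
    have h := (tendsto_const_nhds : Tendsto (fun _ : ℕ => r) atTop (nhds r)).sub htend0
    simpa only [sub_sub_cancel, sub_zero] using (h : Tendsto (fun n => r - (r - s n)) atTop (nhds (r - 0)))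
  have hsum : Summable dd := by
    apply summable_of_sum_range_le (fun n => (key n).2.2.1.le)
    intro n
    have h1 : s n < r := (key n).1
    rw [hs] at h1
    simpa using h1.le
  exact hsum.hasSum_iff_tendsto_nat.mpr (hs ▸ htends)
end

section
/- For every real parameter a with 0 < a ≤ 1/2 and every n ≥ 0, the partial sums of the sequence (d_n) satisfy ∑_{k=0}^{n−1} d_k = (1/a)·(1 − 1/a_n). -/
/-- **Partial sums of the Newton system sequence `(d_n)`.**
For `0 < a ≤ 1/2` and the sequences `a₀ = d₀ = 1`,
`a_{n+1} = a_n/(1 − a·a_n·d_n)`, `d_{n+1} = (a/2)·a_{n+1}·d_n²`, the partial sums satisfy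
`∑_{k=0}^{n−1} d_k = (1/a)·(1 − 1/a_n)` for every `n ≥ 0`. -/
theorem stmt_5 (a : ℝ) (ha : 0 < a) (ha' : a ≤ 1 / 2)
    (aa dd : ℕ → ℝ) (ha0 : aa 0 = 1) (hd0 : dd 0 = 1)
    (haa : ∀ n, aa (n + 1) = aa n / (1 - a * aa n * dd n))
    (hdd : ∀ n, dd (n + 1) = a / 2 * aa (n + 1) * (dd n) ^ 2) :
    ∀ n, ∑ k ∈ Finset.range n, dd k = 1 / a * (1 - 1 / aa n) := by
  have key : ∀ n, 0 < aa n ∧ 0 ≤ dd n ∧ a * aa n * dd n ≤ 1 / 2 := by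
    intro n
    induction n with
    | zero => refine ⟨by rw [ha0]; norm_num, by rw [hd0]; norm_num, by rw [ha0, hd0]; linarith⟩
    | succ n ih =>
      obtain ⟨hpos, hdn, hb⟩ := ih
      have hb0 : 0 ≤ a * aa n * dd n := by positivity
      have ht : (0:ℝ) < 1 - a * aa n * dd n := by linarith
      have hapos : 0 < aa (n + 1) := by
        rw [haa n]; exact div_pos hpos ht
      have hdpos : 0 ≤ dd (n + 1) := by
        rw [hdd n]; positivity
      refine ⟨hapos, hdpos, ?_⟩
      rw [hdd n, haa n]
      have h1 : a * (aa n / (1 - a * aa n * dd n)) *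
          (a / 2 * (aa n / (1 - a * aa n * dd n)) * dd n ^ 2)
          = (a * aa n * dd n)^2 / (2 * (1 - a * aa n * dd n)^2) := by
        field_simp
      rw [h1]
      rw [div_le_iff₀ (by positivity)]
      nlinarith [sq_nonneg (a * aa n * dd n)]
  intro n
  induction n with
  | zero => simp [ha0]
  | succ n ih =>
    obtain ⟨hpos, hdn, hb⟩ := key n
    have hb0 : 0 ≤ a * aa n * dd n := by positivity
    have ht : (0:ℝ) < 1 - a * aa n * dd n := by linarith
    rw [Finset.sum_range_succ, ih, haa n]
    rw [one_div_div]
    field_simp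
    ring
end

section
/- Let 0 < a ≤ 1/2 and let q(s) = (a/2)s² − s + 1 with smallest positive root s* = (1 − √(1 − 2a))/a. The Newton sequence defined by s_0 = 0 and s_{n+1} = s_n − q(s_n)/q'(s_n) is monotonically increasing, converges to s*, and satisfies, for every n ≥ 0, s_{n+1} − s_n = d_n and q'(s_n) = −1/a_n. -/
/-- **Newton's method on the adimensional quadratic.**
Let `0 < a ≤ 1/2`, `q(s) = (a/2)s² − s + 1` with smallest positive root
`s* = (1 − √(1 − 2a))/a`.  The Newton sequence `s₀ = 0`, `s_{n+1} = s_n − q(s_n)/q'(s_n)` is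
monotonically increasing, converges to `s*`, and satisfies `s_{n+1} − s_n = d_n` and
`q'(s_n) = −1/a_n` for every `n`, where `(a_n)`, `(d_n)` is the Newton system of sequences. -/
theorem stmt_6 (a : ℝ) (ha : 0 < a) (ha' : a ≤ 1 / 2)
    (aa dd : ℕ → ℝ) (ha0 : aa 0 = 1) (hd0 : dd 0 = 1)
    (haa : ∀ n, aa (n + 1) = aa n / (1 - a * aa n * dd n))
    (hdd : ∀ n, dd (n + 1) = a / 2 * aa (n + 1) * (dd n) ^ 2)
    (q : ℝ → ℝ) (hq : q = fun s => a / 2 * s ^ 2 - s + 1)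
    (sstar : ℝ) (hsstar : sstar = (1 - Real.sqrt (1 - 2 * a)) / a)
    (s : ℕ → ℝ) (hs0 : s 0 = 0)
    (hsn : ∀ n, s (n + 1) = s n - q (s n) / deriv q (s n)) :
    Monotone s ∧ Filter.Tendsto s Filter.atTop (nhds sstar) ∧
      ∀ n, s (n + 1) - s n = dd n ∧ deriv q (s n) = -(1 / aa n) := by
  have ha2 : (0:ℝ) ≤ 1 - 2 * a := by linarith
  set b := Real.sqrt (1 - 2 * a) with hb
  have hb0 : 0 ≤ b := Real.sqrt_nonneg _
  have hb2 : b ^ 2 = 1 - 2 * a := Real.sq_sqrt ha2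
  have hb1 : b < 1 := by nlinarith
  have hane : a ≠ 0 := ne_of_gt ha
  have hq' : deriv q = fun x => a * x - 1 := by
    funext x
    have h : HasDerivAt q (a * x - 1) x := by
      rw [hq]
      have h1 : HasDerivAt (fun s : ℝ => a/2 * s^2) (a/2 * (2 * x ^ 1)) x :=
        (hasDerivAt_pow 2 x).const_mul (a/2)
      have h2 := (h1.sub (hasDerivAt_id x)).add_const 1
      exact h2.congr_deriv (by ring)
    exact h.deriv
  -- the Newton recursion in terms of u n = 1 - a * s n
  have hurec : ∀ n, b < 1 - a * s n →
      1 - a * s (n + 1) = ((1 - a * s n) ^ 2 + b ^ 2) / (2 * (1 - a * s n)) := by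
    intro n h
    have hu : 0 < 1 - a * s n := lt_of_le_of_lt hb0 h
    have hne : a * s n - 1 ≠ 0 := by intro hc; rw [sub_eq_zero] at hc; rw [hc] at hu; simp at hu
    rw [hsn n, hq', hq]
    simp only
    field_simp
    linear_combination (1 - a * s n) * hb2
  have hsdiff : ∀ n, b < 1 - a * s n →
      s (n + 1) - s n = ((1 - a * s n) ^ 2 - b ^ 2) / (2 * a * (1 - a * s n)) := by
    intro n h
    have hu : 0 < 1 - a * s n := lt_of_le_of_lt hb0 h
    have hne : a * s n - 1 ≠ 0 := by intro hc; rw [sub_eq_zero] at hc; rw [hc] at hu; simp at hu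
    rw [hsn n, hq', hq]
    simp only
    field_simp
    rw [show 1 - s n * a = -(s n * a - 1) by ring]
    field_simp
    linear_combination (-1) * hb2
  -- key invariant
  have key : ∀ n, b < 1 - a * s n ∧ 1 - a * s n ≤ 1 := by
    intro n
    induction n with
    | zero => rw [hs0]; refine ⟨by simpa using hb1, by norm_num⟩
    | succ n ih =>
      obtain ⟨h1, h2⟩ := ih
      have hu : 0 < 1 - a * s n := lt_of_le_of_lt hb0 h1
      rw [hurec n h1]
      constructor
      · rw [lt_div_iff₀ (by positivity)]
        nlinarith [sq_nonneg (1 - a * s n - b)]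
      · rw [div_le_iff₀ (by positivity)]
        nlinarith
  have hupos : ∀ n, 0 < 1 - a * s n := fun n => lt_of_le_of_lt hb0 (key n).1
  -- monotone
  have hmono : Monotone s := by
    apply monotone_nat_of_le_succ
    intro n
    obtain ⟨h1, h2⟩ := key n
    have hu := hupos n
    have := hsdiff n h1
    have hnum : 0 ≤ (1 - a * s n) ^ 2 - b ^ 2 := by nlinarith
    nlinarith [div_nonneg hnum (by positivity : (0:ℝ) ≤ 2 * a * (1 - a * s n))]
  -- distance to sstar
  have hsw : ∀ n, sstar - s n = ((1 - a * s n) - b) / a := by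
    intro n; rw [hsstar]; field_simp; ring
  -- error bound
  have hbound : ∀ n, (1 - a * s n) - b ≤ (1/2) ^ n := by
    intro n
    induction n with
    | zero => rw [hs0]; norm_num; linarith
    | succ n ih =>
      obtain ⟨h1, h2⟩ := key n
      have hu := hupos n
      rw [hurec n h1]
      have hstep : ((1 - a * s n) ^ 2 + b ^ 2) / (2 * (1 - a * s n)) - b
          ≤ ((1 - a * s n) - b) / 2 := by
        rw [div_sub' (by positivity), div_le_div_iff₀ (by positivity) (by norm_num)]
        nlinarith
      calc ((1 - a * s n) ^ 2 + b ^ 2) / (2 * (1 - a * s n)) - b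
          ≤ ((1 - a * s n) - b) / 2 := hstep
        _ ≤ (1/2) ^ n / 2 := by linarith
        _ = (1/2) ^ (n + 1) := by ring
  -- convergence
  have htend : Filter.Tendsto s Filter.atTop (nhds sstar) := by
    have h0 : Filter.Tendsto (fun n : ℕ => sstar - (1/2 : ℝ) ^ n / a) Filter.atTop
        (nhds (sstar - 0 / a)) := by
      apply Filter.Tendsto.const_sub
      exact (tendsto_pow_atTop_nhds_zero_of_lt_one (by norm_num) (by norm_num)).div_const a
    rw [zero_div, sub_zero] at h0
    apply tendsto_of_tendsto_of_tendsto_of_le_of_le h0 tendsto_const_nhds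
    · intro n
      have h1 := hbound n
      have h2 := hsw n
      have : sstar - s n ≤ (1/2) ^ n / a := by
        rw [h2]; gcongr
      linarith
    · intro n
      have h1 := (key n).1
      have h2 := hsw n
      have : 0 ≤ sstar - s n := by rw [h2]; exact div_nonneg (by linarith) ha.le
      linarith
  -- aa and dd identification
  have had : ∀ n, aa n = 1 / (1 - a * s n) ∧ dd n = s (n + 1) - s n := by
    intro n
    induction n with
    | zero =>
      refine ⟨by rw [ha0, hs0]; norm_num, ?_⟩
      rw [hd0, hsdiff 0 (key 0).1, hs0]
      simp
      field_simp
      linear_combination hb2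
    | succ n ih =>
      obtain ⟨hian, hidn⟩ := ih
      obtain ⟨h1, h2⟩ := key n
      have hu := hupos n
      have hu' := hupos (n + 1)
      have hun := hurec n h1
      have hsd := hsdiff n h1
      have hDne : (1 - a * s n) ^ 2 + b ^ 2 ≠ 0 := by positivity
      have haan : aa (n + 1) = 1 / (1 - a * s (n + 1)) := by
        have hden : 1 - a * aa n * dd n = (1 - a * s (n + 1)) / (1 - a * s n) := by
          rw [hian, hidn, hsd, hun]
          field_simp
          ring
        rw [haa n, hden, hian]
        field_simp
      refine ⟨haan, ?_⟩
      rw [hdd n, haan, hidn, hsd, hsdiff (n+1) (key (n+1)).1, hun]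
      field_simp
      ring
  refine ⟨hmono, htend, fun n => ?_⟩
  obtain ⟨han, hdn⟩ := had n
  refine ⟨hdn.symm, ?_⟩
  rw [hq', han]
  simp only
  rw [one_div_one_div]
  ring
end

section
/- Let E and V be real Banach spaces and F : E → V twice Fréchet differentiable. Let x₀ ∈ E be such that F'(x₀) is invertible, and let K₂, B, η > 0 satisfy: a := K₂Bη ≤ 1/2, ‖F''(x)‖ ≤ K₂ for all x ∈ E, ‖F'(x₀)⁻¹‖ ≤ B, and ‖F'(x₀)⁻¹F(x₀)‖ ≤ η. Then the Newton sequence x_{n+1} = x_n − F'(x_n)⁻¹F(x_n) is well defined and converges to a root x* of F, and for all n ≥ 0: (1) F'(x_n) is invertible with ‖F'(x_n)⁻¹‖ ≤ a_n·B; (2) ‖x_{n+1} − x_n‖ ≤ d_n·η; (3) ‖x* − x₀‖ ≤ s*·η; (4) for n ≥ 1, ‖x* − x_n‖ ≤ (s* − ∑_{k=0}^{n−1} d_k)·η. Moreover, x* is the only root of F in the ball of center x₀ and radius s**·η. -/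
set_option maxHeartbeats 800000
open Set Filter Finset

lemma taylor2 {E V : Type*} [NormedAddCommGroup E] [NormedSpace ℝ E]
    [NormedAddCommGroup V] [NormedSpace ℝ V]
    (F : E → V) (F' : E → (E →L[ℝ] V)) (K : ℝ)
    (hF' : ∀ x, HasFDerivAt F (F' x) x)
    (hLip : ∀ u v : E, ‖F' v - F' u‖ ≤ K * ‖v - u‖)
    (x y : E) : ‖F y - F x - F' x (y - x)‖ ≤ K / 2 * ‖y - x‖ ^ 2 := by
  set v := y - x with hv
  set g : ℝ → V := fun t => F (x + t • v) - t • (F' x v) - F x with hg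
  have hgd : ∀ t : ℝ, HasDerivAt g ((F' (x + t • v)) v - (F' x) v) t := by
    intro t
    have hline : HasDerivAt (fun t : ℝ => x + t • v) v t := by
      simpa using ((hasDerivAt_id t).smul_const v).const_add x
    have h1 : HasDerivAt (fun t : ℝ => F (x + t • v)) ((F' (x + t • v)) v) t := by
      exact (hF' (x + t • v)).comp_hasDerivAt t hline
    have h2 : HasDerivAt (fun t : ℝ => t • (F' x v)) ((F' x) v) t := by
      simpa using (hasDerivAt_id t).smul_const (F' x v)
    exact (h1.sub h2).sub_const (F x)
  have key := image_norm_le_of_norm_deriv_right_le_deriv_boundary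
    (f := g) (f' := fun t => (F' (x + t • v)) v - (F' x) v) (a := 0) (b := 1)
    (B := fun t => K / 2 * ‖v‖ ^ 2 * t ^ 2) (B' := fun t => K / 2 * ‖v‖ ^ 2 * (2 * t))
    (fun t _ => (hgd t).continuousAt.continuousWithinAt)
    (fun t _ => (hgd t).hasDerivWithinAt)
    (by simp [hg])
    (fun t => by
      simpa using ((hasDerivAt_pow 2 t).const_mul (K / 2 * ‖v‖ ^ 2)))
    (fun t ht => by
      have h1 : ‖(F' (x + t • v)) v - (F' x) v‖ ≤ ‖F' (x + t • v) - F' x‖ * ‖v‖ := by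
        rw [← ContinuousLinearMap.sub_apply]
        exact (F' (x + t • v) - F' x).le_opNorm v
      have h2 : ‖F' (x + t • v) - F' x‖ ≤ K * (t * ‖v‖) := by
        have := hLip x (x + t • v)
        simpa [norm_smul, abs_of_nonneg ht.1] using this
      have h3 := le_trans h1 (mul_le_mul_of_nonneg_right h2 (norm_nonneg v))
      nlinarith [norm_nonneg v, ht.1])
    (right_mem_Icc.2 zero_le_one)
  have hx1 : x + (1 : ℝ) • v = y := by simp [hv]
  have hg1 : g 1 = F y - F x - (F' x) v := by
    show F (x + (1:ℝ) • v) - (1:ℝ) • (F' x) v - F x = _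
    rw [hx1, one_smul]; abel
  rw [hg1] at key
  simpa using key

noncomputable def newtonSeq {E V : Type*} [NormedAddCommGroup E] [NormedSpace ℝ E]
    [NormedAddCommGroup V] [NormedSpace ℝ V]
    (F : E → V) (F' : E → (E →L[ℝ] V)) (x₀ : E) : ℕ → E
  | 0 => x₀
  | n + 1 => newtonSeq F F' x₀ n -
      (F' (newtonSeq F F' x₀ n)).inverse (F (newtonSeq F F' x₀ n))

/-- **Kantorovich-type theorem for Newton's method with a priori error estimates.**
Let `E`, `V` be real Banach spaces, `F : E → V` twice Fréchet differentiable, `x₀ ∈ E` with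
`F'(x₀)` invertible, and `K₂, B, η > 0` with `a := K₂Bη ≤ 1/2`, `‖F''(x)‖ ≤ K₂` everywhere,
`‖F'(x₀)⁻¹‖ ≤ B`, `‖F'(x₀)⁻¹F(x₀)‖ ≤ η`.  Then the Newton sequence is well defined,
converges to a root `x*` of `F`, and for all `n`:
`F'(x_n)` is invertible with `‖F'(x_n)⁻¹‖ ≤ a_n B`; `‖x_{n+1} − x_n‖ ≤ d_n η`;
`‖x* − x₀‖ ≤ s* η`; for `n ≥ 1`, `‖x* − x_n‖ ≤ (s* − ∑_{k<n} d_k) η`.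
Moreover `x*` is the only root of `F` in the ball `B(x₀, s** η)`,
where `s* = (1 − √(1−2a))/a`, `s** = (1 + √(1−2a))/a` and `(a_n)`, `(d_n)` is the Newton
system of sequences associated with `a`. -/
theorem stmt_7
    {E V : Type*} [NormedAddCommGroup E] [NormedSpace ℝ E] [CompleteSpace E]
    [NormedAddCommGroup V] [NormedSpace ℝ V] [CompleteSpace V]
    (F : E → V) (F' : E → (E →L[ℝ] V)) (F'' : E → (E →L[ℝ] E →L[ℝ] V))
    (hF' : ∀ x, HasFDerivAt F (F' x) x)
    (hF'' : ∀ x, HasFDerivAt F' (F'' x) x)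
    (x₀ : E) (e₀ : E ≃L[ℝ] V) (he₀ : (e₀ : E →L[ℝ] V) = F' x₀)
    (K₂ B η : ℝ) (hK₂ : 0 < K₂) (hB : 0 < B) (hη : 0 < η)
    (hbound : ∀ x, ‖F'' x‖ ≤ K₂)
    (hBinv : ‖(e₀.symm : V →L[ℝ] E)‖ ≤ B)
    (hη' : ‖e₀.symm (F x₀)‖ ≤ η)
    (a : ℝ) (haK : a = K₂ * B * η) (hKant : a ≤ 1 / 2)
    (aa dd : ℕ → ℝ) (ha0 : aa 0 = 1) (hd0 : dd 0 = 1)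
    (haa : ∀ n, aa (n + 1) = aa n / (1 - a * aa n * dd n))
    (hdd : ∀ n, dd (n + 1) = a / 2 * aa (n + 1) * (dd n) ^ 2)
    (sstar sstarstar : ℝ)
    (hsstar : sstar = (1 - Real.sqrt (1 - 2 * a)) / a)
    (hsstarstar : sstarstar = (1 + Real.sqrt (1 - 2 * a)) / a) :
    ∃ x : ℕ → E, x 0 = x₀ ∧
      (∀ n, ∃ e : E ≃L[ℝ] V, (e : E →L[ℝ] V) = F' (x n) ∧
        ‖(e.symm : V →L[ℝ] E)‖ ≤ aa n * B ∧
        x (n + 1) = x n - e.symm (F (x n))) ∧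
      ∃ xs : E, Filter.Tendsto x Filter.atTop (nhds xs) ∧ F xs = 0 ∧
        (∀ n, ‖x (n + 1) - x n‖ ≤ dd n * η) ∧
        ‖xs - x₀‖ ≤ sstar * η ∧
        (∀ n, 1 ≤ n → ‖xs - x n‖ ≤ (sstar - ∑ k ∈ Finset.range n, dd k) * η) ∧
        (∀ z : E, ‖z - x₀‖ < sstarstar * η → F z = 0 → z = xs) := by
  -- ### scalar setup
  have ha : 0 < a := by rw [haK]; positivity
  have h2a : (0:ℝ) ≤ 1 - 2 * a := by linarith only [hKant]
  obtain ⟨c, hcdef⟩ : ∃ c : ℝ, c = Real.sqrt (1 - 2 * a) := ⟨_, rfl⟩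
  rw [← hcdef] at hsstar hsstarstar
  have hc0 : 0 ≤ c := hcdef ▸ Real.sqrt_nonneg _
  have hc2 : c ^ 2 = 1 - 2 * a := hcdef ▸ Real.sq_sqrt h2a
  have hc1 : c < 1 := by
    by_contra h
    push_neg at h
    have h2 : (1:ℝ) ≤ c * c := by
      calc (1:ℝ) = 1 * 1 := by ring
      _ ≤ c * c := mul_le_mul h h zero_le_one hc0
    have h3 : c ^ 2 = c * c := sq c
    linarith only [h2, hc2, ha, h3]
  have hs1 : a * sstar = 1 - c := by rw [hsstar]; field_simp
  have hs2 : a * sstarstar = 1 + c := by rw [hsstarstar]; field_simp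
  have hsp : 0 < sstar := by
    rw [hsstar]; exact div_pos (by linarith only [hc1]) ha
  have hsp2 : 0 < sstarstar := by
    rw [hsstarstar]; exact div_pos (by linarith only [hc0]) ha
  have hss : sstar ≤ sstarstar := by
    have h : a * sstar ≤ a * sstarstar := by rw [hs1, hs2]; linarith only [hc0]
    exact le_of_mul_le_mul_left h ha
  have hprod : a * (sstar * sstarstar) = 2 := by
    have h : (a * sstar) * (a * sstarstar) = (1 - c) * (1 + c) := by rw [hs1, hs2]
    apply mul_left_cancel₀ ha.ne'
    linear_combination h - hc2
  have hsum : a * (sstar + sstarstar) = 2 := by linear_combination hs1 + hs2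
  obtain ⟨t, htsum, ht0, tsucc⟩ : ∃ t : ℕ → ℝ,
      (∀ n, t n = ∑ k ∈ Finset.range n, dd k) ∧ t 0 = 0 ∧
      ∀ n, t (n + 1) = t n + dd n :=
    ⟨fun n => ∑ k ∈ Finset.range n, dd k, fun _ => rfl, by simp,
      fun n => Finset.sum_range_succ dd n⟩
  -- positivity of 1 - a * s for s < sstar
  have hD : ∀ s : ℝ, 0 < sstar - s → 0 < 1 - a * s := by
    intro s hs
    have h : 1 - a * s = c + a * (sstar - s) := by linear_combination -hs1
    rw [h]; positivity
  have posdiv : ∀ u v : ℝ, 0 < u * v → 0 < v → 0 < u := fun u v h hv =>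
    (mul_pos_iff.mp h).elim (fun h' => h'.1) (fun h' => absurd hv (not_lt.mpr h'.2.le))
  -- ### main scalar induction
  have BASIC : ∀ n, 0 ≤ t n ∧ 0 < sstar - t n ∧ 0 < aa n ∧ 0 < dd n ∧
      aa n * (1 - a * t n) = 1 ∧
      dd n * (1 - a * t n) = a / 2 * ((sstar - t n) * (sstarstar - t n)) := by
    intro n
    induction n with
    | zero =>
      refine ⟨le_of_eq ht0.symm, by rw [ht0]; linarith only [hsp], by rw [ha0]; norm_num,
        by rw [hd0]; norm_num, by rw [ht0, ha0]; ring, ?_⟩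
      rw [ht0, hd0]; linear_combination (-1/2 : ℝ) * hprod
    | succ n ih =>
      obtain ⟨hT, hU, hA, hDd, hB1, hC1⟩ := ih
      have hDpos : 0 < 1 - a * t n := hD _ hU
      have hV : 0 < sstarstar - t n := by linarith only [hU, hss]
      -- forward identities
      have hFWD1 : (sstar - t (n + 1)) * (1 - a * t n) = a / 2 * (sstar - t n) ^ 2 := by
        rw [tsucc n]
        linear_combination (-1 : ℝ) * hC1 - ((sstar - t n) / 2) * hsum
      have hFWD2 : (sstarstar - t (n + 1)) * (1 - a * t n)
          = a / 2 * (sstarstar - t n) ^ 2 := by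
        rw [tsucc n]
        linear_combination (-1 : ℝ) * hC1 - ((sstarstar - t n) / 2) * hsum
      have hU' : 0 < sstar - t (n + 1) := by
        refine posdiv _ _ ?_ hDpos
        rw [hFWD1]
        exact mul_pos (half_pos ha) (pow_pos hU 2)
      have hV' : 0 < sstarstar - t (n + 1) := by linarith only [hU', hss]
      have hT' : 0 ≤ t (n + 1) := by rw [tsucc n]; linarith only [hT, hDd]
      have hDpos' : 0 < 1 - a * t (n + 1) := hD _ hU'
      have hkap : 1 - a * aa n * dd n = (1 - a * t (n + 1)) * aa n := by
        rw [tsucc n]; linear_combination (-1 : ℝ) * hB1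
      have hkpos : 0 < 1 - a * aa n * dd n := by
        rw [hkap]; positivity
      have hB' : aa (n + 1) * (1 - a * t (n + 1)) = 1 := by
        rw [haa n, hkap, div_mul_eq_mul_div,
          div_eq_one_iff_eq (by positivity : ((1 - a * t (n+1)) * aa n) ≠ 0)]
        ring
      have hA' : 0 < aa (n + 1) := by
        refine posdiv _ _ ?_ hDpos'
        rw [hB']; exact one_pos
      have huv : (sstar - t (n + 1)) * (sstarstar - t (n + 1)) = dd n ^ 2 := by
        apply mul_right_cancel₀ (pow_ne_zero 2 hDpos.ne')
        linear_combination ((sstarstar - t (n + 1)) * (1 - a * t n)) * hFWD1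
          + (a / 2 * (sstar - t n) ^ 2) * hFWD2
          - (dd n * (1 - a * t n) + a / 2 * ((sstar - t n) * (sstarstar - t n))) * hC1
      have hC' : dd (n + 1) * (1 - a * t (n + 1))
          = a / 2 * ((sstar - t (n + 1)) * (sstarstar - t (n + 1))) := by
        rw [hdd n, huv]
        linear_combination (a / 2 * dd n ^ 2) * hB'
      have hDd' : 0 < dd (n + 1) := by
        refine posdiv _ _ ?_ hDpos'
        rw [hC']
        exact mul_pos (half_pos ha) (mul_pos hU' hV')
      exact ⟨hT', hU', hA', hDd', hB', hC'⟩

  -- convenience accessors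
  have hDpos : ∀ n, 0 < 1 - a * t n := fun n => hD _ (BASIC n).2.1
  have haapos : ∀ n, 0 < aa n := fun n => (BASIC n).2.2.1
  have hddpos : ∀ n, 0 < dd n := fun n => (BASIC n).2.2.2.1
  have hFWD : ∀ n, (sstar - t (n + 1)) * (1 - a * t n) = a / 2 * (sstar - t n) ^ 2 ∧
      (sstarstar - t (n + 1)) * (1 - a * t n) = a / 2 * (sstarstar - t n) ^ 2 := by
    intro n
    obtain ⟨hT, hU, hA, hDd, hB1, hC1⟩ := BASIC n
    constructor
    · rw [tsucc n]
      linear_combination (-1 : ℝ) * hC1 - ((sstar - t n) / 2) * hsum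
    · rw [tsucc n]
      linear_combination (-1 : ℝ) * hC1 - ((sstarstar - t n) / 2) * hsum
  have hkap : ∀ n, 1 - a * aa n * dd n = (1 - a * t (n + 1)) * aa n := by
    intro n
    rw [tsucc n]
    linear_combination (-1 : ℝ) * (BASIC n).2.2.2.2.1
  have hkpos : ∀ n, 0 < 1 - a * aa n * dd n := by
    intro n
    rw [hkap n]
    exact mul_pos (hDpos (n + 1)) (haapos n)
  -- geometric decay of sstar - t n
  have hhalf : ∀ n, sstar - t (n + 1) ≤ 1 / 2 * (sstar - t n) := by
    intro n
    have hU := (BASIC n).2.1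
    have h1 := (hFWD n).1
    have hc' : 1 - a * t n - a * (sstar - t n) = c := by linear_combination -hs1
    have h2 : a / 2 * (sstar - t n) ^ 2 ≤ 1 / 2 * (sstar - t n) * (1 - a * t n) := by
      have h3 : 0 ≤ (sstar - t n) / 2 * c := by positivity
      nlinarith [h3, hc', hU]
    rw [← h1] at h2
    exact le_of_mul_le_mul_right h2 (hDpos n)
  have hgeo : ∀ n, sstar - t n ≤ sstar * (1 / 2) ^ n := by
    intro n
    induction n with
    | zero => rw [ht0]; norm_num
    | succ n ih =>
      calc sstar - t (n + 1) ≤ 1 / 2 * (sstar - t n) := hhalf n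
        _ ≤ 1 / 2 * (sstar * (1 / 2) ^ n) := by linarith only [ih]
        _ = sstar * (1 / 2) ^ (n + 1) := by ring
  have htend : Filter.Tendsto t Filter.atTop (nhds sstar) := by
    have h0 : Filter.Tendsto (fun n : ℕ => sstar - t n) Filter.atTop (nhds 0) := by
      apply squeeze_zero (fun n => (BASIC n).2.1.le) hgeo
      have := tendsto_pow_atTop_nhds_zero_of_lt_one (by norm_num : (0:ℝ) ≤ 1/2)
        (by norm_num : (1:ℝ)/2 < 1)
      simpa using this.const_mul sstar
    have h1 := tendsto_const_nhds (x := sstar) (f := Filter.atTop (α := ℕ)) |>.sub h0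
    simpa using h1
  have hsummable : Summable dd := by
    apply summable_of_sum_range_le (fun n => (hddpos n).le)
    intro n
    have := (BASIC n).2.1
    rw [← htsum n]
    linarith only [this]
  have hhasSum : HasSum dd sstar :=
    (hasSum_iff_tendsto_nat_of_nonneg (fun n => (hddpos n).le) sstar).mpr
      (by simpa only [← htsum] using htend)
  -- ### the Newton sequence
  obtain ⟨x, hx0, hxs⟩ : ∃ x : ℕ → E, x 0 = x₀ ∧
      ∀ n, x (n + 1) = x n - (F' (x n)).inverse (F (x n)) :=
    ⟨newtonSeq F F' x₀, rfl, fun n => rfl⟩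
  have hLip : ∀ u v : E, ‖F' v - F' u‖ ≤ K₂ * ‖v - u‖ := fun u v =>
    Convex.norm_image_sub_le_of_norm_hasFDerivWithin_le
      (fun z _ => (hF'' z).hasFDerivWithinAt) (fun z _ => hbound z)
      convex_univ (Set.mem_univ u) (Set.mem_univ v)
  have taylor := taylor2 F F' K₂ hF' hLip
  -- the Taylor step bound, given invertibility data at n
  have taylor_step : ∀ (n : ℕ) (e : E ≃L[ℝ] V), (e : E →L[ℝ] V) = F' (x n) →
      ‖x (n + 1) - x n‖ ≤ dd n * η → ‖F (x (n + 1))‖ ≤ K₂ / 2 * (dd n * η) ^ 2 := by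
    intro n e he hle
    have hstep_eq : x (n + 1) - x n = -(e.symm (F (x n))) := by
      rw [hxs n, ← he, ContinuousLinearMap.inverse_equiv]
      exact sub_sub_cancel_left _ _
    have h0 : F' (x n) (x (n + 1) - x n) = -(F (x n)) := by
      rw [hstep_eq, ← he]
      simp
    have h1 := taylor (x n) (x (n + 1))
    rw [h0, sub_neg_eq_add, sub_add_cancel] at h1
    refine h1.trans ?_
    have h2 : ‖x (n + 1) - x n‖ ^ 2 ≤ (dd n * η) ^ 2 :=
      pow_le_pow_left₀ (norm_nonneg _) hle 2
    have hK2 : 0 ≤ K₂ / 2 := by positivity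
    exact mul_le_mul_of_nonneg_left h2 hK2
  -- ### the main induction
  have key : ∀ n, ∃ e : E ≃L[ℝ] V, (e : E →L[ℝ] V) = F' (x n) ∧
      ‖(e.symm : V →L[ℝ] E)‖ ≤ aa n * B ∧
      x (n + 1) = x n - e.symm (F (x n)) ∧
      ‖x (n + 1) - x n‖ ≤ dd n * η := by
    intro n
    induction n with
    | zero =>
      refine ⟨e₀, by rw [hx0]; exact he₀, by rw [ha0, one_mul]; exact hBinv, ?_, ?_⟩
      · rw [hxs 0, hx0, ← he₀, ContinuousLinearMap.inverse_equiv]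
        rfl
      · have h1 : x 1 - x 0 = -((e₀.symm : V →L[ℝ] E) (F x₀)) := by
          rw [hxs 0, hx0, ← he₀, ContinuousLinearMap.inverse_equiv]
          exact sub_sub_cancel_left _ _
        rw [h1, norm_neg, hd0, one_mul]
        simpa using hη'
    | succ n ih =>
      obtain ⟨e, he, hesymm, heq, hstep⟩ := ih
      have hFx' : ‖F (x (n + 1))‖ ≤ K₂ / 2 * (dd n * η) ^ 2 := taylor_step n e he hstep
      have hΔ : ‖F' (x (n + 1)) - F' (x n)‖ ≤ K₂ * (dd n * η) := by
        refine (hLip (x n) (x (n + 1))).trans ?_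
        exact mul_le_mul_of_nonneg_left hstep hK₂.le
      set w : E →L[ℝ] E := (e.symm : V →L[ℝ] E).comp (F' (x (n + 1)) - F' (x n)) with hw
      have hwle : ‖w‖ ≤ a * aa n * dd n := by
        have h1 : ‖w‖ ≤ ‖(e.symm : V →L[ℝ] E)‖ * ‖F' (x (n + 1)) - F' (x n)‖ :=
          ContinuousLinearMap.opNorm_comp_le _ _
        have h2 : ‖(e.symm : V →L[ℝ] E)‖ * ‖F' (x (n + 1)) - F' (x n)‖
            ≤ (aa n * B) * (K₂ * (dd n * η)) :=
          mul_le_mul hesymm hΔ (norm_nonneg _)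
            (mul_pos (haapos n) hB).le
        refine (h1.trans h2).trans (le_of_eq ?_)
        rw [haK]; ring
      have hwlt : ‖w‖ < 1 := by
        refine lt_of_le_of_lt hwle ?_
        linarith only [hkpos n]
      have hnw : ‖-w‖ < 1 := by rwa [norm_neg]
      set U := Units.oneSub (-w) hnw with hUdef
      set Q : E →L[ℝ] E := ((U⁻¹ : (E →L[ℝ] E)ˣ) : E →L[ℝ] E) with hQdef
      have hUval : ((U : (E →L[ℝ] E)ˣ) : E →L[ℝ] E) = 1 + w := by
        rw [hUdef, Units.val_oneSub, sub_neg_eq_add]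
      have hfact : ∀ v : E, F' (x (n + 1)) v = e ((1 + w) v) := by
        intro v
        have h6 : (1 + w) v = v + e.symm ((F' (x (n + 1)) - F' (x n)) v) := rfl
        rw [h6, map_add, e.apply_symm_apply, ContinuousLinearMap.sub_apply]
        have h7 : (e : E →L[ℝ] V) v = F' (x n) v := by rw [he]
        have h8 : e v = (e : E →L[ℝ] V) v := rfl
        rw [h8, h7]
        abel
      have hQU : ∀ v : E, Q (((U : (E →L[ℝ] E)ˣ) : E →L[ℝ] E) v) = v := by
        intro v
        have h := U.inv_mul
        calc Q (((U : (E →L[ℝ] E)ˣ) : E →L[ℝ] E) v)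
            = ((((U⁻¹ : (E →L[ℝ] E)ˣ) : E →L[ℝ] E)) * ((U : (E →L[ℝ] E)ˣ) : E →L[ℝ] E)) v := rfl
          _ = v := by rw [h]; rfl
      have hUQ : ∀ v : E, ((U : (E →L[ℝ] E)ˣ) : E →L[ℝ] E) (Q v) = v := by
        intro v
        have h := U.mul_inv
        calc ((U : (E →L[ℝ] E)ˣ) : E →L[ℝ] E) (Q v)
            = ((((U : (E →L[ℝ] E)ˣ) : E →L[ℝ] E)) * (((U⁻¹ : (E →L[ℝ] E)ˣ) : E →L[ℝ] E))) v := rfl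
          _ = v := by rw [h]; rfl
      have hQbound : ‖Q‖ * (1 - ‖w‖) ≤ 1 := by
        have h := U.mul_inv
        rw [hUval] at h
        have h' : Q + w * Q = 1 := by
          rw [← h]
          have : ((1 + w) : E →L[ℝ] E) * Q = Q + w * Q := by
            rw [add_mul, one_mul]
          rw [this]
        have h2 : Q = 1 - w * Q := eq_sub_of_add_eq h'
        have h4 : ‖Q‖ ≤ 1 + ‖w‖ * ‖Q‖ := by
          calc ‖Q‖ = ‖(1 : E →L[ℝ] E) - w * Q‖ := by rw [← h2]
            _ ≤ ‖(1 : E →L[ℝ] E)‖ + ‖w * Q‖ := norm_sub_le _ _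
            _ ≤ 1 + ‖w‖ * ‖Q‖ := by
                refine add_le_add ?_ (norm_mul_le _ _)
                rw [ContinuousLinearMap.one_def]
                exact ContinuousLinearMap.norm_id_le
        linarith only [h4]
      set e' : E ≃L[ℝ] V := ContinuousLinearEquiv.equivOfInverse (F' (x (n + 1)))
        (Q.comp (e.symm : V →L[ℝ] E))
        (by
          intro v
          have h5 : (e.symm : V →L[ℝ] E) (F' (x (n + 1)) v) = (1 + w) v := by
            rw [hfact v]
            exact e.symm_apply_apply _
          calc (Q.comp (e.symm : V →L[ℝ] E)) (F' (x (n + 1)) v)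
              = Q ((e.symm : V →L[ℝ] E) (F' (x (n + 1)) v)) := rfl
            _ = Q (((U : (E →L[ℝ] E)ˣ) : E →L[ℝ] E) v) := by rw [h5, hUval]
            _ = v := hQU v)
        (by
          intro v
          calc F' (x (n + 1)) ((Q.comp (e.symm : V →L[ℝ] E)) v)
              = e ((1 + w) (Q ((e.symm : V →L[ℝ] E) v))) := hfact _
            _ = e (((U : (E →L[ℝ] E)ˣ) : E →L[ℝ] E) (Q ((e.symm : V →L[ℝ] E) v))) := by
                rw [hUval]
            _ = e ((e.symm : V →L[ℝ] E) v) := by rw [hUQ]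
            _ = v := e.apply_symm_apply v)
        with he'def
      have he' : (e' : E →L[ℝ] V) = F' (x (n + 1)) := rfl
      have he'symm : (e'.symm : V →L[ℝ] E) = Q.comp (e.symm : V →L[ℝ] E) := rfl
      have hesymm' : ‖(e'.symm : V →L[ℝ] E)‖ ≤ aa (n + 1) * B := by
        rw [he'symm]
        have h1 : ‖Q.comp (e.symm : V →L[ℝ] E)‖ ≤ ‖Q‖ * ‖(e.symm : V →L[ℝ] E)‖ :=
          ContinuousLinearMap.opNorm_comp_le _ _
        have hκ : 0 < 1 - a * aa n * dd n := hkpos n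
        have h2 : ‖Q‖ ≤ 1 / (1 - a * aa n * dd n) := by
          rw [le_div_iff₀ hκ]
          refine le_trans ?_ hQbound
          refine mul_le_mul_of_nonneg_left ?_ (norm_nonneg _)
          linarith only [hwle]
        have h3 : ‖Q‖ * ‖(e.symm : V →L[ℝ] E)‖
            ≤ (1 / (1 - a * aa n * dd n)) * (aa n * B) :=
          mul_le_mul h2 hesymm (norm_nonneg _) (by positivity)
        refine (h1.trans h3).trans (le_of_eq ?_)
        rw [haa n]
        field_simp
      refine ⟨e', he', hesymm', ?_, ?_⟩
      · rw [hxs (n + 1), ← he', ContinuousLinearMap.inverse_equiv]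
        rfl
      · have hstep_eq : x (n + 2) - x (n + 1) = -((e'.symm : V →L[ℝ] E) (F (x (n + 1)))) := by
          rw [hxs (n + 1), ← he', ContinuousLinearMap.inverse_equiv]
          exact sub_sub_cancel_left _ _
        rw [hstep_eq, norm_neg]
        have h1 : ‖e'.symm (F (x (n + 1)))‖ ≤ ‖(e'.symm : V →L[ℝ] E)‖ * ‖F (x (n + 1))‖ :=
          (e'.symm : V →L[ℝ] E).le_opNorm _
        have h2 : ‖(e'.symm : V →L[ℝ] E)‖ * ‖F (x (n + 1))‖
            ≤ (aa (n + 1) * B) * (K₂ / 2 * (dd n * η) ^ 2) := by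
          refine mul_le_mul hesymm' hFx' (norm_nonneg _) ?_
          have := haapos (n + 1)
          positivity
        refine (h1.trans h2).trans (le_of_eq ?_)
        rw [hdd n, haK]
        ring
  choose ee hee heesymm heeq heest using key
  -- ### convergence
  have hcau : CauchySeq x := by
    refine cauchySeq_of_dist_le_of_summable (fun n => dd n * η) ?_ (hsummable.mul_right η)
    intro n
    rw [dist_eq_norm, norm_sub_rev]
    exact heest n
  obtain ⟨xs, hxst⟩ := cauchySeq_tendsto_of_complete hcau
  have herr : ∀ n, ‖xs - x n‖ ≤ (sstar - t n) * η := by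
    intro n
    have h := dist_le_tsum_of_dist_le_of_tendsto (fun n => dd n * η)
      (fun n => by rw [dist_eq_norm, norm_sub_rev]; exact heest n)
      (hsummable.mul_right η) hxst n
    have htsum2 : ∑' m, dd (n + m) * η = (sstar - t n) * η := by
      have h1 := Summable.sum_add_tsum_nat_add (f := dd) n hsummable
      rw [hhasSum.tsum_eq] at h1
      have h2 : ∑' m, dd (n + m) * η = (∑' m, dd (m + n)) * η := by
        rw [← tsum_mul_right]
        congr 1
        ext m
        rw [add_comm]
      have h3 : ∑' (i : ℕ), dd (i + n) = sstar - ∑ i ∈ Finset.range n, dd i := by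
        linarith only [h1]
      rw [h2, h3, ← htsum n]
    rw [← htsum2]
    calc ‖xs - x n‖ = dist (x n) xs := by rw [dist_eq_norm, norm_sub_rev]
      _ ≤ ∑' m, dd (n + m) * η := h
  -- F xs = 0
  have hddto0 : Filter.Tendsto dd Filter.atTop (nhds 0) := hsummable.tendsto_atTop_zero
  have hFto0 : Filter.Tendsto (fun n => F (x (n + 1))) Filter.atTop (nhds 0) := by
    rw [tendsto_zero_iff_norm_tendsto_zero]
    apply squeeze_zero (fun n => norm_nonneg _)
      (fun n => taylor_step n (ee n) (hee n) (heest n))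
    have h1 : Filter.Tendsto (fun n => dd n * η) Filter.atTop (nhds 0) := by
      simpa using hddto0.mul_const η
    have h2 : Filter.Tendsto (fun n => (dd n * η) ^ 2) Filter.atTop (nhds 0) := by
      have := h1.pow 2
      simpa using this
    simpa using h2.const_mul (K₂ / 2)
  have hFxs : F xs = 0 := by
    have hcont : Filter.Tendsto (fun n => F (x (n + 1))) Filter.atTop (nhds (F xs)) :=
      (hF' xs).continuousAt.tendsto.comp (hxst.comp (tendsto_add_atTop_nat 1))
    exact tendsto_nhds_unique hcont hFto0
  -- ### uniqueness
  have huniq : ∀ z : E, ‖z - x₀‖ < sstarstar * η → F z = 0 → z = xs := by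
    intro z hz hFz
    have hsse : 0 < sstarstar * η := by positivity
    set ρ := ‖z - x₀‖ / (sstarstar * η) with hρ
    have hρ0 : 0 ≤ ρ := by positivity
    have hρ1 : ρ < 1 := (div_lt_one hsse).mpr hz
    have claim : ∀ n, ‖z - x n‖ ≤ ρ ^ (n + 1) * ((sstarstar - t n) * η) := by
      intro n
      induction n with
      | zero =>
        rw [ht0, hx0, pow_one, sub_zero, hρ]
        rw [div_mul_cancel₀ _ hsse.ne']
      | succ n ih =>
        have hVn : 0 < sstarstar - t n := by
          linarith only [(BASIC n).2.1, hss]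
        have hVn' : 0 < sstarstar - t (n + 1) := by
          linarith only [(BASIC (n + 1)).2.1, hss]
        -- z - x (n+1) = -(e.symm (F z - F (x n) - F' (x n) (z - x n)))
        have hsymmF : ∀ u : E, (ee n).symm ((F' (x n)) u) = u := by
          intro u
          rw [← hee n]
          exact (ee n).symm_apply_apply u
        have hstep_eq : z - x (n + 1)
            = -((ee n).symm (F z - F (x n) - F' (x n) (z - x n))) := by
          rw [heeq n, hFz, map_sub, map_sub, map_zero, hsymmF]
          abel
        have hn1 : ‖z - x (n + 1)‖
            ≤ (aa n * B) * (K₂ / 2 * ‖z - x n‖ ^ 2) := by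
          rw [hstep_eq, norm_neg]
          have h1 : ‖(ee n).symm (F z - F (x n) - F' (x n) (z - x n))‖
              ≤ ‖((ee n).symm : V →L[ℝ] E)‖ * ‖F z - F (x n) - F' (x n) (z - x n)‖ :=
            ((ee n).symm : V →L[ℝ] E).le_opNorm _
          refine h1.trans ?_
          refine mul_le_mul (heesymm n) (taylor (x n) z) (norm_nonneg _) ?_
          have := haapos n
          positivity
        have hsq : ‖z - x n‖ ^ 2 ≤ (ρ ^ (n + 1) * ((sstarstar - t n) * η)) ^ 2 :=
          pow_le_pow_left₀ (norm_nonneg _) ih 2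
        have hn2 : ‖z - x (n + 1)‖
            ≤ (aa n * B) * (K₂ / 2 * (ρ ^ (n + 1) * ((sstarstar - t n) * η)) ^ 2) := by
          refine hn1.trans ?_
          refine mul_le_mul_of_nonneg_left ?_ (mul_pos (haapos n) hB).le
          exact mul_le_mul_of_nonneg_left hsq (by positivity)
        -- identity: a/2 * ((sstarstar - t n)^2 * aa n) = sstarstar - t (n+1)
        have hid : a / 2 * ((sstarstar - t n) ^ 2 * aa n) = sstarstar - t (n + 1) := by
          apply mul_right_cancel₀ (hDpos n).ne'
          linear_combination (a / 2 * (sstarstar - t n) ^ 2) * (BASIC n).2.2.2.2.1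
            - (hFWD n).2
        rw [haK] at hid
        have heq2 : (aa n * B) * (K₂ / 2 * (ρ ^ (n + 1) * ((sstarstar - t n) * η)) ^ 2)
            = (ρ ^ (n + 1)) ^ 2 * ((sstarstar - t (n + 1)) * η) := by
          linear_combination ((ρ ^ (n + 1)) ^ 2 * η) * hid
        have hmono : (ρ ^ (n + 1)) ^ 2 * ((sstarstar - t (n + 1)) * η)
            ≤ ρ ^ (n + 1 + 1) * ((sstarstar - t (n + 1)) * η) := by
          refine mul_le_mul_of_nonneg_right ?_ (by positivity)
          rw [← pow_mul]
          exact pow_le_pow_of_le_one hρ0 hρ1.le (by omega)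
        rw [heq2] at hn2
        exact hn2.trans hmono
    have hto0 : Filter.Tendsto (fun n => ‖z - x n‖) Filter.atTop (nhds 0) := by
      apply squeeze_zero (fun n => norm_nonneg _)
        (fun n => (claim n).trans
          (mul_le_mul_of_nonneg_left
            (mul_le_mul_of_nonneg_right (by linarith only [(BASIC n).1] :
              sstarstar - t n ≤ sstarstar) hη.le)
            (pow_nonneg hρ0 _)))
      have h1 : Filter.Tendsto (fun n : ℕ => ρ ^ (n + 1)) Filter.atTop (nhds 0) :=
        (tendsto_pow_atTop_nhds_zero_of_lt_one hρ0 hρ1).comp (tendsto_add_atTop_nat 1)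
      simpa using h1.mul_const (sstarstar * η)
    have hxz : Filter.Tendsto x Filter.atTop (nhds z) := by
      rw [tendsto_iff_norm_sub_tendsto_zero]
      have hswap : (fun n => ‖x n - z‖) = fun n => ‖z - x n‖ := by
        funext n
        rw [norm_sub_rev]
      rw [hswap]
      exact hto0
    exact tendsto_nhds_unique hxz hxst
  -- ### assemble
  refine ⟨x, hx0, fun n => ⟨ee n, hee n, heesymm n, heeq n⟩, xs, hxst, hFxs, heest, ?_, ?_, huniq⟩
  · have h0 := herr 0
    rw [ht0, hx0] at h0
    simpa using h0
  · intro n _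
    rw [← htsum n]
    exact herr n
end

section
/- Let 0 < a ≤ 1/2, q(s) = (a/2)s² − s + 1 and s* = (1 − √(1 − 2a))/a. Define the Steffensen sequence by s_0 = 0 and s_{n+1} = s_n − q(s_n)/q[s_n, s_n + q(s_n)], and the Newton sequence by t_0 = 0 and t_{n+1} = t_n − q(t_n)/q'(t_n). Then (s_n) is monotonically increasing and converges to s*, and for all n ≥ 0 one has 0 ≤ t_n ≤ s_n ≤ s*. -/
lemma aux_qnn (a s x : ℝ) (ha : 0 < a) (hs1 : a * s ≤ 1)
    (hqs : a / 2 * s ^ 2 - s + 1 = 0) (hx0 : 0 ≤ x) (hxs : x ≤ s) :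
    0 ≤ a / 2 * x ^ 2 - x + 1 := by
  have h2 : 0 ≤ 1 - a / 2 * (x + s) := by
    nlinarith [mul_le_mul_of_nonneg_left hxs ha.le]
  nlinarith [mul_nonneg (sub_nonneg.2 hxs) h2]

lemma aux_root (a s x : ℝ) (ha : 0 < a) (hs1 : a * s ≤ 1)
    (hqs : a / 2 * s ^ 2 - s + 1 = 0) (hx0 : 0 ≤ x) (hxs : x ≤ s)
    (hq0 : a / 2 * x ^ 2 - x + 1 = 0) : x = s := by
  rcases eq_or_lt_of_le hxs with h | h
  · exact h
  · exfalso
    have h2 : 0 < 1 - a / 2 * (x + s) := by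
      nlinarith [mul_pos ha (sub_pos.2 h)]
    nlinarith [mul_pos (sub_pos.2 h) h2]




lemma aux_stef (a s x : ℝ) (ha : 0 < a) (hs1 : a * s ≤ 1)
    (hqs : a / 2 * s ^ 2 - s + 1 = 0) (hx0 : 0 ≤ x) (hxs : x ≤ s) :
    x ≤ x - (a / 2 * x ^ 2 - x + 1) /
        ((a / 2 * (x + (a / 2 * x ^ 2 - x + 1)) ^ 2 - (x + (a / 2 * x ^ 2 - x + 1)) + 1
            - (a / 2 * x ^ 2 - x + 1)) / (x + (a / 2 * x ^ 2 - x + 1) - x)) ∧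
    x - (a / 2 * x ^ 2 - x + 1) /
        ((a / 2 * (x + (a / 2 * x ^ 2 - x + 1)) ^ 2 - (x + (a / 2 * x ^ 2 - x + 1)) + 1
            - (a / 2 * x ^ 2 - x + 1)) / (x + (a / 2 * x ^ 2 - x + 1) - x)) ≤ s ∧
    s - (x - (a / 2 * x ^ 2 - x + 1) /
        ((a / 2 * (x + (a / 2 * x ^ 2 - x + 1)) ^ 2 - (x + (a / 2 * x ^ 2 - x + 1)) + 1
            - (a / 2 * x ^ 2 - x + 1)) / (x + (a / 2 * x ^ 2 - x + 1) - x))) ≤ (s - x) / 2 := by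
  have hc : 0 ≤ a / 2 * x ^ 2 - x + 1 := aux_qnn a s x ha hs1 hqs hx0 hxs
  rcases eq_or_lt_of_le hc with h0 | h0
  · have hx : x = s := aux_root a s x ha hs1 hqs hx0 hxs h0.symm
    rw [← h0]
    subst hx
    norm_num
  · have hy : x + (a / 2 * x ^ 2 - x + 1) ≤ s := by
      nlinarith [mul_self_le_mul_self hx0 hxs]
    have hxlt : x < s := by
      rcases lt_or_eq_of_le hxs with h | h
      · exact h
      · exfalso; rw [h] at h0; nlinarith
    have hd : a * x + a / 2 * (a / 2 * x ^ 2 - x + 1) - 1 < 0 := by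
      nlinarith [mul_pos ha (sub_pos.2 hxlt), mul_nonneg ha.le (sub_nonneg.2 hy)]
    have hu : (0:ℝ) ≤ s - x := by linarith
    have hv : (0:ℝ) ≤ s - x - (a / 2 * x ^ 2 - x + 1) := by linarith
    have hA : (s - x) * (a * x + a / 2 * (a / 2 * x ^ 2 - x + 1) - 1)
        + (a / 2 * x ^ 2 - x + 1) ≤ 0 := by
      nlinarith [mul_nonneg (mul_nonneg ha.le hu) hv]
    have h3 : (0:ℝ) ≤ 1 - a * s + a / 2 * (a / 2 * x ^ 2 - x + 1) := by
      nlinarith [mul_nonneg ha.le hc]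
    have hB : (0:ℝ) ≤ (s - x) * (a * x + a / 2 * (a / 2 * x ^ 2 - x + 1) - 1) / 2
        + (a / 2 * x ^ 2 - x + 1) := by
      nlinarith [mul_nonneg hu h3]
    obtain ⟨c, hcdef⟩ : ∃ c, a / 2 * x ^ 2 - x + 1 = c := ⟨_, rfl⟩
    rw [hcdef] at hc h0 hy hd hA hB ⊢
    obtain ⟨d, hddef⟩ : ∃ d, a * x + a / 2 * c - 1 = d := ⟨_, rfl⟩
    rw [hddef] at hd hA hB
    have hsub1 : x + c - x = c := by ring
    have hsub2 : a / 2 * (x + c) ^ 2 - (x + c) + 1 - c = c * d := by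
      rw [← hddef, ← hcdef]; ring
    rw [hsub1, hsub2, mul_div_cancel_left₀ d (ne_of_gt h0)]
    have hdn : (0:ℝ) < -d := by linarith
    have h1 : c / (-d) ≤ s - x := by
      rw [div_le_iff₀ hdn]; nlinarith [hA]
    have h2 : (s - x) / 2 ≤ c / (-d) := by
      rw [le_div_iff₀ hdn]; nlinarith [hB]
    have h4 : 0 ≤ c / (-d) := div_nonneg hc hdn.le
    have h5 : c / d = -(c / (-d)) := by rw [div_neg, neg_neg]
    refine ⟨by linarith, by linarith, by linarith⟩



lemma aux_newton (a s t : ℝ) (ha : 0 < a) (hs1 : a * s ≤ 1)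
    (hqs : a / 2 * s ^ 2 - s + 1 = 0) (hts : t ≤ s) :
    t - (a / 2 * t ^ 2 - t + 1) / (a * t - 1)
      = s - a / 2 * (s - t) ^ 2 / (1 - a * t) := by
  by_cases h : a * t - 1 = 0
  · have hts' : a * t = a * s := by
      have := mul_le_mul_of_nonneg_left hts ha.le
      linarith
    have hts'' : t = s := mul_left_cancel₀ (ne_of_gt ha) hts'
    subst hts''
    rw [hqs]
    simp [h]
  · have h' : 1 - a * t ≠ 0 := by intro hh; apply h; linarith
    have hkey : a / 2 * t ^ 2 - t + 1 = -(a / 2 * (s - t) ^ 2) - (s - t) * (a * t - 1) := by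
      linear_combination hqs
    rw [hkey]
    have h2 : (-(a / 2 * (s - t) ^ 2) - (s - t) * (a * t - 1)) / (a * t - 1)
        = a / 2 * (s - t) ^ 2 / (1 - a * t) - (s - t) := by
      field_simp
      ring
    rw [h2]
    ring

lemma aux_nmono (a s t x : ℝ) (ha : 0 < a) (hs1 : a * s ≤ 1)
    (hqs : a / 2 * s ^ 2 - s + 1 = 0) (ht0 : 0 ≤ t) (htx : t ≤ x) (hxs : x ≤ s) :
    t - (a / 2 * t ^ 2 - t + 1) / (a * t - 1)
      ≤ x - (a / 2 * x ^ 2 - x + 1) / (a * x - 1) := by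
  rw [aux_newton a s t ha hs1 hqs (htx.trans hxs), aux_newton a s x ha hs1 hqs hxs]
  have h1t : 0 ≤ 1 - a * t := by nlinarith [mul_le_mul_of_nonneg_left (htx.trans hxs) ha.le]
  have h1x : 0 ≤ 1 - a * x := by nlinarith [mul_le_mul_of_nonneg_left hxs ha.le]
  rcases eq_or_lt_of_le h1t with h | h
  · -- 1 - a t = 0 → t = s → t = x = s
    have hts : t = s := by
      have h2 := mul_le_mul_of_nonneg_left (htx.trans hxs) ha.le
      have : a * t = a * s := by linarith
      exact mul_left_cancel₀ (ne_of_gt ha) this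
    have hx : x = s := le_antisymm hxs (by linarith [hts ▸ htx])
    rw [hts, hx]
  · rcases eq_or_lt_of_le h1x with h2 | h2
    · have hx : x = s := by
        have : a * x = a * s := by linarith [mul_le_mul_of_nonneg_left hxs ha.le]
        exact mul_left_cancel₀ (ne_of_gt ha) this
      rw [hx]
      have : a / 2 * (s - s) ^ 2 = 0 := by ring
      rw [this, zero_div]
      have : 0 ≤ a / 2 * (s - t) ^ 2 / (1 - a * t) :=
        div_nonneg (by positivity) h1t
      linarith
    · have hkey : a / 2 * (s - x) ^ 2 / (1 - a * x) ≤ a / 2 * (s - t) ^ 2 / (1 - a * t) := by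
        rw [div_le_div_iff₀ h2 h]
        nlinarith [mul_nonneg (mul_nonneg (sub_nonneg.2 hs1)
            (add_nonneg (sub_nonneg.2 (htx.trans hxs)) (sub_nonneg.2 hxs)))
            (sub_nonneg.2 htx),
          mul_nonneg (mul_nonneg (mul_nonneg ha.le (sub_nonneg.2 (htx.trans hxs)))
            (sub_nonneg.2 hxs)) (sub_nonneg.2 htx),
          ha.le]
      linarith

lemma aux_nleqf (a s x : ℝ) (ha : 0 < a) (hs1 : a * s ≤ 1)
    (hqs : a / 2 * s ^ 2 - s + 1 = 0) (hx0 : 0 ≤ x) (hxs : x ≤ s) :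
    x - (a / 2 * x ^ 2 - x + 1) / (a * x - 1) ≤
    x - (a / 2 * x ^ 2 - x + 1) /
        ((a / 2 * (x + (a / 2 * x ^ 2 - x + 1)) ^ 2 - (x + (a / 2 * x ^ 2 - x + 1)) + 1
            - (a / 2 * x ^ 2 - x + 1)) / (x + (a / 2 * x ^ 2 - x + 1) - x)) := by
  have hc : 0 ≤ a / 2 * x ^ 2 - x + 1 := aux_qnn a s x ha hs1 hqs hx0 hxs
  rcases eq_or_lt_of_le hc with h0 | h0
  · rw [← h0]
    norm_num
  · have hy : x + (a / 2 * x ^ 2 - x + 1) ≤ s := by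
      nlinarith [mul_self_le_mul_self hx0 hxs]
    have hxlt : x < s := by
      rcases lt_or_eq_of_le hxs with h | h
      · exact h
      · exfalso; rw [h] at h0; nlinarith
    have hd : a * x + a / 2 * (a / 2 * x ^ 2 - x + 1) - 1 < 0 := by
      nlinarith [mul_pos ha (sub_pos.2 hxlt), mul_nonneg ha.le (sub_nonneg.2 hy)]
    obtain ⟨c, hcdef⟩ : ∃ c, a / 2 * x ^ 2 - x + 1 = c := ⟨_, rfl⟩
    rw [hcdef] at hc h0 hd ⊢
    obtain ⟨d, hddef⟩ : ∃ d, a * x + a / 2 * c - 1 = d := ⟨_, rfl⟩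
    rw [hddef] at hd
    have hsub1 : x + c - x = c := by ring
    have hsub2 : a / 2 * (x + c) ^ 2 - (x + c) + 1 - c = c * d := by
      rw [← hddef, ← hcdef]; ring
    rw [hsub1, hsub2, mul_div_cancel_left₀ d (ne_of_gt h0)]
    have hax : a * x - 1 < 0 := by linarith [hddef, mul_pos ha h0]
    have hdiff : d - (a * x - 1) = a / 2 * c := by rw [← hddef]; ring
    have hne1 : a * x - 1 ≠ 0 := ne_of_lt hax
    have hne2 : d ≠ 0 := ne_of_lt hd
    have key : c / (a * x - 1) - c / d = c * (d - (a * x - 1)) / ((a * x - 1) * d) := by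
      field_simp
    have hnum : 0 ≤ c * (d - (a * x - 1)) := by
      rw [hdiff]; positivity
    have hden : 0 < (a * x - 1) * d := mul_pos_of_neg_of_neg hax hd
    have : 0 ≤ c / (a * x - 1) - c / d := by
      rw [key]; exact div_nonneg hnum hden.le
    linarith






/-- **Steffensen's method dominates Newton's on the adimensional quadratic.**
Let `0 < a ≤ 1/2`, `q(s) = (a/2)s² − s + 1` and `s* = (1 − √(1 − 2a))/a`.  Define the
Steffensen sequence `s₀ = 0`, `s_{n+1} = s_n − q(s_n)/q[s_n, s_n + q(s_n)]` (with
`q[x,y] = (q(y) − q(x))/(y − x)`) and the Newton sequence `t₀ = 0`,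
`t_{n+1} = t_n − q(t_n)/q'(t_n)`.  Then `(s_n)` is monotonically increasing, converges to
`s*`, and `0 ≤ t_n ≤ s_n ≤ s*` for all `n`. -/
theorem stmt_8 (a : ℝ) (ha : 0 < a) (ha' : a ≤ 1 / 2)
    (q : ℝ → ℝ) (hq : q = fun s => a / 2 * s ^ 2 - s + 1)
    (sstar : ℝ) (hsstar : sstar = (1 - Real.sqrt (1 - 2 * a)) / a)
    (s t : ℕ → ℝ) (hs0 : s 0 = 0) (ht0 : t 0 = 0)
    (hsn : ∀ n, s (n + 1) =
      s n - q (s n) / ((q (s n + q (s n)) - q (s n)) / (s n + q (s n) - s n)))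
    (htn : ∀ n, t (n + 1) = t n - q (t n) / deriv q (t n)) :
    Monotone s ∧ Filter.Tendsto s Filter.atTop (nhds sstar) ∧
      ∀ n, 0 ≤ t n ∧ t n ≤ s n ∧ s n ≤ sstar := by
  have hqv : ∀ x, q x = a / 2 * x ^ 2 - x + 1 := fun x => by rw [hq]
  have hderiv : ∀ x, deriv q x = a * x - 1 := by
    intro x
    have hp : HasDerivAt (fun s : ℝ => s ^ 2) (2 * x) x := by
      simpa using hasDerivAt_pow 2 x
    have h2 : HasDerivAt (fun s : ℝ => a / 2 * s ^ 2) (a / 2 * (2 * x)) x :=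
      hp.const_mul (a / 2)
    have h3 : HasDerivAt (fun s : ℝ => a / 2 * s ^ 2 - s) (a / 2 * (2 * x) - 1) x :=
      h2.sub (hasDerivAt_id' x)
    have h4 := h3.add_const 1
    rw [hq]
    rw [h4.deriv]
    ring
  set b := Real.sqrt (1 - 2 * a) with hb
  have hb0 : 0 ≤ b := Real.sqrt_nonneg _
  have hb2 : b ^ 2 = 1 - 2 * a := Real.sq_sqrt (by linarith)
  have ha0 : a ≠ 0 := ne_of_gt ha
  have hab : a * sstar = 1 - b := by rw [hsstar]; field_simp
  have hs1 : a * sstar ≤ 1 := by linarith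
  have hqs : a / 2 * sstar ^ 2 - sstar + 1 = 0 := by
    have h : (2 * a) * (a / 2 * sstar ^ 2 - sstar + 1) = 0 := by
      linear_combination (a * sstar - 1 - b) * hab + hb2
    rcases mul_eq_zero.mp h with h' | h'
    · exfalso; linarith
    · exact h'
  have hsge1 : 1 ≤ sstar := by nlinarith [mul_nonneg ha.le (sq_nonneg sstar)]
  -- main invariant
  have inv : ∀ n, 0 ≤ t n ∧ t n ≤ s n ∧ s n ≤ sstar := by
    intro n
    induction n with
    | zero => rw [hs0, ht0]; exact ⟨le_refl 0, le_refl 0, by linarith⟩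
    | succ n ih =>
      obtain ⟨h1, h2, h3⟩ := ih
      have hsn0 : 0 ≤ s n := h1.trans h2
      have htns : t n ≤ sstar := h2.trans h3
      have hqt : 0 ≤ a / 2 * (t n) ^ 2 - t n + 1 := aux_qnn a sstar (t n) ha hs1 hqs h1 htns
      have hden : a * t n - 1 ≤ 0 := by
        nlinarith [mul_le_mul_of_nonneg_left htns ha.le]
      refine ⟨?_, ?_, ?_⟩
      · rw [htn n, hderiv, hqv]
        have : (a / 2 * (t n) ^ 2 - t n + 1) / (a * t n - 1) ≤ 0 :=
          div_nonpos_of_nonneg_of_nonpos hqt hden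
        linarith
      · rw [htn n, hsn n, hderiv]
        simp only [hqv]
        calc t n - (a / 2 * (t n) ^ 2 - t n + 1) / (a * t n - 1)
            ≤ s n - (a / 2 * (s n) ^ 2 - s n + 1) / (a * s n - 1) :=
              aux_nmono a sstar (t n) (s n) ha hs1 hqs h1 h2 h3
          _ ≤ _ := aux_nleqf a sstar (s n) ha hs1 hqs hsn0 h3
      · rw [hsn n]
        simp only [hqv]
        exact (aux_stef a sstar (s n) ha hs1 hqs hsn0 h3).2.1
  have hmono : ∀ n, s n ≤ s (n + 1) := by
    intro n
    obtain ⟨h1, h2, h3⟩ := inv n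
    rw [hsn n]
    simp only [hqv]
    exact (aux_stef a sstar (s n) ha hs1 hqs (h1.trans h2) h3).1
  have herr : ∀ n, sstar - s (n + 1) ≤ (sstar - s n) / 2 := by
    intro n
    obtain ⟨h1, h2, h3⟩ := inv n
    rw [hsn n]
    simp only [hqv]
    exact (aux_stef a sstar (s n) ha hs1 hqs (h1.trans h2) h3).2.2
  have hbound : ∀ n, sstar - s n ≤ sstar * (1 / 2) ^ n := by
    intro n
    induction n with
    | zero => rw [hs0]; norm_num
    | succ n ih =>
      have := herr n
      rw [pow_succ]
      nlinarith [this, ih]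
  have hhalf : Filter.Tendsto (fun n : ℕ => ((1:ℝ) / 2) ^ n) Filter.atTop (nhds 0) :=
    tendsto_pow_atTop_nhds_zero_of_lt_one (by norm_num) (by norm_num)
  have hlow : Filter.Tendsto (fun n : ℕ => sstar - sstar * (1 / 2) ^ n)
      Filter.atTop (nhds sstar) := by
    have := Filter.Tendsto.const_mul sstar hhalf
    have h2 := Filter.Tendsto.sub (tendsto_const_nhds (x := sstar) (f := Filter.atTop)) this
    simpa using h2
  have hconv : Filter.Tendsto s Filter.atTop (nhds sstar) := by
    apply tendsto_of_tendsto_of_tendsto_of_le_of_le hlow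
      (tendsto_const_nhds (x := sstar) (f := Filter.atTop))
    · intro n; linarith [hbound n]
    · intro n; exact (inv n).2.2
  exact ⟨monotone_nat_of_le_succ hmono, hconv, inv⟩
end

section
/- Let 0 < a ≤ 1/2, q(s) = (a/2)s² − s + 1 and s* = (1 − √(1 − 2a))/a. Set g(s) = q'(s) + (a/2)·q(s). Then: (1) for every s with q(s) ≠ 0, q(s + q(s)) − q(s) = g(s)·q(s), i.e. the divided difference q[s, s + q(s)] equals g(s); (2) g is strictly increasing on [0, s*]; (3) for all s ∈ [0, s*], −1 + a/2 ≤ g(s) ≤ q'(s*) ≤ 0, and g(s) < 0 for s ∈ [0, s*). In particular the Steffensen divided difference q[s, s + q(s)] is nonzero for every s ∈ [0, s*). -/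
/-- **The Steffensen divided difference of the adimensional quadratic.**
Let `0 < a ≤ 1/2`, `q(s) = (a/2)s² − s + 1`, `s* = (1 − √(1 − 2a))/a` and
`g(s) = q'(s) + (a/2)q(s)`.  Then:
(1) for every `s` with `q(s) ≠ 0`, `q(s + q(s)) − q(s) = g(s)·q(s)`, i.e. the divided
difference `q[s, s + q(s)] = (q(s + q(s)) − q(s))/((s + q(s)) − s)` equals `g(s)`;
(2) `g` is strictly increasing on `[0, s*]`;
(3) for all `s ∈ [0, s*]`, `−1 + a/2 ≤ g(s) ≤ q'(s*) ≤ 0`, and `g(s) < 0` for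
`s ∈ [0, s*)`.  In particular the Steffensen divided difference `q[s, s + q(s)]` is
nonzero for every `s ∈ [0, s*)`. -/
theorem stmt_9 (a : ℝ) (ha : 0 < a) (ha' : a ≤ 1 / 2)
    (q : ℝ → ℝ) (hq : q = fun s => a / 2 * s ^ 2 - s + 1)
    (sstar : ℝ) (hsstar : sstar = (1 - Real.sqrt (1 - 2 * a)) / a)
    (g : ℝ → ℝ) (hg : g = fun s => deriv q s + a / 2 * q s) :
    (∀ s : ℝ, q s ≠ 0 → q (s + q s) - q s = g s * q s ∧
      (q (s + q s) - q s) / (s + q s - s) = g s) ∧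
    StrictMonoOn g (Set.Icc 0 sstar) ∧
    (∀ s ∈ Set.Icc (0 : ℝ) sstar,
      -1 + a / 2 ≤ g s ∧ g s ≤ deriv q sstar ∧ deriv q sstar ≤ 0) ∧
    (∀ s ∈ Set.Ico (0 : ℝ) sstar, g s < 0) ∧
    (∀ s ∈ Set.Ico (0 : ℝ) sstar,
      (q (s + q s) - q s) / (s + q s - s) ≠ 0) := by
  have hderiv : ∀ s : ℝ, deriv q s = a * s - 1 := by
    intro s
    subst hq
    have h := (((hasDerivAt_pow 2 s).const_mul (a / 2)).sub (hasDerivAt_id s)).add_const 1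
    have h' : HasDerivAt (fun x : ℝ => a / 2 * x ^ 2 - x + 1) (a / 2 * (2 * s ^ (2 - 1)) - 1) s := h
    rw [h'.deriv]; push_cast; ring
  have hqf : ∀ s : ℝ, q s = a / 2 * s ^ 2 - s + 1 := by rw [hq]; intro s; rfl
  have hgf : ∀ s : ℝ, g s = a ^ 2 / 4 * s ^ 2 + a / 2 * s + (a / 2 - 1) := by
    intro s; rw [hg]; simp only [hderiv, hqf]; ring
  set r := Real.sqrt (1 - 2 * a) with hrdef
  have hr2 : r ^ 2 = 1 - 2 * a := Real.sq_sqrt (by linarith)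
  have hr0 : 0 ≤ r := Real.sqrt_nonneg _
  have hr1 : r ≤ 1 := by nlinarith
  have hs0 : 0 ≤ sstar := by
    rw [hsstar]; apply div_nonneg <;> linarith
  have hqstar : q sstar = 0 := by
    rw [hqf, hsstar]; field_simp; nlinarith
  have hdstar : deriv q sstar = -r := by
    rw [hderiv, hsstar]; field_simp; ring
  have hgstar : g sstar = -r := by
    rw [hg]; simp only [hqstar, hdstar]; ring
  have part1 : ∀ s : ℝ, q s ≠ 0 → q (s + q s) - q s = g s * q s ∧
      (q (s + q s) - q s) / (s + q s - s) = g s := by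
    intro s hs
    have key : q (s + q s) - q s = g s * q s := by
      rw [hg]; simp only [hqf, hderiv]; ring
    refine ⟨key, ?_⟩
    rw [key]
    have : s + q s - s = q s := by ring
    rw [this, mul_div_assoc, div_self hs, mul_one]
  have hmono : StrictMonoOn g (Set.Icc 0 sstar) := by
    intro x hx y hy hxy
    rw [hgf, hgf]
    have hx0 := hx.1
    have hyx : 0 < y - x := sub_pos.mpr hxy
    nlinarith [mul_nonneg (mul_nonneg ha.le ha.le) (mul_nonneg (add_nonneg hx0 (hx0.trans hxy.le)) hyx.le), mul_pos ha hyx]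
  refine ⟨part1, hmono, ?_, ?_, ?_⟩
  · intro s hs
    refine ⟨?_, ?_, by rw [hdstar]; linarith⟩
    · rw [hgf]; nlinarith [hs.1]
    · rcases eq_or_lt_of_le hs.2 with h | h
      · rw [h, hgstar, hdstar]
      · have := hmono ⟨hs.1, hs.2⟩ ⟨hs0, le_refl _⟩ h
        rw [hgstar] at this; rw [hdstar]; linarith
  · intro s hs
    have := hmono ⟨hs.1, le_of_lt hs.2⟩ ⟨hs0, le_refl _⟩ hs.2
    rw [hgstar] at this; linarith
  · intro s hs
    have hgneg : g s < 0 := by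
      have := hmono ⟨hs.1, le_of_lt hs.2⟩ ⟨hs0, le_refl _⟩ hs.2
      rw [hgstar] at this; linarith
    have hqpos : q s ≠ 0 := by
      rw [hqf]
      have h1 : s < sstar := hs.2
      have hsst : a * sstar = 1 - r := by rw [hsstar]; field_simp
      have hq0 : a / 2 * sstar ^ 2 - sstar + 1 = 0 := by rw [← hqf]; exact hqstar
      have hd : 0 < sstar - s := sub_pos.mpr h1
      intro hcon
      nlinarith [mul_pos ha (mul_pos hd hd), mul_nonneg hr0 hd.le]
    have := (part1 s hqpos).2
    rw [this]
    exact ne_of_lt hgneg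
end

section
/- Let 0 < a ≤ 1/2, q(s) = (a/2)s² − s + 1 and s* = (1 − √(1 − 2a))/a. Define the Steffensen correction Δ_S(s) = −q(s)/(q'(s) + (a/2)q(s)) and the Newton correction Δ_N(s) = −q(s)/q'(s). Then for every s ∈ [0, s*), 0 ≤ Δ_N(s) ≤ Δ_S(s), and Δ_S(s*) = 0. -/
/-- **Comparison of the Steffensen and Newton corrections for the adimensional quadratic.**
Let `0 < a ≤ 1/2`, `q(s) = (a/2)s² − s + 1` and `s* = (1 − √(1 − 2a))/a`.  With the
Steffensen correction `Δ_S(s) = −q(s)/(q'(s) + (a/2)q(s))` and the Newton correction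
`Δ_N(s) = −q(s)/q'(s)`, for every `s ∈ [0, s*)` one has `0 ≤ Δ_N(s) ≤ Δ_S(s)`,
and `Δ_S(s*) = 0`. -/
theorem stmt_10 (a : ℝ) (ha : 0 < a) (ha' : a ≤ 1 / 2)
    (q : ℝ → ℝ) (hq : q = fun s => a / 2 * s ^ 2 - s + 1)
    (sstar : ℝ) (hsstar : sstar = (1 - Real.sqrt (1 - 2 * a)) / a)
    (ΔS ΔN : ℝ → ℝ)
    (hΔS : ΔS = fun s => -q s / (deriv q s + a / 2 * q s))
    (hΔN : ΔN = fun s => -q s / deriv q s) :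
    (∀ s ∈ Set.Ico (0 : ℝ) sstar, 0 ≤ ΔN s ∧ ΔN s ≤ ΔS s) ∧ ΔS sstar = 0 := by
  set r := Real.sqrt (1 - 2 * a) with hrdef
  have hr0 : 0 ≤ r := Real.sqrt_nonneg _
  have hr2 : r ^ 2 = 1 - 2 * a := Real.sq_sqrt (by linarith)
  have hr1 : r ≤ 1 := by nlinarith
  have hderiv : ∀ s : ℝ, deriv q s = a * s - 1 := by
    intro s
    have h1 : HasDerivAt (fun s : ℝ => a / 2 * s ^ 2 - s + 1) (a * s - 1) s := by
      have h := (((hasDerivAt_pow 2 s).const_mul (a / 2)).sub (hasDerivAt_id s)).add_const 1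
      refine h.congr_deriv ?_
      simp
      ring
    rw [hq]
    exact h1.deriv
  have hqstar : q sstar = 0 := by
    rw [hq, hsstar]
    field_simp
    nlinarith [hr2]
  constructor
  · intro s hs
    obtain ⟨hs0, hss⟩ := hs
    have hss' : a * s < 1 - r := by
      rw [hsstar] at hss
      calc a * s < a * ((1 - r) / a) := by exact (mul_lt_mul_iff_right₀ ha).mpr hss
        _ = 1 - r := by field_simp
    have hqval : q s = a / 2 * s ^ 2 - s + 1 := by rw [hq]
    have hqpos : 0 < q s := by nlinarith [sq_nonneg (1 - a * s - r)]
    have hden1 : 0 < 1 - a * s := by nlinarith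
    have hdenS : 0 < (1 - a * s) - a / 2 * q s := by
      nlinarith [mul_pos hden1 (show (0:ℝ) < 4 - (1 - a * s) by nlinarith)]
    have hΔNval : ΔN s = q s / (1 - a * s) := by
      rw [hΔN]; simp only [hderiv]
      rw [div_eq_div_iff (by nlinarith) (by linarith)]
      ring
    have hΔSval : ΔS s = q s / ((1 - a * s) - a / 2 * q s) := by
      rw [hΔS]; simp only [hderiv]
      rw [div_eq_div_iff (by nlinarith) (by linarith)]
      ring
    constructor
    · rw [hΔNval]; positivity
    · rw [hΔNval, hΔSval, div_le_div_iff₀ hden1 hdenS]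
      nlinarith [mul_pos hqpos hqpos]
  · rw [hΔS]
    simp only [hqstar]
    simp
end

section
/- Let 0 < a ≤ 1/2, q(s) = (a/2)s² − s + 1 and s* = (1 − √(1 − 2a))/a, and let Δ_S(s) = −q(s)/(q'(s) + (a/2)q(s)). Then for all s ∈ [0, s*]: (1) q'(s)² − a·q(s) = (1 − 2a) + a·q(s) ≥ 0; (2) Δ_S is monotonically decreasing and nonnegative on [0, s*]; (3) s + Δ_S(s) ≤ s*. -/
/-- **Monotonicity of the Steffensen correction for the adimensional quadratic.**
Let `0 < a ≤ 1/2`, `q(s) = (a/2)s² − s + 1`, `s* = (1 − √(1 − 2a))/a` and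
`Δ_S(s) = −q(s)/(q'(s) + (a/2)q(s))`.  Then for all `s ∈ [0, s*]`:
(1) `q'(s)² − a·q(s) = (1 − 2a) + a·q(s) ≥ 0`;
(2) `Δ_S` is monotonically decreasing and nonnegative on `[0, s*]`;
(3) `s + Δ_S(s) ≤ s*`. -/
theorem stmt_11 (a : ℝ) (ha : 0 < a) (ha' : a ≤ 1 / 2)
    (q : ℝ → ℝ) (hq : q = fun s => a / 2 * s ^ 2 - s + 1)
    (sstar : ℝ) (hsstar : sstar = (1 - Real.sqrt (1 - 2 * a)) / a)
    (ΔS : ℝ → ℝ)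
    (hΔS : ΔS = fun s => -q s / (deriv q s + a / 2 * q s)) :
    (∀ s ∈ Set.Icc (0 : ℝ) sstar,
      (deriv q s) ^ 2 - a * q s = (1 - 2 * a) + a * q s ∧
      0 ≤ (1 - 2 * a) + a * q s) ∧
    AntitoneOn ΔS (Set.Icc 0 sstar) ∧
    (∀ s ∈ Set.Icc (0 : ℝ) sstar, 0 ≤ ΔS s) ∧
    (∀ s ∈ Set.Icc (0 : ℝ) sstar, s + ΔS s ≤ sstar) := by
  have h2a : (0:ℝ) ≤ 1 - 2*a := by linarith
  set r := Real.sqrt (1 - 2*a) with hrdef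
  have hr0 : 0 ≤ r := Real.sqrt_nonneg _
  have hr2 : r^2 = 1 - 2*a := Real.sq_sqrt h2a
  have hr1 : r ≤ 1 := by nlinarith
  have hastar : a * sstar = 1 - r := by
    rw [hsstar]
    have : (1 - 2*a) = 1 - 2*a := rfl
    field_simp
  have hqd : ∀ s, deriv q s = a*s - 1 := by
    intro s
    have h : HasDerivAt (fun x : ℝ => a / 2 * x ^ 2 - x + 1) (a*s-1) s := by
      have h1 : HasDerivAt (fun x : ℝ => a / 2 * x ^ 2) (a/2 * (2 * s^1)) s :=
        (hasDerivAt_pow 2 s).const_mul (a/2)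
      have h2 := (h1.sub (hasDerivAt_id s)).add_const 1
      convert h2 using 1
      · rfl
      · rfl
      · rfl
      simp
      ring
    rw [hq]; exact h.deriv
  -- basic bounds
  have hsc : ∀ s ∈ Set.Icc (0:ℝ) sstar, 0 ≤ s ∧ a * s ≤ 1 - r := by
    intro s hs
    refine ⟨hs.1, ?_⟩
    have := mul_le_mul_of_nonneg_left hs.2 ha.le
    linarith [hastar ▸ this]
  have hq0 : ∀ s ∈ Set.Icc (0:ℝ) sstar, 0 ≤ q s := by
    intro s hs
    obtain ⟨h0, h1⟩ := hsc s hs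
    rw [hq]; dsimp only
    have hp : 0 ≤ (1 - a*s - r) := by linarith
    have hm : 0 ≤ (1 - a*s + r) := by linarith
    nlinarith [mul_nonneg hp hm, ha]
  have hM : ∀ s ∈ Set.Icc (0:ℝ) sstar, 0 ≤ 1 - a*s - a/2 * q s := by
    intro s hs
    obtain ⟨h0, h1⟩ := hsc s hs
    rw [hq]; dsimp only
    have has : 0 ≤ a*s := mul_nonneg ha.le h0
    have hu : 0 ≤ 1 - a*s := by linarith
    nlinarith [mul_nonneg hu (by linarith : (0:ℝ) ≤ 4 - (1 - a*s)), h2a]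
  have hΔ : ∀ s, ΔS s = q s / (1 - a*s - a/2 * q s) := by
    intro s
    rw [hΔS]; dsimp only
    rw [hqd, show a*s - 1 + a/2 * q s = -(1 - a*s - a/2 * q s) by ring]
    rw [div_neg, neg_div, neg_neg]
  have hnn : ∀ s ∈ Set.Icc (0:ℝ) sstar, 0 ≤ ΔS s := by
    intro s hs
    rw [hΔ]
    exact div_nonneg (hq0 s hs) (hM s hs)
  refine ⟨?_, ?_, hnn, ?_⟩
  · intro s hs
    constructor
    · rw [hqd, hq]; dsimp only; ring
    · have := hq0 s hs
      nlinarith [mul_nonneg ha.le this]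
  · intro s hs t ht hst
    rw [hΔ, hΔ]
    by_cases hMt : 1 - a*t - a/2 * q t = 0
    · rw [hMt, div_zero]
      exact div_nonneg (hq0 s hs) (hM s hs)
    · have hMt' : 0 < 1 - a*t - a/2 * q t := lt_of_le_of_ne (hM t ht) (Ne.symm hMt)
      have hts : 0 ≤ t - s := by linarith
      have hMs' : 0 < 1 - a*s - a/2 * q s := by
        have hdiff : 0 ≤ (1 - a*s - a/2 * q s) - (1 - a*t - a/2 * q t) := by
          rw [hq]; dsimp only
          nlinarith [mul_nonneg hts ha.le,
            mul_nonneg (mul_nonneg (mul_nonneg ha.le ha.le) hts) (add_nonneg hs.1 ht.1)]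
        linarith
      rw [div_le_div_iff₀ hMt' hMs']
      obtain ⟨hs0, hs1⟩ := hsc s hs
      obtain ⟨ht0, ht1⟩ := hsc t ht
      have h1s : 0 ≤ 1 - a*s := by linarith
      have h1t : 0 ≤ 1 - a*t := by linarith
      rw [hq]; dsimp only
      nlinarith [mul_nonneg (mul_nonneg hts h1s) h1t, mul_nonneg hts h2a]
  · intro s hs
    obtain ⟨hs0, hs1⟩ := hsc s hs
    rw [hΔ]
    by_cases hMs : 1 - a*s - a/2 * q s = 0
    · rw [hMs, div_zero]; linarith [hs.2]
    · have hMs' : 0 < 1 - a*s - a/2 * q s := lt_of_le_of_ne (hM s hs) (Ne.symm hMs)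
      have hp : 0 ≤ 1 - r - a*s := by linarith
      have has : 0 ≤ a*s := mul_nonneg ha.le hs0
      -- step B : p - a q ≥ 0
      have hB : 0 ≤ (1 - r - a*s) - a * (a/2*s^2 - s + 1) := by
        nlinarith [mul_nonneg hp (by linarith : (0:ℝ) ≤ 1 - r + a*s), hr2]
      -- key : a * q s ≤ p * M
      have hkey : a * q s ≤ (1 - r - a*s) * (1 - a*s - a/2 * q s) := by
        rw [hq]; dsimp only
        nlinarith [mul_nonneg hp hB, hr2]
      have hq' : q s ≤ (sstar - s) * (1 - a*s - a/2 * q s) := by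
        have heq : (1 - r - a*s) = a * (sstar - s) := by rw [mul_sub, hastar]
        rw [heq, mul_assoc] at hkey
        exact le_of_mul_le_mul_left hkey ha
      have := (div_le_iff₀ hMs').2 hq'
      linarith
end

section
/- Let 0 < a ≤ 1/2 and q(s) = (a/2)s² − s + 1, and define the Steffensen sequence s_0 = 0, s_{n+1} = s_n − q(s_n)/q[s_n, s_n + q(s_n)]. Then for all n ≥ 0: (I) q'(s_n) = −1/a_n; (II) q[s_n, s_n + q(s_n)] = −1/b_n; (III) q(s_n) = c_n; (IV) s_{n+1} − s_n = d_n; (V) s_n = r_n. In particular all these quantities are well defined and c_n > 0, b_n > 0, a_n > 0, d_n > 0 for all n. -/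
set_option maxHeartbeats 800000


/-- **The Steffensen system of sequences matches Steffensen's method on the
adimensional quadratic.**
Let `0 < a ≤ 1/2`, `q(s) = (a/2)s² − s + 1` and let `s₀ = 0`,
`s_{n+1} = s_n − q(s_n)/q[s_n, s_n + q(s_n)]` be the Steffensen sequence, where
`q[x,y] = (q(y) − q(x))/(y − x)`.  With the Steffensen system `(a_n), (b_n), (c_n),
(d_n), (r_n)`, for all `n`: (I) `q'(s_n) = −1/a_n`; (II) `q[s_n, s_n + q(s_n)] = −1/b_n`;
(III) `q(s_n) = c_n`; (IV) `s_{n+1} − s_n = d_n`; (V) `s_n = r_n`.  In particular all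
these quantities are well defined and `a_n, b_n, c_n, d_n > 0` for all `n`. -/
theorem stmt_13 (a : ℝ) (ha : 0 < a) (ha' : a ≤ 1 / 2)
    (aa bb cc dd rr : ℕ → ℝ)
    (ha0 : aa 0 = 1) (hc0 : cc 0 = 1) (hr0 : rr 0 = 0)
    (hb : ∀ n, bb n = aa n / (1 - a / 2 * aa n * cc n))
    (hd : ∀ n, dd n = bb n * cc n)
    (haa : ∀ n, aa (n + 1) = aa n / (1 - a * aa n * dd n))
    (hcc : ∀ n, cc (n + 1) = a ^ 2 / 2 * (dd n) ^ 2 * (rr n + cc n / 2))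
    (hrr : ∀ n, rr (n + 1) = rr n + dd n)
    (q : ℝ → ℝ) (hq : q = fun s => a / 2 * s ^ 2 - s + 1)
    (s : ℕ → ℝ) (hs0 : s 0 = 0)
    (hsn : ∀ n, s (n + 1) =
      s n - q (s n) / ((q (s n + q (s n)) - q (s n)) / (s n + q (s n) - s n))) :
    ∀ n, deriv q (s n) = -(1 / aa n) ∧
      (q (s n + q (s n)) - q (s n)) / (s n + q (s n) - s n) = -(1 / bb n) ∧
      q (s n) = cc n ∧
      s (n + 1) - s n = dd n ∧
      s n = rr n ∧
      0 < aa n ∧ 0 < bb n ∧ 0 < cc n ∧ 0 < dd n := by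
  have hq' : ∀ x : ℝ, q x = a / 2 * x ^ 2 - x + 1 := fun x => by rw [hq]
  have hderiv : ∀ x : ℝ, deriv q x = a * x - 1 := by
    intro x
    have h : HasDerivAt q (a / 2 * (↑(2:ℕ) * x ^ (2 - 1)) - 1) x := by
      rw [hq]
      exact (((hasDerivAt_pow 2 x).const_mul (a / 2)).sub (hasDerivAt_id' x)).add_const 1
    rw [h.deriv]; push_cast; ring
  have step : ∀ n, (aa n = 1 / (1 - a * s n) ∧ 0 ≤ s n ∧ a * s n < 1 ∧
      cc n = q (s n) ∧ 0 < cc n ∧ s n = rr n) →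
      ((deriv q (s n) = -(1 / aa n) ∧
        (q (s n + q (s n)) - q (s n)) / (s n + q (s n) - s n) = -(1 / bb n) ∧
        q (s n) = cc n ∧
        s (n + 1) - s n = dd n ∧
        s n = rr n ∧
        0 < aa n ∧ 0 < bb n ∧ 0 < cc n ∧ 0 < dd n) ∧
      (aa (n + 1) = 1 / (1 - a * s (n + 1)) ∧ 0 ≤ s (n + 1) ∧ a * s (n + 1) < 1 ∧
        cc (n + 1) = q (s (n + 1)) ∧ 0 < cc (n + 1) ∧ s (n + 1) = rr (n + 1))) := by
    rintro n ⟨hA, hsnn, hslt, hcq, hcpos, hsr⟩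
    have hcpoly : cc n = a / 2 * (s n) ^ 2 - s n + 1 := by rw [hcq, hq']
    obtain ⟨u, hu_def⟩ : ∃ u : ℝ, u = 1 - a * s n - a / 2 * cc n := ⟨_, rfl⟩
    have hupoly : u = 1 - a / 2 - a / 2 * s n - a ^ 2 / 4 * (s n) ^ 2 := by
      rw [hu_def, hcpoly]; ring
    have hasn : 0 ≤ a * s n := mul_nonneg ha.le hsnn
    have h1 : (a * s n) * (a * s n) < 1 := by nlinarith
    have hupos : 0 < u := by rw [hupoly]; nlinarith
    have ht : 0 < 1 - a * s n := by linarith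
    have hApos : 0 < aa n := by rw [hA]; positivity
    have e1 : 1 - a / 2 * aa n * cc n = (1 - a * s n - a / 2 * cc n) / (1 - a * s n) := by
      rw [hA]; field_simp
    have hBval : bb n = 1 / u := by
      rw [hb, e1, hA, hu_def]
      rw [div_div_div_comm]
      rw [div_self ht.ne']
      rw [div_one]
    have hBpos : 0 < bb n := by rw [hBval]; positivity
    have hDval : dd n = cc n / u := by rw [hd, hBval]; ring
    have hDpos : 0 < dd n := by rw [hDval]; positivity
    have hdenom : s n + q (s n) - s n = q (s n) := by ring
    have hdiff : (q (s n + q (s n)) - q (s n)) / (s n + q (s n) - s n) = -u := by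
      rw [hdenom, ← hcq, hq' (s n + cc n)]
      rw [div_eq_iff hcpos.ne', hu_def]
      linear_combination -hcpoly
    have hII : (q (s n + q (s n)) - q (s n)) / (s n + q (s n) - s n) = -(1 / bb n) := by
      rw [hdiff, hBval, one_div_one_div]
    have hI : deriv q (s n) = -(1 / aa n) := by
      rw [hderiv, hA, one_div_one_div]; ring
    have hs1 : s (n + 1) = s n + cc n / u := by
      rw [hsn n, hdiff, ← hcq, div_neg]; ring
    have hIV : s (n + 1) - s n = dd n := by rw [hs1, hDval]; ring
    have hid : (1 - a * s n) * u - a * cc n =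
        ((1 - a * s n) ^ 2 * (2 - (1 - a * s n)) + (1 - 2 * a) * ((1 - a * s n) + 2)) / 4 := by
      rw [hupoly, hcpoly]; ring
    have hq2 : a * cc n < (1 - a * s n) * u := by
      nlinarith [mul_pos (mul_pos ht ht) (show (0:ℝ) < 2 - (1 - a * s n) by linarith),
        mul_nonneg (show (0:ℝ) ≤ 1 - 2 * a by linarith)
          (show (0:ℝ) ≤ (1 - a * s n) + 2 by linarith)]
    have h3 : a * cc n / u < 1 - a * s n := (div_lt_iff₀ hupos).mpr (by linarith)
    have hs1lt : a * s (n + 1) < 1 := by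
      rw [hs1]
      calc a * (s n + cc n / u) = a * s n + a * cc n / u := by ring
        _ < a * s n + (1 - a * s n) := by linarith
        _ = 1 := by ring
    have hcu : 0 < cc n / u := div_pos hcpos hupos
    have hs1nn : 0 ≤ s (n + 1) := by rw [hs1]; linarith
    have htu : 0 < (1 - a * s n) * u - a * cc n := by linarith
    have hAnew : aa (n + 1) = 1 / (1 - a * s (n + 1)) := by
      rw [haa n, hA, hDval, hs1]
      rw [show 1 - a * (1 / (1 - a * s n)) * (cc n / u) =
          ((1 - a * s n) * u - a * cc n) / ((1 - a * s n) * u) from by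
        field_simp]
      rw [show 1 - a * (s n + cc n / u) = ((1 - a * s n) * u - a * cc n) / u from by
        field_simp; ring]
      rw [one_div_div]
      field_simp
    have hunez : (1 - a / 2 - a / 2 * s n - a ^ 2 / 4 * (s n) ^ 2) ≠ 0 := by
      rw [← hupoly]; exact hupos.ne'
    have hCnew : cc (n + 1) = q (s (n + 1)) := by
      rw [hcc n, hq', hs1, hDval, ← hsr]
      have hDmul : cc n / u * u = cc n := div_mul_cancel₀ _ hupos.ne'
      linear_combination (1 - a / 2 * (cc n / u)) * hDmul + hcpoly +
        (a / 2 * (cc n / u) ^ 2 - cc n / u) * hu_def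
    have hCpos : 0 < cc (n + 1) := by
      rw [hcc n, ← hsr, hDval]
      have hsc : 0 < s n + cc n / 2 := by linarith
      have : (0:ℝ) < a ^ 2 / 2 * (cc n / u) ^ 2 := by positivity
      exact mul_pos this hsc
    have hRnew : s (n + 1) = rr (n + 1) := by
      rw [hrr n, ← hsr, hs1, hDval]
    exact ⟨⟨hI, hII, hcq.symm, hIV, hsr, hApos, hBpos, hcpos, hDpos⟩,
      hAnew, hs1nn, hs1lt, hCnew, hCpos, hRnew⟩
  have key : ∀ n, aa n = 1 / (1 - a * s n) ∧ 0 ≤ s n ∧ a * s n < 1 ∧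
      cc n = q (s n) ∧ 0 < cc n ∧ s n = rr n := by
    intro n
    induction n with
    | zero =>
      refine ⟨?_, ?_, ?_, ?_, ?_, ?_⟩ <;> simp [hs0, ha0, hc0, hr0, hq']
    | succ n ih => exact (step n ih).2
  intro n
  exact (step n (key n)).1
end

section
/- For every real parameter a with 0 < a ≤ 1/2 and every n ≥ 0, the Steffensen system of sequences satisfies the invariant (1/a_n)² − 2a·c_n = 1 − 2a. -/
/-- **Invariant of the Steffensen system of sequences.**
For `0 < a ≤ 1/2`, the Steffensen system `(a_n), (b_n), (c_n), (d_n), (r_n)` satisfies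
`(1/a_n)² − 2a·c_n = 1 − 2a` for every `n`. -/
theorem stmt_14 (a : ℝ) (ha : 0 < a) (ha' : a ≤ 1 / 2)
    (aa bb cc dd rr : ℕ → ℝ)
    (ha0 : aa 0 = 1) (hc0 : cc 0 = 1) (hr0 : rr 0 = 0)
    (hb : ∀ n, bb n = aa n / (1 - a / 2 * aa n * cc n))
    (hd : ∀ n, dd n = bb n * cc n)
    (haa : ∀ n, aa (n + 1) = aa n / (1 - a * aa n * dd n))
    (hcc : ∀ n, cc (n + 1) = a ^ 2 / 2 * (dd n) ^ 2 * (rr n + cc n / 2))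
    (hrr : ∀ n, rr (n + 1) = rr n + dd n) :
    ∀ n, (1 / aa n) ^ 2 - 2 * a * cc n = 1 - 2 * a := by
  have key : ∀ n, 0 < aa n ∧ 0 < cc n ∧ 0 ≤ rr n ∧
      aa n * (1 - a * rr n) = 1 ∧
      (1 - a * rr n) ^ 2 = 1 - 2 * a + 2 * a * cc n := by
    intro n
    induction n with
    | zero => refine ⟨by rw [ha0]; norm_num, by rw [hc0]; norm_num, by rw [hr0],
        by rw [ha0, hr0]; ring, by rw [hr0, hc0]; ring⟩
    | succ n ih =>
      obtain ⟨hA, hC, hR, hI, hJ⟩ := ih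
      -- s := 1 - a * rr n
      have hs : 0 < 1 - a * rr n := by nlinarith
      have hs1 : 1 - a * rr n ≤ 1 := by nlinarith
      -- s - a*cc/2 > 0
      have htp : 0 < (1 - a * rr n) - a * cc n / 2 := by nlinarith
      set t : ℝ := 1 - a / 2 * aa n * cc n with ht_def
      have ht : t * (1 - a * rr n) = (1 - a * rr n) - a * cc n / 2 := by
        linear_combination (-(a / 2) * cc n) * hI
      have htpos : 0 < t := by
        have h1 : 0 < t * (1 - a * rr n) := by rw [ht]; exact htp
        rcases mul_pos_iff.mp h1 with ⟨h2, _⟩ | ⟨_, h3⟩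
        · exact h2
        · linarith
      have hdeq : dd n = aa n * cc n / t := by rw [hd n, hb n]; ring
      have hdpos : 0 < dd n := by rw [hdeq]; positivity
      have hdt : dd n * t = aa n * cc n := by
        rw [hdeq]; field_simp
      have hdd : dd n * ((1 - a * rr n) - a * cc n / 2) = cc n := by
        linear_combination (-(dd n)) * ht + (1 - a * rr n) * hdt + cc n * hI
      -- s - a * dd > 0
      have hsd : 0 < (1 - a * rr n) - a * dd n := by nlinarith
      set u : ℝ := 1 - a * aa n * dd n with hu_def
      have hu : u * (1 - a * rr n) = (1 - a * rr n) - a * dd n := by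
        linear_combination (-(a) * dd n) * hI
      have hupos : 0 < u := by nlinarith
      have hA' : 0 < aa (n + 1) := by rw [haa n]; positivity
      have h2 : aa n * ((1 - a * rr n) - a * dd n) = u := by
        linear_combination hI
      have hI' : aa (n + 1) * (1 - a * rr (n + 1)) = 1 := by
        rw [haa n, hrr n]
        rw [div_mul_eq_mul_div]
        rw [show 1 - a * (rr n + dd n) = (1 - a * rr n) - a * dd n by ring, h2,
          div_self hupos.ne']
      have hC' : 0 < cc (n + 1) := by
        rw [hcc n]; positivity
      have hR' : 0 ≤ rr (n + 1) := by rw [hrr n]; positivity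
      have hJ' : (1 - a * rr (n + 1)) ^ 2 = 1 - 2 * a + 2 * a * cc (n + 1) := by
        rw [hrr n, hcc n]
        linear_combination hJ + (-2 * a + a ^ 2 * dd n) * hdd
      exact ⟨hA', hC', hR', hI', hJ'⟩
  intro n
  obtain ⟨hA, hC, hR, hI, hJ⟩ := key n
  have h1 : 1 / aa n = 1 - a * rr n := by
    field_simp
    linarith [hI]
  rw [h1]
  linarith [hJ]
end

section
/- Let V be a real Banach space and G : V → V twice continuously Fréchet differentiable with ‖G''(ξ)‖ ≤ a for all ξ ∈ V, where 0 < a ≤ 1/2. Let y₀ ∈ V satisfy ‖G(y₀)‖ ≤ 1 and G'(y₀) = −I (minus the identity operator). Define the ASIS sequence by y_{n+1} = y_n − G[y_n, y_n + G(y_n)]⁻¹ G(y_n), where G[x,y] = ∫₀¹ G'(x + θ(y − x)) dθ. Then the sequence is well defined and for all n ≥ 0: (a) G'(y_n) is invertible with ‖G'(y_n)⁻¹‖ ≤ a_n; (b) G[y_n, y_n + G(y_n)] is invertible with ‖G[y_n, y_n + G(y_n)]⁻¹‖ ≤ b_n; (c) ‖G(y_n)‖ ≤ c_n; (d) ‖y_{n+1}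 − y_n‖ ≤ d_n; (e) ‖y_n − y₀‖ ≤ r_n. -/
open MeasureTheory intervalIntegral

namespace ASIS16

noncomputable def ts (a : ℝ) : ℝ := (1 - Real.sqrt (1 - 2*a)) / a

lemma scalar_step {a : ℝ} (ha : 0 < a) (ha' : a ≤ 1/2) {r : ℝ} (hr0 : 0 ≤ r) (hrt : r < ts a) :
    0 < a/2*r^2 - r + 1 ∧ 0 < 1 - a*r ∧
    0 < 1 - a*r - a/2*(a/2*r^2 - r + 1) ∧
    r + (a/2*r^2 - r + 1)/(1 - a*r - a/2*(a/2*r^2 - r + 1)) < ts a := by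
  have h2a : (0:ℝ) ≤ 1 - 2*a := by linarith
  set s := Real.sqrt (1 - 2*a) with hs
  have hs2 : s^2 = 1 - 2*a := Real.sq_sqrt h2a
  have hs0 : 0 ≤ s := Real.sqrt_nonneg _
  have hs1 : s < 1 := by nlinarith [hs2]
  have hat : a * ts a = 1 - s := by show a * ((1 - s)/a) = 1 - s; field_simp
  have hpt : a/2 * (ts a)^2 - ts a + 1 = 0 := by
    have h1 : ts a = (1 - s)/a := rfl
    rw [h1]; field_simp; nlinarith [hs2]
  set t := ts a with ht
  clear_value s t
  set u := t - r with hu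
  clear_value u
  have hu0 : 0 < u := by simp only [hu]; linarith
  have hc : a/2*r^2 - r + 1 = a/2*u^2 + s*u := by
    have hr : r = t - u := by simp [hu]
    rw [hr]; nlinarith [hpt, hat]
  have hw0 : 0 < a*u := mul_pos ha hu0
  have hau : a*u ≤ 1 - s := by nlinarith [mul_nonneg ha.le hr0]
  have hc0 : 0 < a/2*r^2 - r + 1 := by
    rw [hc]
    have h3 : 0 < a/2*u^2 := by positivity
    have h4 : 0 ≤ s*u := mul_nonneg hs0 hu0.le
    linarith
  have har1 : 1 - a*r = s + a*u := by nlinarith [hat]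
  have hD : 0 < 1 - a*r - a/2*(a/2*r^2 - r + 1) := by
    rw [har1, hc]
    nlinarith [mul_nonneg hw0.le (by linarith : (0:ℝ) ≤ 1 - s - a*u),
      mul_nonneg hs0 hw0.le]
  have h5 : 0 < 1 - s - a*u/2 := by linarith
  have hgoal : a/2*r^2 - r + 1 < u * (1 - a*r - a/2*(a/2*r^2 - r + 1)) := by
    rw [har1, hc]
    nlinarith [mul_pos (mul_pos (half_pos ha) (mul_pos hu0 hu0)) h5]
  refine ⟨hc0, har1 ▸ (by linarith), hD, ?_⟩
  have h6 : (a/2*r^2 - r + 1)/(1 - a*r - a/2*(a/2*r^2 - r + 1)) < u :=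
    (div_lt_iff₀ hD).2 (by linarith)
  have h7 : r + u = t := by simp [hu]
  linarith


lemma invdiv {q v : ℝ} (hq : q ≠ 0) :
    (1/q)/(1 - (1/q)*v) = 1/(q - v) := by
  have h : 1 - (1/q)*v = (q - v)/q := by field_simp
  rw [h, div_div_eq_mul_div, one_div_mul_cancel hq]

lemma alg2' {a r c D d : ℝ} (hc : c = a/2*r^2 - r + 1) (hD : D = 1 - a*r - a/2*c)
    (hdD : d*D = c) :
    a^2/2*d^2*(r + c/2) = a/2*(r+d)^2 - (r+d) + 1 := by
  subst hD; subst hc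
  linear_combination (1 - a/2*d) * hdD

lemma ts_facts {a : ℝ} (ha : 0 < a) (ha' : a ≤ 1/2) : 0 < ts a ∧ a * ts a ≤ 1 := by
  have h2a : (0:ℝ) ≤ 1 - 2*a := by linarith
  have hs2 : (Real.sqrt (1-2*a))^2 = 1 - 2*a := Real.sq_sqrt h2a
  have hs0 : 0 ≤ Real.sqrt (1-2*a) := Real.sqrt_nonneg _
  have hs1 : Real.sqrt (1-2*a) < 1 := by nlinarith
  constructor
  · rw [ts]; apply div_pos (by linarith) ha
  · rw [ts, mul_comm, div_mul_cancel₀ _ ha.ne']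
    linarith

lemma scalar_all {a : ℝ} (ha : 0 < a) (ha' : a ≤ 1/2)
    (aa bb cc dd rr : ℕ → ℝ)
    (ha0 : aa 0 = 1) (hc0 : cc 0 = 1) (hr0 : rr 0 = 0)
    (hb : ∀ n, bb n = aa n / (1 - a / 2 * aa n * cc n))
    (hd : ∀ n, dd n = bb n * cc n)
    (haa : ∀ n, aa (n + 1) = aa n / (1 - a * aa n * dd n))
    (hcc : ∀ n, cc (n + 1) = a ^ 2 / 2 * (dd n) ^ 2 * (rr n + cc n / 2))
    (hrr : ∀ n, rr (n + 1) = rr n + dd n) :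
    ∀ n, 0 ≤ cc n ∧ 0 ≤ dd n ∧ 0 ≤ rr n ∧
      aa n * (a/2 * cc n) < 1 ∧
      aa n / (1 - aa n * (a/2 * cc n)) = bb n ∧
      0 ≤ bb n ∧
      aa n * (a * dd n) < 1 ∧
      aa n / (1 - aa n * (a * dd n)) = aa (n+1) := by
  obtain ⟨hts, hats⟩ := ts_facts ha ha'
  have inv : ∀ n, 0 ≤ rr n ∧ rr n < ts a ∧ cc n = a/2*(rr n)^2 - rr n + 1 ∧
      aa n = 1/(1 - a*rr n) := by
    intro n
    induction n with
    | zero =>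
      exact ⟨by rw [hr0], by rw [hr0]; exact hts,
        by rw [hc0, hr0]; ring, by rw [ha0, hr0]; norm_num⟩
    | succ n ih =>
      obtain ⟨h1, h2, h3, h4⟩ := ih
      obtain ⟨hcpos, harpos, hDpos, hnext⟩ := scalar_step ha ha' h1 h2
      rw [← h3] at hcpos hDpos hnext
      have hbb : bb n = 1/(1 - a*rr n - a/2*cc n) := by
        rw [hb n, h4]
        have e1 : 1 - a/2 * (1/(1 - a*rr n)) * cc n
            = 1 - (1/(1 - a*rr n))*(a/2*cc n) := by ring
        rw [e1, invdiv harpos.ne']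
      have hdd : dd n = cc n / (1 - a*rr n - a/2*cc n) := by
        rw [hd n, hbb, one_div_mul_eq_div]
      have hdDc : dd n * (1 - a*rr n - a/2*cc n) = cc n := by
        rw [hdd]; exact div_mul_cancel₀ _ hDpos.ne'
      have hrn : rr (n+1) = rr n + cc n / (1 - a*rr n - a/2*cc n) := by
        rw [hrr n, hdd]
      refine ⟨?_, ?_, ?_, ?_⟩
      · rw [hrn]; positivity
      · rw [hrn]; exact hnext
      · rw [hcc n, hrr n]
        exact alg2' h3 rfl hdDc
      · rw [haa n, h4, hrr n]
        have e2 : 1 - a * (1/(1 - a*rr n)) * dd n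
            = 1 - (1/(1 - a*rr n))*(a*dd n) := by ring
        rw [e2, invdiv harpos.ne']
        have e3 : 1 - a*rr n - a*dd n = 1 - a*(rr n + dd n) := by ring
        rw [e3]
  intro n
  obtain ⟨h1, h2, h3, h4⟩ := inv n
  obtain ⟨hcpos, harpos, hDpos, hnext⟩ := scalar_step ha ha' h1 h2
  rw [← h3] at hcpos hDpos hnext
  have hbb : bb n = 1/(1 - a*rr n - a/2*cc n) := by
    rw [hb n, h4]
    have e1 : 1 - a/2 * (1/(1 - a*rr n)) * cc n
        = 1 - (1/(1 - a*rr n))*(a/2*cc n) := by ring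
    rw [e1, invdiv harpos.ne']
  have hbb0 : 0 ≤ bb n := by rw [hbb]; positivity
  have hdd : dd n = cc n / (1 - a*rr n - a/2*cc n) := by
    rw [hd n, hbb, one_div_mul_eq_div]
  have hdd0 : 0 ≤ dd n := by rw [hdd]; positivity
  refine ⟨hcpos.le, hdd0, h1, ?_, ?_, hbb0, ?_, ?_⟩
  · have e4 : aa n * (a/2*cc n) = (a/2*cc n)/(1 - a*rr n) := by rw [h4]; ring
    rw [e4]
    exact (div_lt_one harpos).2 (by linarith)
  · have e5 : aa n / (1 - aa n * (a/2 * cc n)) = aa n / (1 - a/2 * aa n * cc n) := by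
      ring_nf
    rw [e5, ← hb n]
  · have h8 : a*(rr n + cc n/(1 - a*rr n - a/2*cc n)) < 1 :=
      lt_of_lt_of_le ((mul_lt_mul_iff_right₀ ha).2 hnext) hats
    rw [mul_add] at h8
    have e6 : aa n * (a*dd n) = (a*dd n)/(1 - a*rr n) := by rw [h4]; ring
    rw [e6]
    refine (div_lt_one harpos).2 ?_
    rw [hdd]
    linarith [h8]
  · rw [haa n]
    have e7 : 1 - aa n * (a*dd n) = 1 - a * aa n * dd n := by ring
    rw [e7]

variable {V : Type*} [NormedAddCommGroup V] [NormedSpace ℝ V] [CompleteSpace V]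

/-- Perturbation of an invertible operator. -/
lemma perturb (e : V ≃L[ℝ] V) (B : V →L[ℝ] V) (K M : ℝ)
    (hK : ‖(e.symm : V →L[ℝ] V)‖ ≤ K)
    (hM : ‖B - (e : V →L[ℝ] V)‖ ≤ M) (hM0 : 0 ≤ M) (hKM : K * M < 1) :
    ∃ f : V ≃L[ℝ] V, (f : V →L[ℝ] V) = B ∧
      ‖(f.symm : V →L[ℝ] V)‖ ≤ K / (1 - K * M) := by
  have hK0 : 0 ≤ K := le_trans (norm_nonneg _) hK
  set t : V →L[ℝ] V := -((e.symm : V →L[ℝ] V).comp (B - (e : V →L[ℝ] V))) with ht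
  have htn : ‖t‖ ≤ K * M := by
    rw [ht, norm_neg]
    calc ‖(e.symm : V →L[ℝ] V).comp (B - (e : V →L[ℝ] V))‖
        ≤ ‖(e.symm : V →L[ℝ] V)‖ * ‖B - (e : V →L[ℝ] V)‖ := ContinuousLinearMap.opNorm_comp_le _ _
      _ ≤ K * M := mul_le_mul hK hM (norm_nonneg _) hK0
  have ht1 : ‖t‖ < 1 := lt_of_le_of_lt htn hKM
  set u : (V →L[ℝ] V)ˣ := Units.oneSub t ht1 with hu
  refine ⟨(ContinuousLinearEquiv.ofUnit u).trans e, ?_, ?_⟩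
  · ext v
    simp only [ContinuousLinearEquiv.coe_coe, ContinuousLinearEquiv.trans_apply]
    show e (u.val v) = B v
    have : u.val v = v + e.symm ((B - (e : V →L[ℝ] V)) v) := by
      simp [hu, ht, Units.val_oneSub, ContinuousLinearMap.sub_apply]
    rw [this, map_add, e.apply_symm_apply]
    simp [ContinuousLinearMap.sub_apply]
  · have hsymm : (((ContinuousLinearEquiv.ofUnit u).trans e).symm : V →L[ℝ] V)
        = (↑u⁻¹ : V →L[ℝ] V).comp (e.symm : V →L[ℝ] V) := by
      ext v; rfl
    rw [hsymm]
    have hinv : ‖(↑u⁻¹ : V →L[ℝ] V)‖ ≤ (1 - ‖t‖)⁻¹ := by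
      have h1 : (↑u⁻¹ : V →L[ℝ] V) = ∑' n : ℕ, t ^ n := rfl
      rw [h1]
      calc ‖∑' n : ℕ, t ^ n‖ ≤ ‖(1 : V →L[ℝ] V)‖ - 1 + (1 - ‖t‖)⁻¹ :=
            tsum_geometric_le_of_norm_lt_one t ht1
        _ ≤ (1 - ‖t‖)⁻¹ := by
            have h2 : ‖(1 : V →L[ℝ] V)‖ ≤ 1 := by
              rw [ContinuousLinearMap.one_def]; exact ContinuousLinearMap.norm_id_le
            linarith
    calc ‖(↑u⁻¹ : V →L[ℝ] V).comp (e.symm : V →L[ℝ] V)‖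
        ≤ ‖(↑u⁻¹ : V →L[ℝ] V)‖ * ‖(e.symm : V →L[ℝ] V)‖ := ContinuousLinearMap.opNorm_comp_le _ _
      _ ≤ (1 - ‖t‖)⁻¹ * ‖(e.symm : V →L[ℝ] V)‖ := by
          apply mul_le_mul_of_nonneg_right hinv (norm_nonneg _)
      _ ≤ K / (1 - K * M) := by
          rw [inv_mul_eq_div, div_le_div_iff₀ (by linarith [ht1]) (by linarith)]
          nlinarith [norm_nonneg t, norm_nonneg (e.symm : V →L[ℝ] V), htn,
            le_trans (norm_nonneg _) hK]

lemma cont_integrand {G' : V → (V →L[ℝ] V)} (hc : Continuous G') (x h : V) :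
    Continuous fun θ : ℝ => G' (x + θ • h) :=
  hc.comp (by continuity)

lemma int_linear_eval : ∀ C D : ℝ, ∫ θ in (0:ℝ)..1, (C + D*θ) = C + D/2 := by
  intro C D
  rw [intervalIntegral.integral_add (intervalIntegrable_const)
    ((intervalIntegral.intervalIntegrable_id (μ := volume) (a := 0) (b := 1)).const_mul D)]
  rw [intervalIntegral.integral_const, intervalIntegral.integral_const_mul, integral_id]
  norm_num
  ring

lemma int_diff_bound {a : ℝ} (ha : 0 ≤ a) {G' : V → (V →L[ℝ] V)}
    (hc : Continuous G') (hlip : ∀ u v, ‖G' u - G' v‖ ≤ a * ‖u - v‖)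
    (x₁ x₂ h₁ h₂ : V) :
    ‖(∫ θ in (0:ℝ)..1, G' (x₁ + θ • h₁)) - ∫ θ in (0:ℝ)..1, G' (x₂ + θ • h₂)‖
      ≤ a * ‖x₁ - x₂‖ + a * ‖h₁ - h₂‖ / 2 := by
  have c1 := cont_integrand hc x₁ h₁
  have c2 := cont_integrand hc x₂ h₂
  rw [← intervalIntegral.integral_sub (c1.intervalIntegrable 0 1) (c2.intervalIntegrable 0 1)]
  have key : ‖∫ θ in (0:ℝ)..1, (G' (x₁ + θ • h₁) - G' (x₂ + θ • h₂))‖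
      ≤ |∫ θ in (0:ℝ)..1, (a * ‖x₁ - x₂‖ + (a * ‖h₁ - h₂‖) * θ)| := by
    apply intervalIntegral.norm_integral_le_abs_of_norm_le
    · refine (MeasureTheory.ae_restrict_iff' measurableSet_uIoc).2
        (Filter.Eventually.of_forall fun θ hθ => ?_)
      rw [Set.uIoc_of_le (by norm_num : (0:ℝ) ≤ 1)] at hθ
      obtain ⟨hθ0, hθ1⟩ := hθ
      calc ‖G' (x₁ + θ • h₁) - G' (x₂ + θ • h₂)‖
          ≤ a * ‖(x₁ + θ • h₁) - (x₂ + θ • h₂)‖ := hlip _ _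
        _ ≤ a * (‖x₁ - x₂‖ + θ * ‖h₁ - h₂‖) := by
            apply mul_le_mul_of_nonneg_left _ ha
            calc ‖(x₁ + θ • h₁) - (x₂ + θ • h₂)‖ = ‖(x₁ - x₂) + θ • (h₁ - h₂)‖ := by
                  congr 1; rw [smul_sub]; abel
              _ ≤ ‖x₁ - x₂‖ + ‖θ • (h₁ - h₂)‖ := norm_add_le _ _
              _ = ‖x₁ - x₂‖ + θ * ‖h₁ - h₂‖ := by
                  rw [norm_smul, Real.norm_eq_abs, abs_of_pos hθ0]
        _ = a * ‖x₁ - x₂‖ + (a * ‖h₁ - h₂‖) * θ := by ring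
    · apply Continuous.intervalIntegrable; continuity
  rw [int_linear_eval] at key
  calc ‖∫ θ in (0:ℝ)..1, (G' (x₁ + θ • h₁) - G' (x₂ + θ • h₂))‖
      ≤ |a * ‖x₁ - x₂‖ + (a * ‖h₁ - h₂‖)/2| := key
    _ = a * ‖x₁ - x₂‖ + a * ‖h₁ - h₂‖ / 2 := by
        rw [abs_of_nonneg]; positivity

lemma ftc {G : V → V} {G' : V → (V →L[ℝ] V)}
    (hG' : ∀ y, HasFDerivAt G (G' y) y) (hc : Continuous G') (x Δ : V) :
    G (x + Δ) - G x = (∫ θ in (0:ℝ)..1, G' (x + θ • Δ)) Δ := by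
  have hderiv : ∀ θ ∈ Set.uIcc (0:ℝ) 1,
      HasDerivAt (fun τ : ℝ => G (x + τ • Δ)) (G' (x + θ • Δ) Δ) θ := by
    intro θ _
    have h1 : HasDerivAt (fun τ : ℝ => x + τ • Δ) Δ θ := by
      simpa using ((hasDerivAt_id θ).smul_const Δ).const_add x
    exact (hG' (x + θ • Δ)).comp_hasDerivAt θ h1
  have hint : IntervalIntegrable (fun θ : ℝ => G' (x + θ • Δ) Δ) volume 0 1 := by
    apply Continuous.intervalIntegrable
    exact (cont_integrand hc x Δ).clm_apply continuous_const
  have h2 := intervalIntegral.integral_eq_sub_of_hasDerivAt hderiv hint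
  simp only [one_smul, zero_smul, add_zero] at h2
  rw [← h2]
  -- now commute application with the integral
  have hInt : IntervalIntegrable (fun θ : ℝ => G' (x + θ • Δ)) volume 0 1 :=
    (cont_integrand hc x Δ).intervalIntegrable 0 1
  rw [intervalIntegral.integral_of_le (by norm_num : (0:ℝ) ≤ 1),
    intervalIntegral.integral_of_le (by norm_num : (0:ℝ) ≤ 1)]
  rw [ContinuousLinearMap.integral_apply
    ((intervalIntegrable_iff_integrableOn_Ioc_of_le (by norm_num : (0:ℝ) ≤ 1)).mp hInt)]

lemma lip {a : ℝ} {G' : V → (V →L[ℝ] V)} {G'' : V → (V →L[ℝ] V →L[ℝ] V)}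
    (hG'' : ∀ y, HasFDerivAt G' (G'' y) y) (hGb : ∀ ξ, ‖G'' ξ‖ ≤ a) (u v : V) :
    ‖G' u - G' v‖ ≤ a * ‖u - v‖ :=
  Convex.norm_image_sub_le_of_norm_hasFDerivWithin_le
    (fun x _ => (hG'' x).hasFDerivWithinAt) (fun x _ => hGb x) convex_univ
    (Set.mem_univ v) (Set.mem_univ u)

noncomputable def negId : V ≃L[ℝ] V :=
  { LinearEquiv.neg ℝ with
    continuous_toFun := continuous_neg
    continuous_invFun := continuous_neg }

lemma negId_coe : ((negId : V ≃L[ℝ] V) : V →L[ℝ] V) = -(ContinuousLinearMap.id ℝ V) := by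
  ext v; rfl

lemma negId_symm_coe : (((negId : V ≃L[ℝ] V)).symm : V →L[ℝ] V)
    = -(ContinuousLinearMap.id ℝ V) := by
  ext v; rfl

lemma negId_symm_norm : ‖(((negId : V ≃L[ℝ] V)).symm : V →L[ℝ] V)‖ ≤ 1 := by
  rw [negId_symm_coe, norm_neg]
  exact ContinuousLinearMap.norm_id_le

end ASIS16

open ASIS16

/-- **A priori error estimates for the ASIS (adimensional scale invariant Steffensen)
method.**
Let `V` be a real Banach space and `G : V → V` twice continuously Fréchet differentiable
with `‖G''(ξ)‖ ≤ a` for all `ξ`, where `0 < a ≤ 1/2`.  Let `y₀` satisfy `‖G(y₀)‖ ≤ 1` and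
`G'(y₀) = −I`.  Then the ASIS sequence `y_{n+1} = y_n − G[y_n, y_n + G(y_n)]⁻¹ G(y_n)`
(with the integral divided difference `G[x,y] = ∫₀¹ G'(x + θ(y − x)) dθ`) is well defined
and, with the Steffensen system `(a_n), (b_n), (c_n), (d_n), (r_n)`, for all `n`:
(a) `G'(y_n)` is invertible with `‖G'(y_n)⁻¹‖ ≤ a_n`;
(b) `G[y_n, y_n + G(y_n)]` is invertible with `‖G[y_n, y_n + G(y_n)]⁻¹‖ ≤ b_n`;
(c) `‖G(y_n)‖ ≤ c_n`; (d) `‖y_{n+1} − y_n‖ ≤ d_n`; (e) `‖y_n − y₀‖ ≤ r_n`. -/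
theorem stmt_16
    {V : Type*} [NormedAddCommGroup V] [NormedSpace ℝ V] [CompleteSpace V]
    (a : ℝ) (ha : 0 < a) (ha' : a ≤ 1 / 2)
    (aa bb cc dd rr : ℕ → ℝ)
    (ha0 : aa 0 = 1) (hc0 : cc 0 = 1) (hr0 : rr 0 = 0)
    (hb : ∀ n, bb n = aa n / (1 - a / 2 * aa n * cc n))
    (hd : ∀ n, dd n = bb n * cc n)
    (haa : ∀ n, aa (n + 1) = aa n / (1 - a * aa n * dd n))
    (hcc : ∀ n, cc (n + 1) = a ^ 2 / 2 * (dd n) ^ 2 * (rr n + cc n / 2))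
    (hrr : ∀ n, rr (n + 1) = rr n + dd n)
    (G : V → V) (G' : V → (V →L[ℝ] V)) (G'' : V → (V →L[ℝ] V →L[ℝ] V))
    (hG' : ∀ y, HasFDerivAt G (G' y) y)
    (hG'' : ∀ y, HasFDerivAt G' (G'' y) y)
    (hG''cont : Continuous G'')
    (hGbound : ∀ ξ, ‖G'' ξ‖ ≤ a)
    (y₀ : V) (hy₀ : ‖G y₀‖ ≤ 1)
    (hI : G' y₀ = -(ContinuousLinearMap.id ℝ V)) :
    ∃ y : ℕ → V, y 0 = y₀ ∧ ∀ n,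
      (∃ e' : V ≃L[ℝ] V, (e' : V →L[ℝ] V) = G' (y n) ∧
        ‖(e'.symm : V →L[ℝ] V)‖ ≤ aa n) ∧
      (∃ e : V ≃L[ℝ] V,
        (e : V →L[ℝ] V) = ∫ θ in (0 : ℝ)..1, G' (y n + θ • G (y n)) ∧
        ‖(e.symm : V →L[ℝ] V)‖ ≤ bb n ∧
        y (n + 1) = y n - e.symm (G (y n))) ∧
      ‖G (y n)‖ ≤ cc n ∧
      ‖y (n + 1) - y n‖ ≤ dd n ∧
      ‖y n - y₀‖ ≤ rr n := by
  have package := scalar_all ha ha' aa bb cc dd rr ha0 hc0 hr0 hb hd haa hcc hrr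
  have hlip : ∀ u v, ‖G' u - G' v‖ ≤ a * ‖u - v‖ := lip hG'' hGbound
  have hcont : Continuous G' := continuous_iff_continuousAt.2 fun y => (hG'' y).continuousAt
  refine ⟨fun n => Nat.rec y₀
    (fun _ x => x - (∫ θ in (0:ℝ)..1, G' (x + θ • G x)).inverse (G x)) n, rfl, ?_⟩
  set y : ℕ → V := fun n => Nat.rec y₀
    (fun _ x => x - (∫ θ in (0:ℝ)..1, G' (x + θ • G x)).inverse (G x)) n with hy
  have hystep : ∀ n, y (n+1)
      = y n - (∫ θ in (0:ℝ)..1, G' (y n + θ • G (y n))).inverse (G (y n)) := fun n => rfl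
  -- constant-integral identity
  have h0 : ∀ z : V, (∫ θ in (0:ℝ)..1, G' (z + θ • (0:V))) = G' z := by
    intro z; simp
  -- the induction step
  have step : ∀ n,
      ((∃ e' : V ≃L[ℝ] V, (e' : V →L[ℝ] V) = G' (y n) ∧
          ‖(e'.symm : V →L[ℝ] V)‖ ≤ aa n) ∧
        ‖G (y n)‖ ≤ cc n ∧ ‖y n - y₀‖ ≤ rr n) →
      (((∃ e' : V ≃L[ℝ] V, (e' : V →L[ℝ] V) = G' (y n) ∧
          ‖(e'.symm : V →L[ℝ] V)‖ ≤ aa n) ∧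
        (∃ e : V ≃L[ℝ] V,
          (e : V →L[ℝ] V) = ∫ θ in (0 : ℝ)..1, G' (y n + θ • G (y n)) ∧
          ‖(e.symm : V →L[ℝ] V)‖ ≤ bb n ∧
          y (n + 1) = y n - e.symm (G (y n))) ∧
        ‖G (y n)‖ ≤ cc n ∧
        ‖y (n + 1) - y n‖ ≤ dd n ∧
        ‖y n - y₀‖ ≤ rr n) ∧
      ((∃ e' : V ≃L[ℝ] V, (e' : V →L[ℝ] V) = G' (y (n+1)) ∧
          ‖(e'.symm : V →L[ℝ] V)‖ ≤ aa (n+1)) ∧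
        ‖G (y (n+1))‖ ≤ cc (n+1) ∧ ‖y (n+1) - y₀‖ ≤ rr (n+1))) := by
    intro n ⟨⟨e', he'c, he'n⟩, hGc, hyr⟩
    obtain ⟨p2, p3, p4, p5, p6, p7, p8, p9⟩ := package n
    set g : V := G (y n) with hg
    set B : V →L[ℝ] V := ∫ θ in (0:ℝ)..1, G' (y n + θ • g) with hB
    -- (b) invertibility of the divided difference
    have hBA : ‖B - (e' : V →L[ℝ] V)‖ ≤ a/2 * cc n := by
      rw [he'c]
      have := int_diff_bound ha.le hcont hlip (y n) (y n) g 0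
      rw [h0 (y n)] at this
      simp only [sub_self, norm_zero, mul_zero, zero_add, sub_zero] at this
      calc ‖B - G' (y n)‖ ≤ a * ‖g‖ / 2 := this
        _ ≤ a/2 * cc n := by
            rw [hg]; nlinarith [hGc, norm_nonneg (G (y n))]
    have hM0 : (0:ℝ) ≤ a/2 * cc n := by positivity
    obtain ⟨f, hfc, hfn⟩ := perturb e' B (aa n) (a/2 * cc n) he'n hBA hM0 p5
    rw [p6] at hfn
    have heq : y (n+1) = y n - f.symm g := by
      rw [hystep n, ← hB, ← hfc, ContinuousLinearMap.inverse_equiv]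
      rfl
    -- (d) step bound
    have hΔ : ‖y (n+1) - y n‖ ≤ dd n := by
      have h1 : y (n+1) - y n = -(f.symm g) := by rw [heq]; abel
      rw [h1, norm_neg]
      calc ‖f.symm g‖ ≤ ‖(f.symm : V →L[ℝ] V)‖ * ‖g‖ :=
            (f.symm : V →L[ℝ] V).le_opNorm g
        _ ≤ bb n * cc n := mul_le_mul hfn (hg ▸ hGc) (norm_nonneg _) p7
        _ = dd n := (hd n).symm
    -- (e) at n+1
    have hrB : ‖y (n+1) - y₀‖ ≤ rr (n+1) := by
      have h1 : y (n+1) - y₀ = (y (n+1) - y n) + (y n - y₀) := by abel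
      rw [h1, hrr n]
      calc ‖(y (n+1) - y n) + (y n - y₀)‖ ≤ ‖y (n+1) - y n‖ + ‖y n - y₀‖ := norm_add_le _ _
        _ ≤ rr n + dd n := by linarith
    -- (a) at n+1
    have haB : ∃ e₂ : V ≃L[ℝ] V, (e₂ : V →L[ℝ] V) = G' (y (n+1)) ∧
        ‖(e₂.symm : V →L[ℝ] V)‖ ≤ aa (n+1) := by
      have hb1 : ‖G' (y (n+1)) - (e' : V →L[ℝ] V)‖ ≤ a * dd n := by
        rw [he'c]
        calc ‖G' (y (n+1)) - G' (y n)‖ ≤ a * ‖y (n+1) - y n‖ := hlip _ _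
          _ ≤ a * dd n := mul_le_mul_of_nonneg_left hΔ ha.le
      obtain ⟨f₂, hf₂c, hf₂n⟩ := perturb e' (G' (y (n+1))) (aa n) (a * dd n) he'n hb1
        (by positivity) p8
      rw [p9] at hf₂n
      exact ⟨f₂, hf₂c, hf₂n⟩
    -- (c) at n+1
    have hcB : ‖G (y (n+1))‖ ≤ cc (n+1) := by
      set Δ : V := y (n+1) - y n with hΔdef
      set M' : V →L[ℝ] V := ∫ θ in (0:ℝ)..1, G' (y n + θ • Δ) with hM'
      have hBΔ : B Δ = -g := by
        have h1 : Δ = -(f.symm g) := by rw [hΔdef, heq]; abel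
        rw [← hfc]
        show f (Δ) = -g
        rw [h1, map_neg, f.apply_symm_apply]
      have hGn1 : G (y (n+1)) = (M' - B) Δ := by
        have h2 : y n + Δ = y (n+1) := by rw [hΔdef]; abel
        have h3 := ftc hG' hcont (y n) Δ
        rw [h2, ← hM'] at h3
        have : G (y (n+1)) = G (y n) + M' Δ := by
          rw [← h3]; abel
        rw [this, ContinuousLinearMap.sub_apply, ← hg, hBΔ]
        abel
      have hMB : ‖M' - B‖ ≤ a/2 * ‖Δ - g‖ := by
        have := int_diff_bound ha.le hcont hlip (y n) (y n) Δ g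
        rw [← hM', ← hB] at this
        simp only [sub_self, norm_zero, mul_zero, zero_add] at this
        calc ‖M' - B‖ ≤ a * ‖Δ - g‖ / 2 := this
          _ = a/2 * ‖Δ - g‖ := by ring
      have hΔg : ‖Δ - g‖ ≤ (a * rr n + a * cc n / 2) * ‖Δ‖ := by
        have h4 : Δ - g = (B - G' y₀) Δ := by
          rw [ContinuousLinearMap.sub_apply, hI, hBΔ]
          simp
          abel
        have h5 : ‖B - G' y₀‖ ≤ a * rr n + a * cc n / 2 := by
          have := int_diff_bound ha.le hcont hlip (y n) y₀ g 0
          rw [h0 y₀, ← hB, sub_zero] at this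
          calc ‖B - G' y₀‖ ≤ a * ‖y n - y₀‖ + a * ‖g‖ / 2 := this
            _ ≤ a * rr n + a * cc n / 2 := by
                have := mul_le_mul_of_nonneg_left hyr ha.le
                have h6 := mul_le_mul_of_nonneg_left (hg ▸ hGc) ha.le
                linarith
        rw [h4]
        calc ‖(B - G' y₀) Δ‖ ≤ ‖B - G' y₀‖ * ‖Δ‖ := (B - G' y₀).le_opNorm Δ
          _ ≤ (a * rr n + a * cc n / 2) * ‖Δ‖ := by
              apply mul_le_mul_of_nonneg_right h5 (norm_nonneg _)
      have hS0 : (0:ℝ) ≤ a * rr n + a * cc n / 2 := by positivity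
      have hΔd : ‖Δ‖ ≤ dd n := hΔ
      have m1 : ‖Δ - g‖ ≤ (a * rr n + a * cc n / 2) * dd n :=
        le_trans hΔg (mul_le_mul_of_nonneg_left hΔd hS0)
      have m2 : ‖M' - B‖ ≤ a/2 * ((a * rr n + a * cc n / 2) * dd n) :=
        le_trans hMB (mul_le_mul_of_nonneg_left m1 (by positivity))
      have m3 : ‖G (y (n+1))‖ ≤ (a/2 * ((a * rr n + a * cc n / 2) * dd n)) * dd n := by
        rw [hGn1]
        calc ‖(M' - B) Δ‖ ≤ ‖M' - B‖ * ‖Δ‖ := (M' - B).le_opNorm Δ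
          _ ≤ _ := mul_le_mul m2 hΔd (norm_nonneg _) (by positivity)
      rw [hcc n]
      calc ‖G (y (n+1))‖ ≤ (a/2 * ((a * rr n + a * cc n / 2) * dd n)) * dd n := m3
        _ = a ^ 2 / 2 * dd n ^ 2 * (rr n + cc n / 2) := by ring
    exact ⟨⟨⟨e', he'c, he'n⟩, ⟨f, hfc.symm ▸ rfl, hfn, heq⟩, hGc, hΔ, hyr⟩, haB, hcB, hrB⟩
  have main : ∀ n, (∃ e' : V ≃L[ℝ] V, (e' : V →L[ℝ] V) = G' (y n) ∧
      ‖(e'.symm : V →L[ℝ] V)‖ ≤ aa n) ∧ ‖G (y n)‖ ≤ cc n ∧ ‖y n - y₀‖ ≤ rr n := by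
    intro n
    induction n with
    | zero =>
      refine ⟨⟨negId, ?_, by rw [ha0]; exact negId_symm_norm⟩, ?_, ?_⟩
      · rw [negId_coe]; exact hI.symm
      · rw [hc0]; exact hy₀
      · show ‖y₀ - y₀‖ ≤ rr 0
        rw [hr0]; simp
    | succ n ih => exact (step n ih).2
  exact fun n => (step n (main n)).1
end

section
/- Let E and V be real Banach spaces, F : E → V twice continuously Fréchet differentiable, and x₀ ∈ E with F(x₀) ≠ 0 and F'(x₀) invertible. Let K₂, B, η > 0 satisfy ‖F(x₀)‖ ≤ η/B, ‖F'(x₀)⁻¹‖ ≤ B, ‖F''(x)‖ ≤ K₂ for all x ∈ E, and a := K₂Bη ≤ 1/2. Define the adimensional form G(y) = F(−‖F(x₀)‖·F'(x₀)⁻¹ y)/‖F(x₀)‖, set y₀ = −F'(x₀)x₀/‖F(x₀)‖, and let (y_n) be the ASIS sequence y_{n+1} = y_n − G[y_n, y_n + G(y_n)]⁻¹ G(y_n) with G[x,y] = ∫₀¹ G'(x + θ(y − x)) dθ. Then (y_n) is well defined and converges to a point y* with G(y*) = 0, and, setting x_n = −‖F(x₀)‖·F'(x₀)⁻¹ y_n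 and x* = −‖F(x₀)‖·F'(x₀)⁻¹ y*, one has F(x*) = 0 and, for all n ≥ 0: ‖x_{n+1} − x_n‖ ≤ d_n·η; ‖x* − x_n‖ ≤ (s* − r_n)·η; and F'(x_n) is invertible with ‖F'(x_n)⁻¹‖ ≤ a_n·B, where s* = (1 − √(1 − 2a))/a. -/
/-- Neumann-series perturbation lemma. -/
lemma asis_unit_perturb {R : Type*} [NormedRing R] [CompleteSpace R]
    (h1 : ‖(1:R)‖ ≤ 1) {x y : R} (hx : IsUnit x) {α β : ℝ}
    (hα : ‖Ring.inverse x‖ ≤ α) (hxy : ‖y - x‖ ≤ β) (hαβ : α * β < 1) :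
    IsUnit y ∧ ‖Ring.inverse y‖ ≤ α / (1 - α * β) := by
  have hα0 : 0 ≤ α := le_trans (norm_nonneg _) hα
  have hβ0 : 0 ≤ β := le_trans (norm_nonneg _) hxy
  set t : R := Ring.inverse x * (x - y) with ht
  have hxt : x * (1 - t) = y := by
    have hxi : x * Ring.inverse x = 1 := Ring.mul_inverse_cancel x hx
    calc x * (1 - t) = x - (x * Ring.inverse x) * (x - y) := by
          rw [ht, mul_sub, mul_one, mul_assoc]
    _ = y := by rw [hxi, one_mul, sub_sub_cancel]
  have htn : ‖t‖ ≤ α * β := by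
    calc ‖t‖ ≤ ‖Ring.inverse x‖ * ‖x - y‖ := norm_mul_le _ _
    _ ≤ α * β := by
        have h := norm_sub_rev x y
        exact mul_le_mul hα (by rw [h]; exact hxy) (norm_nonneg _) hα0
  have htlt : ‖t‖ < 1 := lt_of_le_of_lt htn hαβ
  have hu : IsUnit (1 - t) := isUnit_one_sub_of_norm_lt_one htlt
  have hy : IsUnit y := hxt ▸ hx.mul hu
  refine ⟨hy, ?_⟩
  have hinvy : Ring.inverse y = Ring.inverse (1 - t) * Ring.inverse x := by
    have h2 : (↑(hx.unit * hu.unit) : R) = y := by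
      rw [Units.val_mul, hx.unit_spec, hu.unit_spec, hxt]
    rw [← h2, Ring.inverse_unit, mul_inv_rev, Units.val_mul, ← Ring.inverse_unit hu.unit,
      ← Ring.inverse_unit hx.unit, hu.unit_spec, hx.unit_spec]
  have hser : Ring.inverse (1 - t) = ∑' n : ℕ, t ^ n := (geom_series_eq_inverse t htlt).symm
  have hnorm1t : ‖Ring.inverse (1 - t)‖ ≤ (1 - ‖t‖)⁻¹ := by
    rw [hser]
    calc ‖∑' n : ℕ, t ^ n‖ ≤ ‖(1:R)‖ - 1 + (1 - ‖t‖)⁻¹ := tsum_geometric_le_of_norm_lt_one t htlt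
    _ ≤ (1 - ‖t‖)⁻¹ := by linarith
  have h2 : (1 - ‖t‖)⁻¹ ≤ (1 - α * β)⁻¹ := by
    apply inv_anti₀ (by linarith) (by linarith)
  calc ‖Ring.inverse y‖ ≤ ‖Ring.inverse (1 - t)‖ * ‖Ring.inverse x‖ := hinvy ▸ norm_mul_le _ _
  _ ≤ (1 - α * β)⁻¹ * α :=
      mul_le_mul (le_trans hnorm1t h2) hα (norm_nonneg _) (inv_nonneg.mpr (by linarith))
  _ = α / (1 - α * β) := by rw [div_eq_mul_inv]; ring

set_option maxHeartbeats 1000000 in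
/-- Closed-form invariants and estimates for the Steffensen scalar system. -/
lemma asis_scalars (a : ℝ) (ha : 0 < a) (hKant : a ≤ 1/2)
    (aa bb cc dd rr : ℕ → ℝ)
    (ha0 : aa 0 = 1) (hc0 : cc 0 = 1) (hr0 : rr 0 = 0)
    (hb : ∀ n, bb n = aa n / (1 - a / 2 * aa n * cc n))
    (hd : ∀ n, dd n = bb n * cc n)
    (haa : ∀ n, aa (n + 1) = aa n / (1 - a * aa n * dd n))
    (hcc : ∀ n, cc (n + 1) = a ^ 2 / 2 * (dd n) ^ 2 * (rr n + cc n / 2))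
    (hrr : ∀ n, rr (n + 1) = rr n + dd n)
    (sstar : ℝ) (hsstar : sstar = (1 - Real.sqrt (1 - 2 * a)) / a) :
    ∀ n, 0 ≤ rr n ∧ rr n < sstar ∧ 0 < cc n ∧ 0 < aa n ∧
      aa n * (a / 2 * cc n) < 1 ∧ 0 < bb n ∧ 0 < dd n ∧ cc n ≤ dd n ∧
      dd n ≤ sstar - rr n ∧ aa n * (a * dd n) < 1 := by
  obtain ⟨s, hsdef⟩ : ∃ s, s = Real.sqrt (1 - 2*a) := ⟨_, rfl⟩
  have hD : 0 ≤ 1 - 2*a := by linarith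
  have hs2 : s^2 = 1 - 2*a := by rw [hsdef]; exact Real.sq_sqrt hD
  have hs0 : 0 ≤ s := hsdef ▸ Real.sqrt_nonneg _
  have hslt : s < 1 := by nlinarith
  rw [← hsdef] at hsstar
  clear hsdef
  obtain ⟨s2, hs2def⟩ : ∃ x, x = (1 + s)/a := ⟨_, rfl⟩
  have hsum : sstar + s2 = 2/a := by rw [hsstar, hs2def]; field_simp; ring
  have hprod : sstar * s2 = 2/a := by
    rw [hsstar, hs2def]; field_simp; nlinarith
  have hfact : ∀ t : ℝ, a/2 * t^2 - t + 1 = a/2 * ((sstar - t) * (s2 - t)) := by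
    intro t
    have h1 : a/2 * ((sstar - t)*(s2 - t)) = a/2*t^2 - (a/2)*(sstar + s2)*t + a/2*(sstar*s2) := by
      ring
    rw [h1, hsum, hprod]; field_simp
  have hs1pos : 0 < sstar := by rw [hsstar]; exact div_pos (by linarith) ha
  have hs1s2 : sstar ≤ s2 := by
    rw [hsstar, hs2def]; exact (div_le_div_iff_of_pos_right ha).mpr (by linarith)
  have hasstar : a * sstar = 1 - s := by rw [hsstar]; field_simp
  have has2 : a/2 * s2 = (1 + s)/2 := by rw [hs2def]; field_simp
  clear hs2def hsstar
  -- derived facts from the invariant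
  have facts : ∀ n, (0 ≤ rr n ∧ rr n < sstar ∧
      cc n = a/2 * (rr n)^2 - rr n + 1 ∧ aa n * (1 - a * rr n) = 1) →
      0 < cc n ∧ 0 < aa n ∧ aa n * (a / 2 * cc n) < 1 ∧ 0 < bb n ∧ 0 < dd n ∧
      cc n ≤ dd n ∧ dd n < sstar - rr n ∧ aa n * (a * dd n) < 1 ∧
      cc n = dd n * (1 - a * rr n - a/2 * cc n) := by
    intro n hn
    obtain ⟨ht0, hts, hcp, hA⟩ := hn
    have hu : 0 < sstar - rr n := by linarith
    have hv0 : 0 < s2 - rr n := by linarith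
    have hav2 : a/2 * (s2 - rr n) < 1 := by
      have h1 : a/2 * (s2 - rr n) ≤ a/2 * s2 :=
        mul_le_mul_of_nonneg_left (by linarith) (by linarith)
      rw [has2] at h1; linarith
    have hcfact : cc n = a/2 * ((sstar - rr n) * (s2 - rr n)) := by rw [hcp]; exact hfact _
    have hcpos : 0 < cc n := by rw [hcfact]; positivity
    have h1at : (1 : ℝ) - a * rr n = a/2 * ((sstar - rr n) + (s2 - rr n)) := by
      have h2 : a/2 * (sstar + s2) = 1 := by rw [hsum]; field_simp
      linear_combination -h2
    have h1atpos : 0 < 1 - a * rr n := by rw [h1at]; positivity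
    have hApos : 0 < aa n := by nlinarith
    have hq : 0 < 1 - a * rr n - a/2 * cc n := by
      have h3 : 1 - a * rr n - a/2 * cc n
          = a/2 * ((sstar - rr n) * (1 - a/2*(s2 - rr n)) + (s2 - rr n)) := by
        rw [h1at, hcfact]; ring
      rw [h3]
      have := mul_nonneg hu.le (sub_pos.mpr hav2).le
      positivity
    have hdenom : 1 - a/2 * aa n * cc n = aa n * (1 - a * rr n - a/2 * cc n) := by
      linear_combination -hA
    have hbb : bb n = 1 / (1 - a * rr n - a/2 * cc n) := by
      rw [hb n, hdenom, div_mul_eq_div_div, div_self (ne_of_gt hApos)]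
    have hdq : dd n = cc n / (1 - a * rr n - a/2 * cc n) := by
      rw [hd n, hbb, div_mul_eq_mul_div, one_mul]
    have hd0 : 0 < dd n := by rw [hdq]; positivity
    have hb0 : 0 < bb n := by
      rcases mul_pos_iff.1 (hd n ▸ hd0) with ⟨h, _⟩ | ⟨_, h⟩
      · exact h
      · linarith
    have hq1 : 1 - a * rr n - a/2 * cc n ≤ 1 := by nlinarith
    have hcd : cc n ≤ dd n := by
      rw [hdq, le_div_iff₀ hq]; nlinarith
    have hdu : dd n < sstar - rr n := by
      rw [hdq, div_lt_iff₀ hq]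
      have key : (sstar - rr n) * (1 - a * rr n - a/2 * cc n) - cc n
          = a/2 * (sstar - rr n)^2 * (1 - a/2*(s2 - rr n)) := by
        rw [h1at, hcfact]; ring
      nlinarith [mul_pos (mul_pos (by linarith : (0:ℝ) < a/2) (mul_pos hu hu))
        (sub_pos.mpr hav2)]
    have h7 : aa n * (a/2 * cc n) < 1 := by nlinarith [mul_pos hApos hq]
    have h12 : aa n * (a * dd n) < 1 := by
      have e1 : a * dd n < a * (sstar - rr n) := mul_lt_mul_of_pos_left hdu ha
      have e2 : a * (sstar - rr n) = (1 - s) - a * rr n := by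
        rw [← hasstar]; ring
      have e3 : a * dd n < 1 - a * rr n := by linarith
      nlinarith
    have hX : cc n = dd n * (1 - a * rr n - a/2 * cc n) := by
      rw [hdq, div_mul_cancel₀ _ (ne_of_gt hq)]
    exact ⟨hcpos, hApos, h7, hb0, hd0, hcd, hdu, h12, hX⟩
  have main : ∀ n, 0 ≤ rr n ∧ rr n < sstar ∧
      cc n = a/2 * (rr n)^2 - rr n + 1 ∧ aa n * (1 - a * rr n) = 1 := by
    intro n
    induction n with
    | zero =>
      refine ⟨by rw [hr0], by rw [hr0]; exact hs1pos, by rw [hc0, hr0]; ring,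
        by rw [ha0, hr0]; ring⟩
    | succ n ih =>
      obtain ⟨ht0, hts, hcp, hA⟩ := ih
      obtain ⟨hcpos, hApos, h7, hb0, hd0, hcd, hdu, h12, hX⟩ :=
        facts n ⟨ht0, hts, hcp, hA⟩
      have hr1 : 0 ≤ rr (n+1) := by rw [hrr n]; linarith
      have hr2 : rr (n+1) < sstar := by rw [hrr n]; linarith
      have hc1 : cc (n+1) = a/2 * (rr (n+1))^2 - rr (n+1) + 1 := by
        rw [hcc n, hrr n]
        linear_combination hcp + (a/2 * dd n - 1) * hX
      have h1at' : 0 < 1 - a * rr (n+1) := by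
        have e1 : a * rr (n+1) < a * sstar := mul_lt_mul_of_pos_left hr2 ha
        linarith [hasstar, hs0]
      have hA1 : aa (n+1) * (1 - a * rr (n+1)) = 1 := by
        rw [haa n]
        have hden : 1 - a * aa n * dd n = aa n * (1 - a * rr (n+1)) := by
          rw [hrr n]; linear_combination -hA
        rw [hden]
        have h1 : aa n ≠ 0 := ne_of_gt hApos
        have h2 : (1 - a * rr (n+1)) ≠ 0 := ne_of_gt h1at'
        field_simp
      exact ⟨hr1, hr2, hc1, hA1⟩
  intro n
  obtain ⟨ht0, hts, hcp, hA⟩ := main n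
  obtain ⟨hcpos, hApos, h7, hb0, hd0, hcd, hdu, h12, hX⟩ := facts n (main n)
  exact ⟨ht0, hts, hcpos, hApos, h7, hb0, hd0, hcd, hdu.le, h12⟩

open MeasureTheory intervalIntegral in
/-- Bound on a difference-of-divided-difference type interval integral. -/
lemma asis_int_bound {W : Type*} [NormedAddCommGroup W] [NormedSpace ℝ W] [CompleteSpace W]
    (f : ℝ → W) (hf : Continuous f) (κ l : ℝ)
    (hbound : ∀ θ ∈ Set.Icc (0:ℝ) 1, ‖f θ‖ ≤ κ + l * θ) (hκ : 0 ≤ κ) (hl : 0 ≤ l) :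
    ‖∫ θ in (0:ℝ)..1, f θ‖ ≤ κ + l / 2 := by
  have hint : IntervalIntegrable (fun θ : ℝ => κ + l * θ) volume 0 1 := by
    apply Continuous.intervalIntegrable; continuity
  have h1 : ‖∫ θ in (0:ℝ)..1, f θ‖ ≤ |∫ θ in (0:ℝ)..1, (κ + l * θ)| := by
    apply norm_integral_le_abs_of_norm_le ?_ hint
    · rw [Set.uIoc_of_le (by norm_num : (0:ℝ) ≤ 1)]
      filter_upwards [ae_restrict_mem measurableSet_Ioc] with θ hθ
      exact hbound θ ⟨hθ.1.le, hθ.2⟩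
  have h2 : (∫ θ in (0:ℝ)..1, (κ + l * θ)) = κ + l / 2 := by
    rw [integral_add (intervalIntegrable_const) (by apply Continuous.intervalIntegrable; continuity),
      intervalIntegral.integral_const, intervalIntegral.integral_const_mul, integral_id]
    simp; ring
  rw [h2] at h1
  exact le_trans h1 (le_of_eq (abs_of_nonneg (by positivity)))

/-- Mean value form: divided difference applied to the increment. -/
lemma asis_mean_value {V : Type*} [NormedAddCommGroup V] [NormedSpace ℝ V] [CompleteSpace V]
    (G : V → V) (Gd : V → V →L[ℝ] V) (hG : ∀ y, HasFDerivAt G (Gd y) y)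
    (hcont : Continuous Gd) (u h : V) :
    G (u + h) - G u = (∫ θ in (0:ℝ)..1, Gd (u + θ • h)) h := by
  have hcont2 : Continuous fun θ : ℝ => Gd (u + θ • h) :=
    hcont.comp (by continuity)
  have hcurve : ∀ θ : ℝ, HasDerivAt (fun τ : ℝ => G (u + τ • h)) (Gd (u + θ • h) h) θ := by
    intro θ
    have h1 : HasDerivAt (fun τ : ℝ => u + τ • h) h θ := by
      simpa using ((hasDerivAt_id θ).smul_const h).const_add u
    exact HasFDerivAt.comp_hasDerivAt θ (hG (u + θ • h)) h1
  have hint : IntervalIntegrable (fun θ : ℝ => (Gd (u + θ • h)) h) MeasureTheory.volume 0 1 :=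
    (hcont2.clm_apply continuous_const).intervalIntegrable 0 1
  have hFTC : (∫ θ in (0:ℝ)..1, (Gd (u + θ • h)) h)
      = G (u + (1:ℝ) • h) - G (u + (0:ℝ) • h) :=
    intervalIntegral.integral_eq_sub_of_hasDerivAt (fun θ _ => hcurve θ) hint
  rw [ContinuousLinearMap.intervalIntegral_apply (hcont2.intervalIntegrable 0 1) h, hFTC]
  simp

set_option maxHeartbeats 2000000 in
/-- **Semilocal convergence of the ASIS method (main theorem).**
Let `E`, `V` be real Banach spaces, `F : E → V` twice continuously Fréchet differentiable,
`x₀ ∈ E` with `F(x₀) ≠ 0` and `F'(x₀)` invertible.  Let `K₂, B, η > 0` satisfy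
`‖F(x₀)‖ ≤ η/B`, `‖F'(x₀)⁻¹‖ ≤ B`, `‖F''(x)‖ ≤ K₂` for all `x`, and `a := K₂Bη ≤ 1/2`.
With the adimensional form `G(y) = F(−‖F(x₀)‖·F'(x₀)⁻¹y)/‖F(x₀)‖`,
`y₀ = −F'(x₀)x₀/‖F(x₀)‖`, the ASIS sequence
`y_{n+1} = y_n − G[y_n, y_n + G(y_n)]⁻¹ G(y_n)` (integral divided differences) is well
defined and converges to a root `y*` of `G`.  Setting `x_n = −‖F(x₀)‖·F'(x₀)⁻¹ y_n` and
`x* = −‖F(x₀)‖·F'(x₀)⁻¹ y*`, one has `F(x*) = 0` and, for all `n`: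
`‖x_{n+1} − x_n‖ ≤ d_n η`; `‖x* − x_n‖ ≤ (s* − r_n) η`; `F'(x_n)` is invertible with
`‖F'(x_n)⁻¹‖ ≤ a_n B`, where `s* = (1 − √(1 − 2a))/a` and `(a_n), (b_n), (c_n), (d_n),
(r_n)` is the Steffensen system of sequences associated with `a`. -/
theorem stmt_17
    {E V : Type*} [NormedAddCommGroup E] [NormedSpace ℝ E] [CompleteSpace E]
    [NormedAddCommGroup V] [NormedSpace ℝ V] [CompleteSpace V]
    (F : E → V) (F' : E → (E →L[ℝ] V)) (F'' : E → (E →L[ℝ] E →L[ℝ] V))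
    (hF' : ∀ x, HasFDerivAt F (F' x) x)
    (hF'' : ∀ x, HasFDerivAt F' (F'' x) x)
    (hF''cont : Continuous F'')
    (x₀ : E) (hx₀ : F x₀ ≠ 0)
    (e₀ : E ≃L[ℝ] V) (he₀ : (e₀ : E →L[ℝ] V) = F' x₀)
    (K₂ B η : ℝ) (hK₂ : 0 < K₂) (hB : 0 < B) (hη : 0 < η)
    (hF₀ : ‖F x₀‖ ≤ η / B)
    (hBinv : ‖(e₀.symm : V →L[ℝ] E)‖ ≤ B)
    (hbound : ∀ x, ‖F'' x‖ ≤ K₂)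
    (a : ℝ) (haK : a = K₂ * B * η) (hKant : a ≤ 1 / 2)
    (aa bb cc dd rr : ℕ → ℝ)
    (ha0 : aa 0 = 1) (hc0 : cc 0 = 1) (hr0 : rr 0 = 0)
    (hb : ∀ n, bb n = aa n / (1 - a / 2 * aa n * cc n))
    (hd : ∀ n, dd n = bb n * cc n)
    (haa : ∀ n, aa (n + 1) = aa n / (1 - a * aa n * dd n))
    (hcc : ∀ n, cc (n + 1) = a ^ 2 / 2 * (dd n) ^ 2 * (rr n + cc n / 2))
    (hrr : ∀ n, rr (n + 1) = rr n + dd n)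
    (sstar : ℝ) (hsstar : sstar = (1 - Real.sqrt (1 - 2 * a)) / a)
    (T : V → E) (hT : T = fun y => -(‖F x₀‖ • e₀.symm y))
    (G : V → V) (hG : G = fun y => (‖F x₀‖)⁻¹ • F (T y))
    (y₀ : V) (hy₀ : y₀ = -((‖F x₀‖)⁻¹ • e₀ x₀)) :
    ∃ y : ℕ → V, y 0 = y₀ ∧
      (∀ n, ∃ e : V ≃L[ℝ] V,
        (e : V →L[ℝ] V) = ∫ θ in (0 : ℝ)..1, fderiv ℝ G (y n + θ • G (y n)) ∧
        y (n + 1) = y n - e.symm (G (y n))) ∧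
      ∃ ys : V, Filter.Tendsto y Filter.atTop (nhds ys) ∧ G ys = 0 ∧
        F (T ys) = 0 ∧
        (∀ n, ‖T (y (n + 1)) - T (y n)‖ ≤ dd n * η) ∧
        (∀ n, ‖T ys - T (y n)‖ ≤ (sstar - rr n) * η) ∧
        (∀ n, ∃ en : E ≃L[ℝ] V, (en : E →L[ℝ] V) = F' (T (y n)) ∧
          ‖(en.symm : V →L[ℝ] E)‖ ≤ aa n * B) := by
  have hc : (0:ℝ) < ‖F x₀‖ := norm_pos_iff.mpr hx₀
  have hVnt : Nontrivial V := ⟨⟨F x₀, 0, hx₀⟩⟩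
  have ha : 0 < a := by rw [haK]; positivity
  have hcB : ‖F x₀‖ * B ≤ η := by
    have h1 := (le_div_iff₀ hB).mp hF₀; linarith
  -- T as a continuous linear map
  have hTlin : ∀ u v : V, T u - T v = -(‖F x₀‖ • e₀.symm (u - v)) := by
    intro u v; rw [hT]; simp only [map_sub, smul_sub]; abel
  have hTlip : ∀ u v : V, ‖T u - T v‖ ≤ η * ‖u - v‖ := by
    intro u v
    rw [hTlin, norm_neg, norm_smul, Real.norm_eq_abs, abs_of_pos hc]
    have h1 : ‖e₀.symm (u - v)‖ ≤ B * ‖u - v‖ :=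
      le_trans ((e₀.symm : V →L[ℝ] E).le_opNorm _)
        (mul_le_mul_of_nonneg_right hBinv (norm_nonneg _))
    calc ‖F x₀‖ * ‖e₀.symm (u - v)‖ ≤ ‖F x₀‖ * (B * ‖u - v‖) :=
          mul_le_mul_of_nonneg_left h1 hc.le
    _ = (‖F x₀‖ * B) * ‖u - v‖ := by ring
    _ ≤ η * ‖u - v‖ := mul_le_mul_of_nonneg_right hcB (norm_nonneg _)
  -- the derivative of G
  obtain ⟨Gd, hGdDef⟩ : ∃ Gd : V → (V →L[ℝ] V),
      Gd = fun y => -((F' (T y)).comp (e₀.symm : V →L[ℝ] E)) := ⟨_, rfl⟩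
  have hGd : ∀ y, HasFDerivAt G (Gd y) y := by
    intro y
    obtain ⟨Tlin, hTlinDef⟩ : ∃ Tl : V →L[ℝ] E, Tl = -(‖F x₀‖ • (e₀.symm : V →L[ℝ] E)) :=
      ⟨_, rfl⟩
    have hTfun : T = fun v => Tlin v := by
      rw [hT, hTlinDef]; funext v
      simp [ContinuousLinearMap.neg_apply, ContinuousLinearMap.smul_apply]
    have h1 : HasFDerivAt (fun v : V => F (Tlin v)) ((F' (Tlin y)).comp Tlin) y :=
      (hF' (Tlin y)).comp y Tlin.hasFDerivAt
    have h2 : HasFDerivAt G ((‖F x₀‖)⁻¹ • ((F' (T y)).comp Tlin)) y := by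
      rw [hG, hTfun]
      exact h1.const_smul _
    convert h2 using 1
    rw [hGdDef, hTlinDef]
    ext v
    simp only [ContinuousLinearMap.coe_smul', Pi.smul_apply, ContinuousLinearMap.coe_comp',
      Function.comp_apply, ContinuousLinearMap.neg_apply, ContinuousLinearMap.smul_apply,
      ContinuousLinearMap.coe_coe, map_neg, map_smul, smul_neg, smul_smul,
      inv_mul_cancel₀ hc.ne', one_smul]
  -- Lipschitz bound for F'
  have hF'lip : ∀ u v : E, ‖F' u - F' v‖ ≤ K₂ * ‖u - v‖ := by
    intro u v
    exact Convex.norm_image_sub_le_of_norm_hasFDerivWithin_le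
      (fun x _ => (hF'' x).hasFDerivWithinAt) (fun x _ => hbound x) convex_univ
      (Set.mem_univ v) (Set.mem_univ u)
  -- Lipschitz bound for Gd
  have hGdlip : ∀ u v : V, ‖Gd u - Gd v‖ ≤ a * ‖u - v‖ := by
    intro u v
    have h1 : Gd u - Gd v = ((F' (T v)) - (F' (T u))).comp (e₀.symm : V →L[ℝ] E) := by
      rw [hGdDef]; ext w
      simp [ContinuousLinearMap.sub_apply, ContinuousLinearMap.comp_apply]
      abel
    rw [h1]
    calc ‖((F' (T v)) - (F' (T u))).comp (e₀.symm : V →L[ℝ] E)‖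
        ≤ ‖F' (T v) - F' (T u)‖ * ‖(e₀.symm : V →L[ℝ] E)‖ := ContinuousLinearMap.opNorm_comp_le _ _
    _ ≤ (K₂ * ‖T v - T u‖) * B := by
        apply mul_le_mul (hF'lip _ _) hBinv (norm_nonneg _)
        positivity
    _ ≤ (K₂ * (η * ‖v - u‖)) * B := by
        have := hTlip v u
        have hK := hK₂.le
        nlinarith [norm_nonneg (T v - T u), norm_nonneg (v - u)]
    _ = (K₂ * B * η) * ‖v - u‖ := by ring
    _ = a * ‖u - v‖ := by rw [← haK, norm_sub_rev]
  have hGdcont : Continuous Gd := by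
    have h1 : LipschitzWith (Real.toNNReal a) Gd := by
      apply LipschitzWith.of_dist_le_mul
      intro u v
      rw [dist_eq_norm, dist_eq_norm, Real.coe_toNNReal a ha.le]
      exact hGdlip u v
    exact h1.continuous
  have hGcont : Continuous G :=
    continuous_iff_continuousAt.mpr fun z => (hGd z).continuousAt
  -- special values at y₀
  have hTy₀ : T y₀ = x₀ := by
    rw [hT, hy₀]
    simp only [map_neg, map_smul, smul_neg, neg_neg, smul_smul, mul_inv_cancel₀ hc.ne',
      one_smul, ContinuousLinearEquiv.symm_apply_apply]
  have hGd0 : Gd y₀ = -(1 : V →L[ℝ] V) := by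
    rw [hGdDef]
    show -((F' (T y₀)).comp (e₀.symm : V →L[ℝ] E)) = -(1 : V →L[ℝ] V)
    rw [hTy₀, ← he₀, ContinuousLinearEquiv.coe_comp_coe_symm]
    rfl
  have hGy₀ : ‖G y₀‖ = 1 := by
    rw [hG]
    show ‖(‖F x₀‖)⁻¹ • F (T y₀)‖ = 1
    rw [hTy₀, norm_smul, Real.norm_eq_abs, abs_of_pos (inv_pos.mpr hc), inv_mul_cancel₀ hc.ne']
  -- divided difference operator and the iteration
  obtain ⟨L, hLdef⟩ : ∃ L : V → (V →L[ℝ] V),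
      L = fun w => ∫ θ in (0:ℝ)..1, Gd (w + θ • G w) := ⟨_, rfl⟩
  obtain ⟨y, hy⟩ : ∃ y : ℕ → V,
      y = fun n => Nat.rec y₀ (fun _ z => z - (Ring.inverse (L z)) (G z)) n := ⟨_, rfl⟩
  have hy0 : y 0 = y₀ := by rw [hy]; rfl
  have hystep : ∀ n, y (n + 1) = y n - (Ring.inverse (L (y n))) (G (y n)) := by
    intro n; rw [hy]
  -- continuity in θ
  have hcontθ : ∀ w h : V, Continuous fun θ : ℝ => Gd (w + θ • h) := by
    intro w h
    exact hGdcont.comp (by continuity)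
  have hsubint : ∀ (w h : V) (A : V →L[ℝ] V),
      (∫ θ in (0:ℝ)..1, Gd (w + θ • h)) - A = ∫ θ in (0:ℝ)..1, (Gd (w + θ • h) - A) := by
    intro w h A
    rw [intervalIntegral.integral_sub ((hcontθ w h).intervalIntegrable 0 1)
      intervalIntegrable_const, intervalIntegral.integral_const]
    norm_num
  -- three divided-difference estimates
  have hDD : ∀ (w h : V) (A : V →L[ℝ] V) (κ : ℝ), 0 ≤ κ →
      (∀ θ : ℝ, θ ∈ Set.Icc (0:ℝ) 1 → ‖Gd (w + θ • h) - A‖ ≤ κ + (a * ‖h‖) * θ) →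
      ‖(∫ θ in (0:ℝ)..1, Gd (w + θ • h)) - A‖ ≤ κ + (a * ‖h‖) / 2 := by
    intro w h A κ hκ hbd
    rw [hsubint w h A]
    exact asis_int_bound _ ((hcontθ w h).sub continuous_const) κ (a * ‖h‖) hbd hκ
      (by positivity)
  have hDD1 : ∀ w h : V, ‖(∫ θ in (0:ℝ)..1, Gd (w + θ • h)) - Gd w‖ ≤ a / 2 * ‖h‖ := by
    intro w h
    have h1 := hDD w h (Gd w) 0 le_rfl ?_
    · calc ‖(∫ θ in (0:ℝ)..1, Gd (w + θ • h)) - Gd w‖ ≤ 0 + (a * ‖h‖) / 2 := h1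
      _ = a / 2 * ‖h‖ := by ring
    · intro θ hθ
      calc ‖Gd (w + θ • h) - Gd w‖ ≤ a * ‖(w + θ • h) - w‖ := hGdlip _ _
      _ = a * (θ * ‖h‖) := by
          rw [add_sub_cancel_left, norm_smul, Real.norm_eq_abs, abs_of_nonneg hθ.1]
      _ = 0 + (a * ‖h‖) * θ := by ring
  have hDDy₀ : ∀ w h : V, ‖(∫ θ in (0:ℝ)..1, Gd (w + θ • h)) - Gd y₀‖
      ≤ a * ‖w - y₀‖ + (a * ‖h‖) / 2 := by
    intro w h
    apply hDD w h (Gd y₀) (a * ‖w - y₀‖) (by positivity)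
    intro θ hθ
    calc ‖Gd (w + θ • h) - Gd y₀‖ ≤ a * ‖(w + θ • h) - y₀‖ := hGdlip _ _
    _ ≤ a * (‖w - y₀‖ + θ * ‖h‖) := by
        apply mul_le_mul_of_nonneg_left ?_ ha.le
        calc ‖(w + θ • h) - y₀‖ = ‖(w - y₀) + θ • h‖ := by rw [show (w + θ • h) - y₀ = (w - y₀) + θ • h by abel]
        _ ≤ ‖w - y₀‖ + ‖θ • h‖ := norm_add_le _ _
        _ = ‖w - y₀‖ + θ * ‖h‖ := by
            rw [norm_smul, Real.norm_eq_abs, abs_of_nonneg hθ.1]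
    _ = a * ‖w - y₀‖ + (a * ‖h‖) * θ := by ring
  have hDDdiff : ∀ w h₁ h₂ : V,
      ‖(∫ θ in (0:ℝ)..1, Gd (w + θ • h₁)) - (∫ θ in (0:ℝ)..1, Gd (w + θ • h₂))‖
      ≤ a / 2 * ‖h₁ - h₂‖ := by
    intro w h₁ h₂
    have heq : (∫ θ in (0:ℝ)..1, Gd (w + θ • h₁)) - (∫ θ in (0:ℝ)..1, Gd (w + θ • h₂))
        = ∫ θ in (0:ℝ)..1, (Gd (w + θ • h₁) - Gd (w + θ • h₂)) := by
      rw [intervalIntegral.integral_sub ((hcontθ w h₁).intervalIntegrable 0 1)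
        ((hcontθ w h₂).intervalIntegrable 0 1)]
    rw [heq]
    have h1 := asis_int_bound (fun θ : ℝ => Gd (w + θ • h₁) - Gd (w + θ • h₂))
      (((hcontθ w h₁).sub (hcontθ w h₂))) 0 (a * ‖h₁ - h₂‖) ?_ le_rfl (by positivity)
    · calc ‖∫ θ in (0:ℝ)..1, (Gd (w + θ • h₁) - Gd (w + θ • h₂))‖
          ≤ 0 + (a * ‖h₁ - h₂‖) / 2 := h1
      _ = a / 2 * ‖h₁ - h₂‖ := by ring
    · intro θ hθ
      calc ‖Gd (w + θ • h₁) - Gd (w + θ • h₂)‖ ≤ a * ‖(w + θ • h₁) - (w + θ • h₂)‖ :=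
            hGdlip _ _
      _ = a * (θ * ‖h₁ - h₂‖) := by
          have : (w + θ • h₁) - (w + θ • h₂) = θ • (h₁ - h₂) := by
            rw [smul_sub]; abel
          rw [this, norm_smul, Real.norm_eq_abs, abs_of_nonneg hθ.1]
      _ = 0 + (a * ‖h₁ - h₂‖) * θ := by ring
  -- the mean value identity
  have hMV : ∀ u h : V, G (u + h) - G u = (∫ θ in (0:ℝ)..1, Gd (u + θ • h)) h :=
    asis_mean_value G Gd hGd hGdcont
  -- scalar estimates
  have S := asis_scalars a ha hKant aa bb cc dd rr ha0 hc0 hr0 hb hd haa hcc hrr sstar hsstar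
  have h1norm : ‖(1 : V →L[ℝ] V)‖ ≤ 1 := ContinuousLinearMap.norm_id_le
  -- pointwise inverses
  have hptL : ∀ M : V →L[ℝ] V, IsUnit M → ∀ v, (Ring.inverse M) (M v) = v := by
    intro M hM v
    have h1 : (Ring.inverse M * M) = 1 := Ring.inverse_mul_cancel M hM
    calc (Ring.inverse M) (M v) = (Ring.inverse M * M) v := (ContinuousLinearMap.mul_apply _ _ _).symm
    _ = v := by rw [h1]; rfl
  have hptR : ∀ M : V →L[ℝ] V, IsUnit M → ∀ v, M ((Ring.inverse M) v) = v := by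
    intro M hM v
    have h1 : (M * Ring.inverse M) = 1 := Ring.mul_inverse_cancel M hM
    calc M ((Ring.inverse M) v) = (M * Ring.inverse M) v := (ContinuousLinearMap.mul_apply _ _ _).symm
    _ = v := by rw [h1]; rfl
  -- the inductive invariant
  have step : ∀ n, (‖y n - y₀‖ ≤ rr n ∧ ‖G (y n)‖ ≤ cc n ∧
        IsUnit (Gd (y n)) ∧ ‖Ring.inverse (Gd (y n))‖ ≤ aa n) →
      IsUnit (L (y n)) ∧ ‖Ring.inverse (L (y n))‖ ≤ bb n ∧ ‖y (n+1) - y n‖ ≤ dd n ∧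
      (‖y (n+1) - y₀‖ ≤ rr (n+1) ∧ ‖G (y (n+1))‖ ≤ cc (n+1) ∧
        IsUnit (Gd (y (n+1))) ∧ ‖Ring.inverse (Gd (y (n+1)))‖ ≤ aa (n+1)) := by
    intro n hInv
    obtain ⟨hr, hGc, hU, hUa⟩ := hInv
    obtain ⟨s1, s2, s3, s4, s5, s6, s7, s8, s9, s10⟩ := S n
    have hLyn : L (y n) = ∫ θ in (0:ℝ)..1, Gd (y n + θ • G (y n)) := by rw [hLdef]
    -- the divided difference operator is close to Gd (y n)
    have e1 : ‖L (y n) - Gd (y n)‖ ≤ a / 2 * cc n := by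
      rw [hLyn]
      calc ‖(∫ θ in (0:ℝ)..1, Gd (y n + θ • G (y n))) - Gd (y n)‖ ≤ a / 2 * ‖G (y n)‖ :=
            hDD1 _ _
      _ ≤ a / 2 * cc n := mul_le_mul_of_nonneg_left hGc (by positivity)
    obtain ⟨hLU, hLa⟩ := asis_unit_perturb h1norm hU hUa e1 s5
    have hLb : ‖Ring.inverse (L (y n))‖ ≤ bb n := by
      refine le_trans hLa (le_of_eq ?_)
      rw [hb n]
      have h2 : 1 - aa n * (a / 2 * cc n) = 1 - a / 2 * aa n * cc n := by ring
      rw [h2]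
    have hbb0 : 0 ≤ bb n := s6.le
    have hstepn : y (n+1) - y n = -((Ring.inverse (L (y n))) (G (y n))) := by
      rw [hystep n]; abel
    have hdn : ‖y (n+1) - y n‖ ≤ dd n := by
      rw [hstepn, norm_neg]
      calc ‖(Ring.inverse (L (y n))) (G (y n))‖
          ≤ ‖Ring.inverse (L (y n))‖ * ‖G (y n)‖ := (Ring.inverse (L (y n))).le_opNorm _
      _ ≤ bb n * cc n := mul_le_mul hLb hGc (norm_nonneg _) hbb0
      _ = dd n := (hd n).symm
    have hr' : ‖y (n+1) - y₀‖ ≤ rr (n+1) := by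
      rw [hrr n]
      calc ‖y (n+1) - y₀‖ = ‖(y (n+1) - y n) + (y n - y₀)‖ := by
            rw [sub_add_sub_cancel]
      _ ≤ ‖y (n+1) - y n‖ + ‖y n - y₀‖ := norm_add_le _ _
      _ ≤ rr n + dd n := by linarith
    have hLapp : (L (y n)) (y (n+1) - y n) = -(G (y n)) := by
      rw [hstepn, map_neg, hptR _ hLU]
    -- bound on ‖G (y (n+1))‖
    have hGnext : ‖G (y (n+1))‖ ≤ cc (n+1) := by
      have hMVn : G (y (n+1)) - G (y n)
          = (∫ θ in (0:ℝ)..1, Gd (y n + θ • (y (n+1) - y n))) (y (n+1) - y n) := by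
        have h3 := hMV (y n) (y (n+1) - y n)
        rw [show y n + (y (n+1) - y n) = y (n+1) by abel] at h3
        exact h3
      have hGnn : G (y (n+1))
          = ((∫ θ in (0:ℝ)..1, Gd (y n + θ • (y (n+1) - y n))) - L (y n)) (y (n+1) - y n) := by
        rw [ContinuousLinearMap.sub_apply, ← hMVn, hLapp]; abel
      have hop : ‖(∫ θ in (0:ℝ)..1, Gd (y n + θ • (y (n+1) - y n))) - L (y n)‖
          ≤ a / 2 * ‖(y (n+1) - y n) - G (y n)‖ := by
        rw [hLyn]; exact hDDdiff (y n) _ _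
      have hid : (y (n+1) - y n) - G (y n)
          = ((1 : V →L[ℝ] V) + L (y n)) (y (n+1) - y n) := by
        rw [ContinuousLinearMap.add_apply, ContinuousLinearMap.one_apply, hLapp]; abel
      have hopL : ‖(1 : V →L[ℝ] V) + L (y n)‖ ≤ a * (rr n + cc n / 2) := by
        have h4 : (1 : V →L[ℝ] V) + L (y n) = L (y n) - Gd y₀ := by rw [hGd0]; abel
        rw [h4, hLyn]
        calc ‖(∫ θ in (0:ℝ)..1, Gd (y n + θ • G (y n))) - Gd y₀‖
            ≤ a * ‖y n - y₀‖ + (a * ‖G (y n)‖) / 2 := hDDy₀ _ _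
        _ ≤ a * rr n + (a * cc n) / 2 := by
            have h5 := mul_le_mul_of_nonneg_left hr ha.le
            have h6 := mul_le_mul_of_nonneg_left hGc ha.le
            linarith
        _ = a * (rr n + cc n / 2) := by ring
      have hincr : ‖(y (n+1) - y n) - G (y n)‖ ≤ a * (rr n + cc n / 2) * dd n := by
        rw [hid]
        calc ‖((1 : V →L[ℝ] V) + L (y n)) (y (n+1) - y n)‖
            ≤ ‖(1 : V →L[ℝ] V) + L (y n)‖ * ‖y (n+1) - y n‖ :=
              ContinuousLinearMap.le_opNorm _ _
        _ ≤ a * (rr n + cc n / 2) * dd n := by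
            apply mul_le_mul hopL hdn (norm_nonneg _)
            have : 0 ≤ rr n + cc n / 2 := by linarith
            positivity
      rw [hGnn, hcc n]
      calc ‖((∫ θ in (0:ℝ)..1, Gd (y n + θ • (y (n+1) - y n))) - L (y n)) (y (n+1) - y n)‖
          ≤ ‖(∫ θ in (0:ℝ)..1, Gd (y n + θ • (y (n+1) - y n))) - L (y n)‖
            * ‖y (n+1) - y n‖ := ContinuousLinearMap.le_opNorm _ _
      _ ≤ (a / 2 * (a * (rr n + cc n / 2) * dd n)) * dd n := by
          apply mul_le_mul ?_ hdn (norm_nonneg _) ?_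
          · exact le_trans hop (mul_le_mul_of_nonneg_left hincr (by positivity))
          · have : 0 ≤ rr n + cc n / 2 := by linarith
            positivity
      _ = a ^ 2 / 2 * dd n ^ 2 * (rr n + cc n / 2) := by ring
    -- invertibility of Gd (y (n+1))
    have e2 : ‖Gd (y (n+1)) - Gd (y n)‖ ≤ a * dd n := by
      calc ‖Gd (y (n+1)) - Gd (y n)‖ ≤ a * ‖y (n+1) - y n‖ := hGdlip _ _
      _ ≤ a * dd n := mul_le_mul_of_nonneg_left hdn ha.le
    obtain ⟨hU', hUa'⟩ := asis_unit_perturb h1norm hU hUa e2 s10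
    have hUa'' : ‖Ring.inverse (Gd (y (n+1)))‖ ≤ aa (n+1) := by
      refine le_trans hUa' (le_of_eq ?_)
      rw [haa n]
      have h7 : 1 - aa n * (a * dd n) = 1 - a * aa n * dd n := by ring
      rw [h7]
    exact ⟨hLU, hLb, hdn, hr', hGnext, hU', hUa''⟩
  have key : ∀ n, ‖y n - y₀‖ ≤ rr n ∧ ‖G (y n)‖ ≤ cc n ∧
      IsUnit (Gd (y n)) ∧ ‖Ring.inverse (Gd (y n))‖ ≤ aa n := by
    intro n
    induction n with
    | zero =>
      have hm : (-(1 : V →L[ℝ] V)) * (-(1 : V →L[ℝ] V)) = 1 := by simp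
      have hu : IsUnit (-(1 : V →L[ℝ] V)) := ⟨⟨-(1 : V →L[ℝ] V), -(1 : V →L[ℝ] V), hm, hm⟩, rfl⟩
      refine ⟨?_, ?_, ?_, ?_⟩
      · rw [hy0, sub_self, norm_zero, hr0]
      · rw [hy0, hGy₀, hc0]
      · rw [hy0, hGd0]; exact hu
      · rw [hy0, hGd0, ha0]
        have h8 : Ring.inverse (-(1 : V →L[ℝ] V)) = -(1 : V →L[ℝ] V) :=
          Ring.inverse_unit ⟨-(1 : V →L[ℝ] V), -(1 : V →L[ℝ] V), hm, hm⟩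
        rw [h8, norm_neg]
        exact h1norm
    | succ n ih => exact (step n ih).2.2.2
  have hfderiv : ∀ z, fderiv ℝ G z = Gd z := fun z => (hGd z).fderiv
  refine ⟨y, hy0, ?_, ?_⟩
  · -- the ASIS iteration is well defined
    intro n
    obtain ⟨hLU, hLb, -, -⟩ := step n (key n)
    refine ⟨ContinuousLinearEquiv.equivOfInverse (L (y n)) (Ring.inverse (L (y n)))
      (hptL _ hLU) (hptR _ hLU), ?_, ?_⟩
    · show L (y n) = _
      rw [hLdef]
      simp only [hfderiv]
    · rw [hystep n]
      congr 1
  · -- convergence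
    have hsumd : ∀ n, ∑ i ∈ Finset.range n, dd i = rr n := by
      intro n
      induction n with
      | zero => simp [hr0]
      | succ n ih => rw [Finset.sum_range_succ, ih, hrr n]
    have hddnn : ∀ n, 0 ≤ dd n := fun n => (S n).2.2.2.2.2.2.1.le
    have hsummable : Summable dd :=
      summable_of_sum_range_le hddnn (fun n => (hsumd n) ▸ (S n).2.1.le)
    have hstepbound : ∀ n, ‖y (n+1) - y n‖ ≤ dd n := fun n => (step n (key n)).2.2.1
    have hcauchy : CauchySeq y := by
      apply cauchySeq_of_dist_le_of_summable dd ?_ hsummable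
      intro n
      rw [dist_eq_norm, norm_sub_rev]
      exact hstepbound n
    obtain ⟨ys, hys⟩ := cauchySeq_tendsto_of_complete hcauchy
    have hGys : G ys = 0 := by
      have h1 : Filter.Tendsto (fun n => G (y n)) Filter.atTop (nhds (G ys)) :=
        (hGcont.tendsto ys).comp hys
      have h2 : Filter.Tendsto (fun n => G (y n)) Filter.atTop (nhds 0) := by
        apply squeeze_zero_norm ?_ hsummable.tendsto_atTop_zero
        intro n
        exact le_trans (key n).2.1 (S n).2.2.2.2.2.2.2.1
      exact tendsto_nhds_unique h1 h2
    have hFys : F (T ys) = 0 := by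
      have h3 : (‖F x₀‖)⁻¹ • F (T ys) = 0 := by rw [← hGys, hG]
      rcases smul_eq_zero.mp h3 with h4 | h4
      · exact absurd h4 (inv_ne_zero hc.ne')
      · exact h4
    have hmono : ∀ n m, n ≤ m → ‖y m - y n‖ ≤ rr m - rr n := by
      intro n m hnm
      induction m, hnm using Nat.le_induction with
      | base => simp
      | succ m hm ih =>
        calc ‖y (m+1) - y n‖ = ‖(y (m+1) - y m) + (y m - y n)‖ := by
              rw [sub_add_sub_cancel]
        _ ≤ ‖y (m+1) - y m‖ + ‖y m - y n‖ := norm_add_le _ _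
        _ ≤ dd m + (rr m - rr n) := add_le_add (hstepbound m) ih
        _ = rr (m+1) - rr n := by rw [hrr m]; ring
    have htail : ∀ n, ‖ys - y n‖ ≤ sstar - rr n := by
      intro n
      have h5 : Filter.Tendsto (fun m => ‖y m - y n‖) Filter.atTop (nhds ‖ys - y n‖) :=
        ((hys.sub_const (y n)).norm)
      apply le_of_tendsto h5
      filter_upwards [Filter.eventually_ge_atTop n] with m hm
      have h6 := hmono n m hm
      have h7 := (S m).2.1
      linarith
    refine ⟨ys, hys, hGys, hFys, ?_, ?_, ?_⟩
    · intro n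
      calc ‖T (y (n+1)) - T (y n)‖ ≤ η * ‖y (n+1) - y n‖ := hTlip _ _
      _ ≤ η * dd n := mul_le_mul_of_nonneg_left (hstepbound n) hη.le
      _ = dd n * η := mul_comm _ _
    · intro n
      calc ‖T ys - T (y n)‖ ≤ η * ‖ys - y n‖ := hTlip _ _
      _ ≤ η * (sstar - rr n) := mul_le_mul_of_nonneg_left (htail n) hη.le
      _ = (sstar - rr n) * η := mul_comm _ _
    · intro n
      obtain ⟨-, -, hU, hUa⟩ := key n
      have hGdyn : ∀ w : V, Gd (y n) w = -((F' (T (y n))) ((e₀.symm : V →L[ℝ] E) w)) := by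
        intro w; rw [hGdDef]; rfl
      have he₀e : ∀ x : E, (e₀.symm : V →L[ℝ] E) (e₀ x) = x := fun x =>
        e₀.symm_apply_apply x
      have hleft : Function.LeftInverse
          (-((e₀.symm : V →L[ℝ] E).comp (Ring.inverse (Gd (y n))))) (F' (T (y n))) := by
        intro x
        have h8 : (F' (T (y n))) x = -(Gd (y n) (e₀ x)) := by
          rw [hGdyn (e₀ x), neg_neg, he₀e]
        simp only [ContinuousLinearMap.neg_apply, ContinuousLinearMap.comp_apply, h8, map_neg,
          neg_neg, hptL _ hU, he₀e]
      have hright : Function.RightInverse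
          (-((e₀.symm : V →L[ℝ] E).comp (Ring.inverse (Gd (y n))))) (F' (T (y n))) := by
        intro v
        have h9 := hptR _ hU v
        rw [hGdyn] at h9
        simp only [ContinuousLinearMap.neg_apply, ContinuousLinearMap.comp_apply, map_neg]
        exact h9
      refine ⟨ContinuousLinearEquiv.equivOfInverse (F' (T (y n)))
        (-((e₀.symm : V →L[ℝ] E).comp (Ring.inverse (Gd (y n))))) hleft hright, rfl, ?_⟩
      show ‖(-((e₀.symm : V →L[ℝ] E).comp (Ring.inverse (Gd (y n)))) : V →L[ℝ] E)‖ ≤ aa n * B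
      rw [norm_neg]
      calc ‖(e₀.symm : V →L[ℝ] E).comp (Ring.inverse (Gd (y n)))‖
          ≤ ‖(e₀.symm : V →L[ℝ] E)‖ * ‖Ring.inverse (Gd (y n))‖ :=
            ContinuousLinearMap.opNorm_comp_le _ _
      _ ≤ B * aa n := mul_le_mul hBinv hUa (norm_nonneg _) hB.le
      _ = aa n * B := mul_comm _ _
end

section
/- Let f : ℝ → ℝ be three times continuously differentiable on a neighborhood of a point x* with f(x*) = 0 and f'(x*) ≠ 0, and let h : ℝ → ℝ be twice continuously differentiable on a neighborhood of 0. Define the degree of logarithmic convexity L_f(x) = f(x)·f''(x)/f'(x)² and the iteration function Φ(x) = x − h(L_f(x))·f(x)/f'(x). Then Φ(x*) = x* and Φ'(x*) = 1 − h(0); in particular Φ'(x*) = 0 (second order of convergence) if and only if h(0) = 1. Moreover, if h(0) = 1, then Φ''(x*) = (1 − 2h'(0))·f''(x*)/f'(x*), so Φ''(x*) = 0 (third order of convergence) whenever in addition h'(0) = 1/2. -/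
open Filter Asymptotics Topology

lemma contMul {u v : ℝ → ℝ} {a v' : ℝ}
    (hu : ContinuousAt u a) (hv : HasDerivAt v v' a) (hva : v a = 0) :
    HasDerivAt (fun x => u x * v x) (u a * v') a := by
  have h1 : HasDerivAt (fun x => u a * v x) (u a * v') a := hv.const_mul _
  have h2 : HasDerivAt (fun x => (u x - u a) * v x) 0 a := by
    rw [hasDerivAt_iff_isLittleO]
    have hO : v =O[𝓝 a] fun x => x - a := by
      simpa [hva] using hv.isBigO_sub
    have ho : (fun x => u x - u a) =o[𝓝 a] (fun _ : ℝ => (1:ℝ)) := by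
      rw [Asymptotics.isLittleO_one_iff]
      have := (hu.sub (continuousAt_const (y := u a))).tendsto
      simpa [Pi.sub_def] using this
    have := ho.mul_isBigO hO
    simp only [hva, mul_zero, sub_self, zero_mul, sub_zero, smul_zero]
    simpa using this
  have heq : (fun x => u x * v x) = fun x => (u x - u a) * v x + u a * v x := by
    funext x; ring
  rw [heq]
  have h3 : HasDerivAt (fun x => (u x - u a) * v x + u a * v x) (0 + u a * v') a := h2.add h1
  simpa using h3


/-- **Characterization of second and third order one-point iterations.**
Let `f : ℝ → ℝ` be three times continuously differentiable near a point `x*` with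
`f(x*) = 0` and `f'(x*) ≠ 0`, and let `h : ℝ → ℝ` be twice continuously differentiable
near `0`.  With the degree of logarithmic convexity `L_f(x) = f(x)f''(x)/f'(x)²` and
the iteration function `Φ(x) = x − h(L_f(x))·f(x)/f'(x)`, one has `Φ(x*) = x*` and
`Φ'(x*) = 1 − h(0)`; in particular `Φ'(x*) = 0` iff `h(0) = 1`.  Moreover, if `h(0) = 1`
then `Φ''(x*) = (1 − 2h'(0))·f''(x*)/f'(x*)`, so `Φ''(x*) = 0` whenever in addition
`h'(0) = 1/2`. -/
theorem stmt_18 (f h : ℝ → ℝ) (xs : ℝ)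
    (hf : ContDiffAt ℝ 3 f xs) (hh : ContDiffAt ℝ 2 h 0)
    (hroot : f xs = 0) (hsimple : deriv f xs ≠ 0)
    (L Φ : ℝ → ℝ)
    (hL : L = fun x => f x * deriv (deriv f) x / (deriv f x) ^ 2)
    (hΦ : Φ = fun x => x - h (L x) * f x / deriv f x) :
    Φ xs = xs ∧
    deriv Φ xs = 1 - h 0 ∧
    (deriv Φ xs = 0 ↔ h 0 = 1) ∧
    (h 0 = 1 →
      deriv (deriv Φ) xs = (1 - 2 * deriv h 0) * deriv (deriv f) xs / deriv f xs ∧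
      (deriv h 0 = 1 / 2 → deriv (deriv Φ) xs = 0)) := by
  obtain ⟨U, hUo, hxU, hfU⟩ : ∃ u, IsOpen u ∧ xs ∈ u ∧ ContDiffOn ℝ 3 f u := by
    obtain ⟨u, huo, hxu, hcd⟩ := hf.contDiffOn' (le_refl _) (by simp)
    exact ⟨u, huo, hxu, by simpa using hcd⟩
  set F1 := deriv f with hF1def
  set F2 := deriv F1 with hF2def
  have hF1U : ContDiffOn ℝ 2 F1 U := hfU.deriv_of_isOpen hUo (by norm_num)
  have hF2U : ContDiffOn ℝ 1 F2 U := hF1U.deriv_of_isOpen hUo (by norm_num)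
  have hF1at : ContDiffAt ℝ 2 F1 xs := hF1U.contDiffAt (hUo.mem_nhds hxU)
  have hF2at : ContDiffAt ℝ 1 F2 xs := hF2U.contDiffAt (hUo.mem_nhds hxU)
  have hF1cont : ContinuousAt F1 xs := hF1at.continuousAt
  have hLat : ContDiffAt ℝ 1 L xs := by
    rw [hL]
    exact ((hf.of_le (by norm_num)).mul hF2at).div ((hF1at.of_le one_le_two).pow 2)
      (pow_ne_zero 2 hsimple)
  have hLxs : L xs = 0 := by rw [hL]; simp [hroot]
  have hLcont : ContinuousAt L xs := hLat.continuousAt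
  set g : ℝ → ℝ := fun x => f x / F1 x with hgdef
  set H : ℝ → ℝ := fun x => h (L x) with hHdef
  have hh1 : ContDiffAt ℝ 2 h (L xs) := by rw [hLxs]; exact hh
  have hHat : ContDiffAt ℝ 1 H xs := (hh1.of_le one_le_two).comp xs hLat
  obtain ⟨V, hVo, hxV, hHV⟩ : ∃ v, IsOpen v ∧ xs ∈ v ∧ ContDiffOn ℝ 1 H v := by
    obtain ⟨v, hvo, hxv, hcd⟩ := hHat.contDiffOn' (le_refl _) (by simp)
    exact ⟨v, hvo, hxv, by simpa using hcd⟩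
  have hderivHcont : ContinuousAt (deriv H) xs :=
    (hHV.continuousOn_deriv_of_isOpen hVo (le_refl _)).continuousAt (hVo.mem_nhds hxV)
  -- derivatives at xs
  have hdfxs : HasDerivAt f (F1 xs) xs := (hf.differentiableAt (by norm_num)).hasDerivAt
  have hdF1xs : HasDerivAt F1 (F2 xs) xs := (hF1at.differentiableAt (by norm_num)).hasDerivAt
  have hdF2xs : HasDerivAt F2 (deriv F2 xs) xs :=
    ((hF2U.differentiableOn (by norm_num)).differentiableAt (hUo.mem_nhds hxU)).hasDerivAt
  have hdLxs : HasDerivAt L (F2 xs / F1 xs) xs := by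
    have h1 : HasDerivAt (fun x => f x * F2 x) (F1 xs * F2 xs + f xs * deriv F2 xs) xs :=
      hdfxs.mul hdF2xs
    have h2 : HasDerivAt (fun x => (F1 x) ^ 2)
        (((2 : ℕ) : ℝ) * F1 xs ^ (2 - 1) * F2 xs) xs := hdF1xs.pow 2
    have h3 := h1.div h2 (pow_ne_zero 2 hsimple)
    rw [hL]
    convert h3 using 1
    · rfl
    · rfl
    · rfl
    rw [hroot]
    field_simp
    ring
  have hdgxs : HasDerivAt g (1 - L xs) xs := by
    have := hdfxs.div hdF1xs hsimple
    convert this using 1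
    · rfl
    · rfl
    · rfl
    rw [hL, hroot]
    field_simp
    simp [hroot]
  have hdHxs : HasDerivAt H (deriv h 0 * (F2 xs / F1 xs)) xs := by
    have hdh : HasDerivAt h (deriv h 0) (L xs) := by
      rw [hLxs]; exact (hh.differentiableAt (by norm_num)).hasDerivAt
    exact hdh.comp xs hdLxs
  -- eventual formula for deriv Φ
  have evU : ∀ᶠ x in 𝓝 xs, x ∈ U := hUo.eventually_mem hxU
  have evne : ∀ᶠ x in 𝓝 xs, F1 x ≠ 0 := hF1cont.eventually_ne hsimple
  have evh : ∀ᶠ x in 𝓝 xs, ContDiffAt ℝ 2 h (L x) := by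
    have h2 : ∀ᶠ y in 𝓝 (0 : ℝ), ContDiffAt ℝ 2 h y := hh.eventually (by simp)
    have hten : Tendsto L (𝓝 xs) (𝓝 0) := by rw [← hLxs]; exact hLcont
    exact hten.eventually h2
  have evd : ∀ᶠ x in 𝓝 xs,
      HasDerivAt Φ (1 - (deriv H x * g x + H x * (1 - L x))) x := by
    filter_upwards [evU, evne, evh] with x hxU' hne hhx
    have hdf : HasDerivAt f (F1 x) x :=
      ((hfU.differentiableOn (by norm_num)).differentiableAt (hUo.mem_nhds hxU')).hasDerivAt
    have hdF1 : HasDerivAt F1 (F2 x) x :=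
      ((hF1U.differentiableOn (by norm_num)).differentiableAt (hUo.mem_nhds hxU')).hasDerivAt
    have hdF2 : DifferentiableAt ℝ F2 x :=
      (hF2U.differentiableOn (by norm_num)).differentiableAt (hUo.mem_nhds hxU')
    have hdg : HasDerivAt g (1 - L x) x := by
      have := hdf.div hdF1 hne
      convert this using 1
      · rfl
      · rfl
      · rfl
      rw [hL]
      field_simp
    have hdL : DifferentiableAt ℝ L x := by
      rw [hL]
      exact (hdf.differentiableAt.mul hdF2).div (hdF1.differentiableAt.pow 2)
        (pow_ne_zero 2 hne)
    have hdH : HasDerivAt H (deriv H x) x :=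
      ((hhx.differentiableAt (by norm_num)).comp x hdL).hasDerivAt
    have key : HasDerivAt (fun y => y - H y * g y)
        (1 - (deriv H x * g x + H x * (1 - L x))) x :=
      (hasDerivAt_id x).sub (hdH.mul hdg)
    rw [hΦ]
    simpa [hHdef, hgdef, mul_div_assoc] using key
  have evd' : deriv Φ =ᶠ[𝓝 xs] fun x => 1 - (deriv H x * g x + H x * (1 - L x)) :=
    evd.mono fun x hx => hx.deriv
  have hgxs : g xs = 0 := by simp [hgdef, hroot]
  have hHxs : H xs = h 0 := by simp [hHdef, hLxs]
  have hpart1 : Φ xs = xs := by rw [hΦ]; simp [hroot]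
  have hpart2 : deriv Φ xs = 1 - h 0 := by
    rw [evd'.eq_of_nhds, hgxs, hHxs, hLxs]
    ring
  -- second derivative
  have hA : HasDerivAt (fun x => deriv H x * g x) (deriv H xs * (1 - L xs)) xs :=
    contMul hderivHcont hdgxs hgxs
  have hB : HasDerivAt (fun x => H x * (1 - L x))
      (deriv h 0 * (F2 xs / F1 xs) * (1 - L xs) + H xs * (0 - F2 xs / F1 xs)) xs :=
    hdHxs.mul ((hasDerivAt_const xs 1).sub hdLxs)
  have hψ : HasDerivAt (fun x => 1 - (deriv H x * g x + H x * (1 - L x)))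
      (0 - (deriv H xs * (1 - L xs) +
        (deriv h 0 * (F2 xs / F1 xs) * (1 - L xs) + H xs * (0 - F2 xs / F1 xs)))) xs :=
    (hasDerivAt_const xs 1).sub (hA.add hB)
  have hderiv2 : deriv (deriv Φ) xs =
      0 - (deriv H xs * (1 - L xs) +
        (deriv h 0 * (F2 xs / F1 xs) * (1 - L xs) + H xs * (0 - F2 xs / F1 xs))) := by
    rw [evd'.deriv_eq, hψ.deriv]
  have hdHval : deriv H xs = deriv h 0 * (F2 xs / F1 xs) := hdHxs.deriv
  refine ⟨hpart1, hpart2, ⟨fun h0 => by linarith [hpart2], fun h0 => by rw [hpart2, h0]; ring⟩,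
    fun h0 => ?_⟩
  have hval : deriv (deriv Φ) xs = (1 - 2 * deriv h 0) * F2 xs / F1 xs := by
    rw [hderiv2, hdHval, hHxs, hLxs, h0]
    field_simp
    ring
  exact ⟨hval, fun h12 => by rw [hval, h12]; ring⟩
end
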